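/- arXiv:2103.13560 — 7 statements merged into one kernel-verified Lean document; each statement's English description precedes it below -/
import Mathlib

section
/- Let (x*, λ*, μ*) be a saddle point of the Lagrangian L. Let γ ∈ ℝ^m, ν ∈ ℝ^M_{≥0}, ρ > 0, and let x_i^k ∈ X_i for each i. Suppose for each i = 1,…,N the point x_i^{k+1} minimizes x_i ↦ f_i(x_i) + γᵀ A_i x_i + Σ_{j=1}^M ν_j g_{ji}(x_i) + (1/(2ρ))‖x_i − x_i^k‖₂² over X_i. Then Σ_{i=1}^N ‖x_i^{k+1} − x*_i‖₂² ≤ Σ_{i=1}^N ‖x_i^k − x*_i‖₂² − Σ_{i=1}^N ‖x_i^{k+1} − x_i^k‖₂² + 2ρ·[ (λ* − γ)ᵀ(Σ_{i=1}^N A_i x_i^{k+1} − b) + Σ_{j=1}^M (μ*_j − ν_j)·Σ_{i=1}^N g_{ji}(x_i^{k+1}) ]. -/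
open scoped BigOperators

section Aux
variable {E : Type*} [NormedAddCommGroup E] [InnerProductSpace ℝ E]

lemma quad_combo (a b c : E) (t : ℝ) :
    ‖((1-t) • a + t • b) - c‖^2
      = (1-t)*‖a-c‖^2 + t*‖b-c‖^2 - t*(1-t)*‖a-b‖^2 := by
  have h : ((1-t) • a + t • b) - c = (1-t) • (a-c) + t • (b-c) := by module
  have key : ∀ u v : E, ‖(1-t) • u + t • v‖^2
      = (1-t)*‖u‖^2 + t*‖v‖^2 - t*(1-t)*‖u-v‖^2 := by
    intro u v
    rw [@norm_add_sq_real, @norm_sub_sq_real, norm_smul, norm_smul,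
      real_inner_smul_left, real_inner_smul_right]
    simp [mul_pow, sq_abs]
    ring
  have e1 : a - b = (a - c) - (b - c) := by abel
  rw [h, key, e1]

lemma convexOn_finset_sum {ι : Type*} (s : Finset ι) (f : ι → E → ℝ)
    (h : ∀ i ∈ s, ConvexOn ℝ Set.univ (f i)) :
    ConvexOn ℝ Set.univ (fun x => ∑ i ∈ s, f i x) := by
  classical
  induction s using Finset.induction with
  | empty => simpa using convexOn_const 0 convex_univ
  | @insert a s ha ih =>
    simp only [Finset.sum_insert ha]
    exact (h a (Finset.mem_insert_self a s)).add
      (ih fun i hi => h i (Finset.mem_insert_of_mem hi))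

lemma prox_strong {X : Set E} (hX : Convex ℝ X) {h : E → ℝ}
    (hh : ConvexOn ℝ Set.univ h) {c : ℝ} (hc : 0 < c) {z x y : E}
    (hx : x ∈ X) (hy : y ∈ X)
    (hmin : ∀ w ∈ X, h x + c*‖x-z‖^2 ≤ h w + c*‖w-z‖^2) :
    h x + c*‖x-z‖^2 + c*‖y-x‖^2 ≤ h y + c*‖y-z‖^2 := by
  have key : ∀ t : ℝ, 0 < t → t < 1 →
      h x + c*‖x-z‖^2 + c*‖y-x‖^2 ≤ h y + c*‖y-z‖^2 + c*t*‖x-y‖^2 := by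
    intro t ht0 ht1
    have hmem : (1-t) • x + t • y ∈ X := hX hx hy (by linarith) ht0.le (by ring)
    have h1 := hmin _ hmem
    have h2 : h ((1-t) • x + t • y) ≤ (1-t) * h x + t * h y := by
      have := hh.2 (Set.mem_univ x) (Set.mem_univ y) (by linarith : (0:ℝ) ≤ 1-t)
        ht0.le (by ring)
      simpa [smul_eq_mul] using this
    have h3 := quad_combo x y z t
    have hxy : ‖y - x‖ = ‖x - y‖ := norm_sub_rev _ _
    rw [h3] at h1
    have h5 : t * (h x + c*‖x-z‖^2) ≤ t * (h y + c*‖y-z‖^2) - c*t*(1-t)*‖x-y‖^2 := by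
      nlinarith
    have h4 : h x + c*‖x-z‖^2 ≤ h y + c*‖y-z‖^2 - c*(1-t)*‖x-y‖^2 := by
      rw [show c*t*(1-t)*‖x-y‖^2 = t * (c*(1-t)*‖x-y‖^2) by ring] at h5
      have := (mul_le_mul_iff_right₀ ht0).mp (by linarith : t * (h x + c*‖x-z‖^2)
        ≤ t * (h y + c*‖y-z‖^2 - c*(1-t)*‖x-y‖^2))
      linarith
    rw [hxy]; nlinarith
  refine le_of_forall_pos_le_add fun ε hε => ?_
  set Q := c*‖x-y‖^2 with hQ
  have hQ0 : 0 ≤ Q := by positivity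
  set t := min (1/2) (ε / (Q + 1)) with htdef
  have ht0 : 0 < t := lt_min (by norm_num) (by positivity)
  have ht1 : t < 1 := lt_of_le_of_lt (min_le_left _ _) (by norm_num)
  have hk := key t ht0 ht1
  have htQ : t * Q ≤ ε := by
    have h5 : t ≤ ε / (Q + 1) := min_le_right _ _
    have h7 : t * Q ≤ (ε / (Q + 1)) * Q := by nlinarith
    have h6 : (ε / (Q + 1)) * Q ≤ ε := by
      rw [div_mul_eq_mul_div, div_le_iff₀ (by positivity)]
      nlinarith
    linarith
  calc h x + c*‖x-z‖^2 + c*‖y-x‖^2 ≤ h y + c*‖y-z‖^2 + c*t*‖x-y‖^2 := hk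
    _ ≤ h y + c*‖y-z‖^2 + ε := by rw [show c*t*‖x-y‖^2 = t*Q by ring]; linarith

end Aux

/-- The Lagrangian `L(x, λ, μ) = Σᵢ fᵢ(xᵢ) + λᵀ(Σᵢ Aᵢ xᵢ − b) + Σⱼ μⱼ Σᵢ g_{ji}(xᵢ)`. -/
noncomputable def lagrangian {N M m : ℕ} {n : Fin N → ℕ}
    (f : ∀ i, EuclideanSpace ℝ (Fin (n i)) → ℝ)
    (A : ∀ i, EuclideanSpace ℝ (Fin (n i)) →L[ℝ] EuclideanSpace ℝ (Fin m))
    (b : EuclideanSpace ℝ (Fin m))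
    (g : Fin M → ∀ i, EuclideanSpace ℝ (Fin (n i)) → ℝ)
    (x : ∀ i, EuclideanSpace ℝ (Fin (n i)))
    (lam : EuclideanSpace ℝ (Fin m)) (mu : EuclideanSpace ℝ (Fin M)) : ℝ :=
  (∑ i, f i (x i)) + (inner ℝ lam ((∑ i, A i (x i)) - b) : ℝ)
    + ∑ j, mu j * ∑ i, g j i (x i)

/-- `(x*, λ*, μ*)` is a saddle point of the Lagrangian:
`x*ᵢ ∈ Xᵢ`, `μ* ≥ 0`, and `L(x*, λ, μ) ≤ L(x*, λ*, μ*) ≤ L(x, λ*, μ*)` for all feasible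
`x`, all `λ ∈ ℝ^m` and all `μ ∈ ℝ^M_{≥0}`. -/
noncomputable def IsSaddlePoint {N M m : ℕ} {n : Fin N → ℕ}
    (f : ∀ i, EuclideanSpace ℝ (Fin (n i)) → ℝ)
    (A : ∀ i, EuclideanSpace ℝ (Fin (n i)) →L[ℝ] EuclideanSpace ℝ (Fin m))
    (b : EuclideanSpace ℝ (Fin m))
    (g : Fin M → ∀ i, EuclideanSpace ℝ (Fin (n i)) → ℝ)
    (X : ∀ i, Set (EuclideanSpace ℝ (Fin (n i))))
    (xs : ∀ i, EuclideanSpace ℝ (Fin (n i)))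
    (ls : EuclideanSpace ℝ (Fin m)) (ms : EuclideanSpace ℝ (Fin M)) : Prop :=
  (∀ i, xs i ∈ X i) ∧ (∀ j, 0 ≤ ms j) ∧
  (∀ (lam : EuclideanSpace ℝ (Fin m)) (mu : EuclideanSpace ℝ (Fin M)), (∀ j, 0 ≤ mu j) →
    lagrangian f A b g xs lam mu ≤ lagrangian f A b g xs ls ms) ∧
  (∀ x : ∀ i, EuclideanSpace ℝ (Fin (n i)), (∀ i, x i ∈ X i) →
    lagrangian f A b g xs ls ms ≤ lagrangian f A b g x ls ms)

/-- primal distance estimate, Proposition 1, first inequality. -/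
theorem stmt_3 {N M m : ℕ} {n : Fin N → ℕ}
    (f : ∀ i, EuclideanSpace ℝ (Fin (n i)) → ℝ)
    (A : ∀ i, EuclideanSpace ℝ (Fin (n i)) →L[ℝ] EuclideanSpace ℝ (Fin m))
    (b : EuclideanSpace ℝ (Fin m))
    (g : Fin M → ∀ i, EuclideanSpace ℝ (Fin (n i)) → ℝ)
    (X : ∀ i, Set (EuclideanSpace ℝ (Fin (n i))))
    (hX : ∀ i, IsClosed (X i) ∧ Convex ℝ (X i))
    (hf : ∀ i, Continuous (f i) ∧ ConvexOn ℝ Set.univ (f i))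
    (hg : ∀ j i, Continuous (g j i) ∧ ConvexOn ℝ Set.univ (g j i))
    (xs : ∀ i, EuclideanSpace ℝ (Fin (n i)))
    (ls : EuclideanSpace ℝ (Fin m)) (ms : EuclideanSpace ℝ (Fin M))
    (hsaddle : IsSaddlePoint f A b g X xs ls ms)
    (γ : EuclideanSpace ℝ (Fin m)) (ν : EuclideanSpace ℝ (Fin M)) (hν : ∀ j, 0 ≤ ν j)
    (ρ : ℝ) (hρ : 0 < ρ)
    (xk : ∀ i, EuclideanSpace ℝ (Fin (n i))) (hxk : ∀ i, xk i ∈ X i)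
    (xk1 : ∀ i, EuclideanSpace ℝ (Fin (n i))) (hxk1 : ∀ i, xk1 i ∈ X i)
    (hmin : ∀ i, ∀ y ∈ X i,
      f i (xk1 i) + (inner ℝ γ (A i (xk1 i)) : ℝ) + (∑ j, ν j * g j i (xk1 i))
          + 1 / (2 * ρ) * ‖xk1 i - xk i‖ ^ 2
        ≤ f i y + (inner ℝ γ (A i y) : ℝ) + (∑ j, ν j * g j i y)
          + 1 / (2 * ρ) * ‖y - xk i‖ ^ 2) :
    ∑ i, ‖xk1 i - xs i‖ ^ 2
      ≤ ∑ i, ‖xk i - xs i‖ ^ 2 - ∑ i, ‖xk1 i - xk i‖ ^ 2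
        + 2 * ρ * ((inner ℝ (ls - γ) ((∑ i, A i (xk1 i)) - b) : ℝ)
          + ∑ j, (ms j - ν j) * ∑ i, g j i (xk1 i)) := by
  classical
  obtain ⟨hxs, hms, hdual, hpri⟩ := hsaddle
  set c : ℝ := 1 / (2 * ρ) with hcdef
  have hc : 0 < c := by positivity
  -- the convex part of the per-block objective
  set h : ∀ i, EuclideanSpace ℝ (Fin (n i)) → ℝ :=
    fun i w => f i w + (inner ℝ γ (A i w) : ℝ) + ∑ j, ν j * g j i w with hhdef
  have hconv : ∀ i, ConvexOn ℝ Set.univ (h i) := by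
    intro i
    have h1 : ConvexOn ℝ Set.univ (fun w => (inner ℝ γ (A i w) : ℝ)) := by
      refine ⟨convex_univ, fun x _ y _ a b' ha hb' hab => le_of_eq ?_⟩
      show (inner ℝ γ (A i (a • x + b' • y)) : ℝ) = a • (inner ℝ γ (A i x) : ℝ) + b' • (inner ℝ γ (A i y) : ℝ)
      rw [map_add, map_smul, map_smul, inner_add_right, real_inner_smul_right,
        real_inner_smul_right, smul_eq_mul, smul_eq_mul]
    have h2 : ConvexOn ℝ Set.univ (fun w => ∑ j, ν j * g j i w) := by
      refine convexOn_finset_sum _ _ fun j _ => ?_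
      simpa [smul_eq_mul] using (hg j i).2.smul (hν j)
    exact ((hf i).2.add h1).add h2
  -- strengthened prox inequality, per block
  have key : ∀ i, h i (xk1 i) + c*‖xk1 i - xk i‖^2 + c*‖xs i - xk1 i‖^2
      ≤ h i (xs i) + c*‖xs i - xk i‖^2 := by
    intro i
    exact prox_strong (hX i).2 (hconv i) hc (hxk1 i) (hxs i)
      (fun w hw => hmin i w hw)
  -- multiply by 2ρ
  have hc1 : ∀ x : ℝ, 2*ρ*(c*x) = x := fun x => by
    rw [hcdef]; field_simp
  have key2 : ∀ i, 2*ρ*(h i (xk1 i)) + ‖xk1 i - xk i‖^2 + ‖xk1 i - xs i‖^2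
      ≤ 2*ρ*(h i (xs i)) + ‖xk i - xs i‖^2 := by
    intro i
    have k2 := mul_le_mul_of_nonneg_left (key i) (by positivity : (0:ℝ) ≤ 2*ρ)
    have e1 := hc1 (‖xk1 i - xk i‖^2)
    have e2 := hc1 (‖xs i - xk1 i‖^2)
    have e3 := hc1 (‖xs i - xk i‖^2)
    have n1 : ‖xs i - xk1 i‖ = ‖xk1 i - xs i‖ := norm_sub_rev _ _
    have n2 : ‖xs i - xk i‖ = ‖xk i - xs i‖ := norm_sub_rev _ _
    rw [n1] at e2; rw [n2] at e3
    rw [n1, n2] at k2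
    nlinarith [k2, e1, e2, e3]
  -- sum over i
  have S2 : 2*ρ*(∑ i, h i (xk1 i)) + ∑ i, ‖xk1 i - xk i‖^2 + ∑ i, ‖xk1 i - xs i‖^2
      ≤ 2*ρ*(∑ i, h i (xs i)) + ∑ i, ‖xk i - xs i‖^2 := by
    have h1 := Finset.sum_le_sum (fun i (_ : i ∈ Finset.univ) => key2 i)
    rw [Finset.sum_add_distrib, Finset.sum_add_distrib, Finset.sum_add_distrib,
      ← Finset.mul_sum, ← Finset.mul_sum] at h1
    exact h1
  -- expand the sums of h
  have Eh : ∀ y : ∀ i, EuclideanSpace ℝ (Fin (n i)),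
      ∑ i, h i (y i) = (∑ i, f i (y i)) + (inner ℝ γ (∑ i, A i (y i)) : ℝ)
        + ∑ j, ν j * ∑ i, g j i (y i) := by
    intro y
    rw [hhdef]
    simp only [Finset.sum_add_distrib]
    rw [inner_sum, Finset.sum_comm]
    simp [Finset.mul_sum]
  -- saddle point consequences
  -- 1) primal feasibility of xs : ∑ A xs = b
  have hfeas : (∑ i, A i (xs i)) = b := by
    have hd := hdual (ls + ((∑ i, A i (xs i)) - b)) ms hms
    unfold lagrangian at hd
    rw [inner_add_left] at hd
    have : (inner ℝ ((∑ i, A i (xs i)) - b) ((∑ i, A i (xs i)) - b) : ℝ) ≤ 0 := by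
      linarith
    rw [real_inner_self_eq_norm_sq] at this
    have h0 : ‖(∑ i, A i (xs i)) - b‖ = 0 := by nlinarith [norm_nonneg ((∑ i, A i (xs i)) - b)]
    rw [norm_eq_zero, sub_eq_zero] at h0
    exact h0
  -- 2) complementary slackness
  have hcs : ∑ j, ms j * ∑ i, g j i (xs i) = 0 := by
    have h0 := hdual ls 0 (fun j => le_refl 0)
    have h2 := hdual ls (ms + ms) (fun j => by
      have := hms j; simp [PiLp.add_apply]; linarith)
    unfold lagrangian at h0 h2
    simp only [PiLp.zero_apply, zero_mul, Finset.sum_const_zero, PiLp.add_apply,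
      add_mul, Finset.sum_add_distrib] at h0 h2
    linarith
  -- 3) ∑ᵢ g j i (xs i) ≤ 0 for each j
  have hgle : ∀ j, ∑ i, g j i (xs i) ≤ 0 := by
    intro j
    have h2 := hdual ls (ms + EuclideanSpace.single j 1) (fun j' => by
      have := hms j'
      simp [PiLp.add_apply, EuclideanSpace.single_apply]
      positivity)
    unfold lagrangian at h2
    simp only [PiLp.add_apply, EuclideanSpace.single_apply, add_mul,
      Finset.sum_add_distrib, ite_mul, one_mul, zero_mul] at h2
    rw [Finset.sum_ite_eq' Finset.univ j (fun j' => ∑ i, g j' i (xs i))] at h2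
    simpa using h2
  have hνg : ∑ j, ν j * ∑ i, g j i (xs i) ≤ 0 :=
    Finset.sum_nonpos fun j _ => mul_nonpos_of_nonneg_of_nonpos (hν j) (hgle j)
  -- primal saddle inequality at xk1
  have hp := hpri xk1 hxk1
  unfold lagrangian at hp
  rw [hfeas, sub_self, inner_zero_right] at hp
  -- scalar abbreviations
  set F1 : ℝ := ∑ i, f i (xk1 i)
  set Fs : ℝ := ∑ i, f i (xs i)
  set P1 : ℝ := (inner ℝ ls ((∑ i, A i (xk1 i)) - b) : ℝ) with hP1
  set Q1 : ℝ := (inner ℝ γ (∑ i, A i (xk1 i)) : ℝ) with hQ1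
  set Qb : ℝ := (inner ℝ γ b : ℝ) with hQb
  -- rewrite S2 using Eh
  rw [Eh xk1, Eh xs, hfeas] at S2
  -- multiply the remaining scalar inequalities by 2ρ
  have hρ2 : (0:ℝ) ≤ 2*ρ := by positivity
  have hp2 := mul_le_mul_of_nonneg_left hp hρ2
  have hνg2 := mul_le_mul_of_nonneg_left hνg hρ2
  have hcs2 : 2*ρ*(∑ j, ms j * ∑ i, g j i (xs i)) = 0 := by rw [hcs, mul_zero]
  -- rewrite the goal
  have EQ : (inner ℝ (ls - γ) ((∑ i, A i (xk1 i)) - b) : ℝ) = P1 - (Q1 - Qb) := by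
    rw [hP1, hQ1, hQb, inner_sub_left, inner_sub_right, inner_sub_right]
  rw [EQ]
  have EG : ∑ j, (ms j - ν j) * ∑ i, g j i (xk1 i)
      = (∑ j, ms j * ∑ i, g j i (xk1 i)) - ∑ j, ν j * ∑ i, g j i (xk1 i) := by
    rw [← Finset.sum_sub_distrib]
    exact Finset.sum_congr rfl fun j _ => by ring
  rw [EG]
  nlinarith [S2, hp2, hνg2, hcs2]
end

section
/- Let (x*, λ*, μ*) be a saddle point of the Lagrangian L. Let ρ > 0, let x_i^k, x_i^{k+1} ∈ X_i for each i, let λ^k ∈ ℝ^m and μ^k ∈ ℝ^M_{≥0}, and define γ^{k+1} = λ^k + ρ(Σ_i A_i x_i^k − b), ν_j^{k+1} = max(0, μ_j^k + ρ Σ_i g_{ji}(x_i^k)), λ^{k+1} = λ^k + ρ(Σ_i A_i x_i^{k+1} − b), and μ_j^{k+1} = max(0, μ_j^k + ρ Σ_i g_{ji}(x_i^{k+1})). Then ‖λ^{k+1} − λ*‖₂² + ‖μ^{k+1} − μ*‖₂² ≤ ‖λ^k − λ*‖₂² + ‖μ^k − μ*‖₂² − ‖γ^{k+1} − λ^{k+1}‖₂²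 − ‖ν^{k+1} − μ^{k+1}‖₂² − ‖γ^{k+1} − λ^k‖₂² − ‖ν^{k+1} − μ^k‖₂² + 2ρ·[ (γ^{k+1} − λ^{k+1})ᵀ(Σ_i A_i x_i^k − b) + Σ_j (ν_j^{k+1} − μ_j^{k+1})·Σ_i g_{ji}(x_i^k) + (λ^{k+1} − λ*)ᵀ(Σ_i A_i x_i^{k+1} − b) + Σ_j (μ_j^{k+1} − μ*_j)·Σ_i g_{ji}(x_i^{k+1}) ]. -/
open scoped BigOperators

lemma euc_inner_eq {k : ℕ} (x y : EuclideanSpace ℝ (Fin k)) :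
    (inner ℝ x y : ℝ) = ∑ j, x j * y j := by
  simp [PiLp.inner_apply, RCLike.inner_apply, mul_comm]

lemma euc_norm_sq {k : ℕ} (x : EuclideanSpace ℝ (Fin k)) : ‖x‖ ^ 2 = ∑ j, x j ^ 2 := by
  rw [EuclideanSpace.norm_eq, Real.sq_sqrt (Finset.sum_nonneg fun _ _ => by positivity)]; simp [Real.norm_eq_abs, sq_abs]

/-- Pointwise dual-update estimate for one multiplier coordinate. -/
lemma mu_coord (ρ u msj pj qj v u1 : ℝ) (hms : 0 ≤ msj)
    (hv : v = max 0 (u + ρ * pj)) (hu1 : u1 = max 0 (u + ρ * qj)) :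
    (u1 - msj) ^ 2 ≤ (u - msj) ^ 2 - (v - u1) ^ 2 - (v - u) ^ 2
      + (2 * ρ * ((v - u1) * pj) + 2 * ρ * ((u1 - msj) * qj)) := by
  have hu1n : 0 ≤ u1 := hu1 ▸ le_max_left 0 _
  have h1 : (u1 - (u + ρ * qj)) * (u1 - msj) ≤ 0 := by
    rcases le_total (u + ρ * qj) 0 with h | h
    · rw [hu1, max_eq_left h]; nlinarith
    · rw [hu1, max_eq_right h]; simp
  have h2 : (v - (u + ρ * pj)) * (v - u1) ≤ 0 := by
    rcases le_total (u + ρ * pj) 0 with h | h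
    · rw [hv, max_eq_left h]; nlinarith
    · rw [hv, max_eq_right h]; simp
  nlinarith [h1, h2]

/-- dual distance estimate, Proposition 1, second inequality. -/
theorem stmt_4 {N M m : ℕ} {n : Fin N → ℕ}
    (f : ∀ i, EuclideanSpace ℝ (Fin (n i)) → ℝ)
    (A : ∀ i, EuclideanSpace ℝ (Fin (n i)) →L[ℝ] EuclideanSpace ℝ (Fin m))
    (b : EuclideanSpace ℝ (Fin m))
    (g : Fin M → ∀ i, EuclideanSpace ℝ (Fin (n i)) → ℝ)
    (X : ∀ i, Set (EuclideanSpace ℝ (Fin (n i))))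
    (hX : ∀ i, IsClosed (X i) ∧ Convex ℝ (X i))
    (hf : ∀ i, Continuous (f i) ∧ ConvexOn ℝ Set.univ (f i))
    (hg : ∀ j i, Continuous (g j i) ∧ ConvexOn ℝ Set.univ (g j i))
    (xs : ∀ i, EuclideanSpace ℝ (Fin (n i)))
    (ls : EuclideanSpace ℝ (Fin m)) (ms : EuclideanSpace ℝ (Fin M))
    (hsaddle : IsSaddlePoint f A b g X xs ls ms)
    (ρ : ℝ) (hρ : 0 < ρ)
    (xk : ∀ i, EuclideanSpace ℝ (Fin (n i))) (hxk : ∀ i, xk i ∈ X i)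
    (xk1 : ∀ i, EuclideanSpace ℝ (Fin (n i))) (hxk1 : ∀ i, xk1 i ∈ X i)
    (lamk : EuclideanSpace ℝ (Fin m)) (muk : EuclideanSpace ℝ (Fin M))
    (hmuk : ∀ j, 0 ≤ muk j)
    (γ : EuclideanSpace ℝ (Fin m)) (ν : EuclideanSpace ℝ (Fin M))
    (lamk1 : EuclideanSpace ℝ (Fin m)) (muk1 : EuclideanSpace ℝ (Fin M))
    (hγ : γ = lamk + ρ • ((∑ i, A i (xk i)) - b))
    (hν : ∀ j, ν j = max 0 (muk j + ρ * ∑ i, g j i (xk i)))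
    (hlamk1 : lamk1 = lamk + ρ • ((∑ i, A i (xk1 i)) - b))
    (hmuk1 : ∀ j, muk1 j = max 0 (muk j + ρ * ∑ i, g j i (xk1 i))) :
    ‖lamk1 - ls‖ ^ 2 + ‖muk1 - ms‖ ^ 2
      ≤ ‖lamk - ls‖ ^ 2 + ‖muk - ms‖ ^ 2
        - ‖γ - lamk1‖ ^ 2 - ‖ν - muk1‖ ^ 2 - ‖γ - lamk‖ ^ 2 - ‖ν - muk‖ ^ 2
        + 2 * ρ * ((inner ℝ (γ - lamk1) ((∑ i, A i (xk i)) - b) : ℝ)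
          + (∑ j, (ν j - muk1 j) * ∑ i, g j i (xk i))
          + (inner ℝ (lamk1 - ls) ((∑ i, A i (xk1 i)) - b) : ℝ)
          + ∑ j, (muk1 j - ms j) * ∑ i, g j i (xk1 i)) := by
  obtain ⟨_, hms, _, _⟩ := hsaddle
  set r : EuclideanSpace ℝ (Fin m) := (∑ i, A i (xk i)) - b with hr
  set s : EuclideanSpace ℝ (Fin m) := (∑ i, A i (xk1 i)) - b with hs
  have hγj : ∀ j, γ j = lamk j + ρ * r j := by
    intro j; rw [hγ]; simp
  have hl1j : ∀ j, lamk1 j = lamk j + ρ * s j := by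
    intro j; rw [hlamk1]; simp
  -- λ-part: exact identity, coordinatewise
  have Hlam : ∑ j, (lamk1 j - ls j) ^ 2
      = ∑ j, ((lamk j - ls j) ^ 2 - (γ j - lamk1 j) ^ 2 - (γ j - lamk j) ^ 2
        + (2 * ρ * ((γ j - lamk1 j) * r j) + 2 * ρ * ((lamk1 j - ls j) * s j))) := by
    refine Finset.sum_congr rfl fun j _ => ?_
    rw [hγj j, hl1j j]; ring
  -- μ-part: coordinatewise projection estimate
  have Hmu : ∑ j, (muk1 j - ms j) ^ 2
      ≤ ∑ j, ((muk j - ms j) ^ 2 - (ν j - muk1 j) ^ 2 - (ν j - muk j) ^ 2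
        + (2 * ρ * ((ν j - muk1 j) * ∑ i, g j i (xk i))
          + 2 * ρ * ((muk1 j - ms j) * ∑ i, g j i (xk1 i)))) := by
    refine Finset.sum_le_sum fun j _ => ?_
    exact mu_coord ρ (muk j) (ms j) _ _ (ν j) (muk1 j) (hms j) (hν j) (hmuk1 j)
  simp only [Finset.sum_add_distrib, Finset.sum_sub_distrib, ← Finset.mul_sum] at Hlam Hmu
  have e1 : (inner ℝ (γ - lamk1) r : ℝ) = ∑ j, (γ j - lamk1 j) * r j := by
    rw [euc_inner_eq]; refine Finset.sum_congr rfl fun j _ => by simp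
  have e2 : (inner ℝ (lamk1 - ls) s : ℝ) = ∑ j, (lamk1 j - ls j) * s j := by
    rw [euc_inner_eq]; refine Finset.sum_congr rfl fun j _ => by simp
  have n1 := euc_norm_sq (lamk1 - ls)
  have n2 := euc_norm_sq (lamk - ls)
  have n3 := euc_norm_sq (γ - lamk1)
  have n4 := euc_norm_sq (γ - lamk)
  have n5 := euc_norm_sq (muk1 - ms)
  have n6 := euc_norm_sq (muk - ms)
  have n7 := euc_norm_sq (ν - muk1)
  have n8 := euc_norm_sq (ν - muk)
  simp only [PiLp.sub_apply] at n1 n2 n3 n4 n5 n6 n7 n8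
  rw [n1, n2, n3, n4, n5, n6, n7, n8, e1, e2]
  nlinarith [Hlam, Hmu]
end

section
/- Let (x*, λ*, μ*) be a saddle point of the Lagrangian L, assume each g_{ji} is Lipschitz continuous on X_i with modulus L_{ji}, and let 0 < ε < 1 and 0 < ρ ≤ min{(1−ε)/(A_max + M·L_max), (1−ε)/(N·A_max), (1−ε)/(N·L_max)}. Apply one N-block PCPM iteration with step size ρ to a point (x^k, λ^k, μ^k) with x_i^k ∈ X_i and μ^k ∈ ℝ^M_{≥0}, producing γ^{k+1}, ν^{k+1}, x^{k+1}, λ^{k+1}, μ^{k+1}. Then Σ_i ‖x_i^{k+1} − x*_i‖₂² + ‖λ^{k+1} − λ*‖₂² + ‖μ^{k+1} − μ*‖₂² ≤ Σ_i ‖x_i^k − x*_i‖₂² + ‖λ^k − λ*‖₂² + ‖μ^k − μ*‖₂² − ε·( Σ_i ‖x_i^{k+1} − x_i^k‖₂² + ‖γ^{k+1} − λ^{k+1}‖₂² + ‖ν^{k+1} − μ^{k+1}‖₂² + ‖γ^{k+1} − λ^k‖₂² + ‖ν^{k+1} − μ^k‖₂² ). -/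
open scoped BigOperators

open scoped BigOperators RealInnerProductSpace

section Aux
variable {E : Type*} [NormedAddCommGroup E] [InnerProductSpace ℝ E]

lemma pcpm_norm_combo (u v : E) (t : ℝ) :
    ‖(1-t)•u + t•v‖^2 = (1-t)*‖u‖^2 + t*‖v‖^2 - t*(1-t)*‖v-u‖^2 := by
  have h1 : ∀ w : E, ‖w‖^2 = ⟪w, w⟫ := fun w => (real_inner_self_eq_norm_sq w).symm
  simp only [h1, inner_add_left, inner_add_right, real_inner_smul_left, real_inner_smul_right,
    inner_sub_left, inner_sub_right]
  rw [real_inner_comm v u]; ring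

lemma pcpm_four_point (gm l p q : E) :
    2*⟪gm-l, q-p⟫ = ‖gm-p‖^2 - ‖gm-q‖^2 + ‖q-l‖^2 - ‖p-l‖^2 := by
  have h1 : ∀ w : E, ‖w‖^2 = ⟪w, w⟫ := fun w => (real_inner_self_eq_norm_sq w).symm
  simp only [h1, inner_sub_left, inner_sub_right]
  rw [real_inner_comm p gm, real_inner_comm q gm, real_inner_comm l q, real_inner_comm l p]
  ring

lemma pcpm_max_sq (t0 t1 : ℝ) :
    (max 0 t0 - max 0 t1)^2 - 2*((max 0 t0 - max 0 t1)*(t1 - max 0 t1)) ≤ (t0 - t1)^2 := by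
  rcases le_total t0 0 with h0|h0 <;> rcases le_total t1 0 with h1|h1 <;>
    [rw [max_eq_left h0, max_eq_left h1]; rw [max_eq_left h0, max_eq_right h1];
     rw [max_eq_right h0, max_eq_left h1]; rw [max_eq_right h0, max_eq_right h1]] <;>
    nlinarith

lemma pcpm_max_prod_nonpos (t0 t1 : ℝ) :
    (max 0 t0 - max 0 t1)*(t1 - max 0 t1) ≤ 0 := by
  rcases le_total t1 0 with h1|h1
  · rw [max_eq_left h1]
    have : (0:ℝ) ≤ max 0 t0 := le_max_left _ _
    nlinarith
  · rw [max_eq_right h1]; simp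

lemma pcpm_coord (r u nj w : ℝ) (hw : 0 ≤ w) :
    (nj - u)^2 - (nj - max 0 (u+r))^2 + (max 0 (u+r) - w)^2 - (u - w)^2
      + 2*((nj - max 0 (u+r))*(u + r - max 0 (u+r))) ≤ 2*((nj - w)*r) := by
  rcases le_total (u+r) 0 with h|h
  · rw [max_eq_left h]; nlinarith [mul_nonneg hw (neg_nonneg.mpr h)]
  · rw [max_eq_right h]; nlinarith

lemma pcpm_strong_min {X : Set E} (hX : Convex ℝ X) {φ : E → ℝ}
    (hφ : ConvexOn ℝ Set.univ φ) {c : ℝ} (hc : 0 < c) {x0 x1 : E} (hx1 : x1 ∈ X)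
    (hm : ∀ y ∈ X, φ x1 + c*‖x1-x0‖^2 ≤ φ y + c*‖y-x0‖^2)
    (y : E) (hy : y ∈ X) :
    φ x1 + c*‖x1-x0‖^2 + c*‖y-x1‖^2 ≤ φ y + c*‖y-x0‖^2 := by
  have key : ∀ t : ℝ, 0 < t → t ≤ 1 →
      φ x1 + c*‖x1-x0‖^2 + c*(1-t)*‖y-x1‖^2 ≤ φ y + c*‖y-x0‖^2 := by
    intro t ht0 ht1
    have hmem : (1-t)•x1 + t•y ∈ X := hX hx1 hy (by linarith) (le_of_lt ht0) (by ring)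
    have h2 := hm _ hmem
    have h3 : φ ((1-t)•x1 + t•y) ≤ (1-t)*φ x1 + t*φ y := by
      have := hφ.2 (Set.mem_univ x1) (Set.mem_univ y) (by linarith : (0:ℝ) ≤ 1-t)
        (le_of_lt ht0) (by ring)
      simpa [smul_eq_mul] using this
    have h4 : ‖(1-t)•x1 + t•y - x0‖^2
        = (1-t)*‖x1-x0‖^2 + t*‖y-x0‖^2 - t*(1-t)*‖y-x1‖^2 := by
      have he : (1-t)•x1 + t•y - x0 = (1-t)•(x1-x0) + t•(y-x0) := by module
      rw [he, pcpm_norm_combo, show y - x0 - (x1 - x0) = y - x1 by abel]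
    rw [h4] at h2
    have h5 : t*(φ x1 + c*‖x1-x0‖^2 + c*(1-t)*‖y-x1‖^2) ≤ t*(φ y + c*‖y-x0‖^2) := by
      nlinarith
    exact le_of_mul_le_mul_left h5 ht0
  by_contra hcon
  push_neg at hcon
  have hK0 : 0 ≤ c*‖y-x1‖^2 := by positivity
  rcases eq_or_lt_of_le hK0 with hKz|hKp
  · have h6 := key 1 one_pos le_rfl
    nlinarith
  · obtain ⟨D, hD⟩ : ∃ D, D = φ x1 + c*‖x1-x0‖^2 + c*‖y-x1‖^2 - (φ y + c*‖y-x0‖^2) :=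
      ⟨_, rfl⟩
    have hDpos : 0 < D := by rw [hD]; linarith
    have hdenom : (0:ℝ) < 2*(c*‖y-x1‖^2) := by linarith
    have h6 := key (min 1 (D/(2*(c*‖y-x1‖^2))))
      (lt_min one_pos (div_pos hDpos hdenom)) (min_le_left _ _)
    have h8 : min 1 (D/(2*(c*‖y-x1‖^2))) ≤ D/(2*(c*‖y-x1‖^2)) := min_le_right _ _
    have h7 : min 1 (D/(2*(c*‖y-x1‖^2))) * (c*‖y-x1‖^2) ≤ D/2 := by
      have h9 := mul_le_mul_of_nonneg_right h8 hK0
      have h10 : D/(2*(c*‖y-x1‖^2)) * (c*‖y-x1‖^2) = D/2 := by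
        rw [div_mul_eq_mul_div, mul_div_mul_right _ _ hKp.ne']
      linarith [h10 ▸ h9]
    nlinarith [h6, h7, hDpos, hD]

lemma pcpm_norm_sq_sum {k : ℕ} (x : EuclideanSpace ℝ (Fin k)) : ‖x‖^2 = ∑ j, (x j)^2 := by
  rw [EuclideanSpace.norm_eq, Real.sq_sqrt (Finset.sum_nonneg fun j _ => sq_nonneg _)]
  simp [Real.norm_eq_abs, sq_abs]

lemma pcpm_norm_sub_sq_sum {k : ℕ} (u v : EuclideanSpace ℝ (Fin k)) :
    ‖u - v‖^2 = ∑ j, (u j - v j)^2 := by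
  rw [pcpm_norm_sq_sum]
  rfl

lemma pcpm_pos_of {ρ ε d : ℝ} (hρ0 : 0 < ρ) (h1ε : 0 < 1-ε) (h : ρ ≤ (1-ε)/d) :
    0 < d ∧ ρ*d ≤ 1-ε := by
  have hd : 0 < d := by
    by_contra hd
    push_neg at hd
    rcases hd.lt_or_eq with h'|h'
    · have : (1-ε)/d < 0 := div_neg_of_pos_of_neg h1ε h'
      linarith
    · rw [h', div_zero] at h; linarith
  exact ⟨hd, (le_div_iff₀ hd).mp h⟩

lemma pcpm_j2 (rho Am Lm Nr Mr eps na Dl D2 : ℝ)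
    (hrho : 0 < rho) (hAm : 0 < Am) (hLm : 0 < Lm) (hNr : 0 ≤ Nr) (hMr : 0 ≤ Mr)
    (heps1 : eps < 1) (heps0 : 0 < eps) (hD2 : 0 ≤ D2)
    (hc1 : rho*(Am + Mr*Lm) ≤ 1-eps) (hc2 : rho*(Nr*Am) ≤ 1-eps)
    (hc3 : rho*(Nr*Lm) ≤ 1-eps)
    (ha2 : na ≤ rho^2*Am^2*(Nr*D2)) (hDl : Dl ≤ Mr*(rho^2*Lm^2*(Nr*D2))) :
    (1+eps)*(na + Dl) ≤ (1-eps)*D2 := by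
  have i1 := mul_le_mul_of_nonneg_left hc2 (by positivity : (0:ℝ) ≤ rho*Am)
  have i2 := mul_le_mul_of_nonneg_left hc3 (by positivity : (0:ℝ) ≤ rho*Mr*Lm)
  have i1' := mul_le_mul_of_nonneg_right i1 hD2
  have i2' := mul_le_mul_of_nonneg_right i2 hD2
  have i3' := mul_le_mul_of_nonneg_right
    (mul_le_mul_of_nonneg_left hc1 (by linarith : (0:ℝ) ≤ 1-eps)) hD2
  have j1 : na + Dl ≤ (1-eps)*((1-eps)*D2) := by nlinarith [ha2, hDl, i1', i2', i3']
  nlinarith [mul_le_mul_of_nonneg_left j1 (by linarith : (0:ℝ) ≤ 1+eps),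
    mul_nonneg (mul_nonneg (mul_nonneg heps0.le heps0.le)
      (by linarith : (0:ℝ) ≤ 1-eps)) hD2]

lemma pcpm_final (eps D2 SX1 SX0 na nc nP nQ nl1 nl0 nm1 nm0 S Dl W Gt : ℝ)
    (heps0 : 0 < eps) (heps1 : eps < 1)
    (hmaster : W + Gt + D2 + SX1 ≤ SX0)
    (hlam : W = nc - na + nl1 - nl0)
    (hmu : nQ - nP + nm1 - nm0 + 2*S ≤ Gt)
    (hj2 : (1+eps)*(na + Dl) ≤ (1-eps)*D2)
    (hPS : nP - 2*S ≤ Dl) (hS : S ≤ 0)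
    (hc : 0 ≤ nc) (hq : 0 ≤ nQ) :
    SX1 + nl1 + nm1 ≤ SX0 + nl0 + nm0 - eps*(D2 + na + nP + nc + nQ) := by
  nlinarith [mul_nonneg (le_of_lt heps0) (neg_nonneg.mpr hS),
    mul_le_mul_of_nonneg_left hPS (by linarith : (0:ℝ) ≤ 1+eps),
    mul_nonneg (by linarith : (0:ℝ) ≤ 1-eps) hc,
    mul_nonneg (by linarith : (0:ℝ) ≤ 1-eps) hq]

end Aux

set_option maxHeartbeats 1600000

/-- one N-block PCPM iteration is an `ε`-contraction towards any
saddle point, for step sizes satisfying the bound (19). `Amax` bounds all operator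
2-norms `‖Aᵢ‖₂` and `Lmax` bounds all Lipschitz moduli `L_{ji}`. -/
theorem stmt_5 {N M m : ℕ} {n : Fin N → ℕ}
    (f : ∀ i, EuclideanSpace ℝ (Fin (n i)) → ℝ)
    (A : ∀ i, EuclideanSpace ℝ (Fin (n i)) →L[ℝ] EuclideanSpace ℝ (Fin m))
    (b : EuclideanSpace ℝ (Fin m))
    (g : Fin M → ∀ i, EuclideanSpace ℝ (Fin (n i)) → ℝ)
    (X : ∀ i, Set (EuclideanSpace ℝ (Fin (n i))))
    (hX : ∀ i, IsClosed (X i) ∧ Convex ℝ (X i))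
    (hf : ∀ i, Continuous (f i) ∧ ConvexOn ℝ Set.univ (f i))
    (hg : ∀ j i, Continuous (g j i) ∧ ConvexOn ℝ Set.univ (g j i))
    (xs : ∀ i, EuclideanSpace ℝ (Fin (n i)))
    (ls : EuclideanSpace ℝ (Fin m)) (ms : EuclideanSpace ℝ (Fin M))
    (hsaddle : IsSaddlePoint f A b g X xs ls ms)
    (Lc : Fin M → Fin N → ℝ)
    (hLip : ∀ j i, ∀ y ∈ X i, ∀ z ∈ X i, |g j i y - g j i z| ≤ Lc j i * ‖y - z‖)
    (Amax Lmax : ℝ) (hAmax : ∀ i, ‖A i‖ ≤ Amax) (hLmax : ∀ j i, Lc j i ≤ Lmax)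
    (ε : ℝ) (hε0 : 0 < ε) (hε1 : ε < 1)
    (ρ : ℝ) (hρ0 : 0 < ρ)
    (hρ1 : ρ ≤ (1 - ε) / (Amax + M * Lmax))
    (hρ2 : ρ ≤ (1 - ε) / (N * Amax))
    (hρ3 : ρ ≤ (1 - ε) / (N * Lmax))
    (xk : ∀ i, EuclideanSpace ℝ (Fin (n i))) (hxk : ∀ i, xk i ∈ X i)
    (lamk : EuclideanSpace ℝ (Fin m)) (muk : EuclideanSpace ℝ (Fin M))
    (hmuk : ∀ j, 0 ≤ muk j)
    (γ : EuclideanSpace ℝ (Fin m)) (ν : EuclideanSpace ℝ (Fin M))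
    (hγ : γ = lamk + ρ • ((∑ i, A i (xk i)) - b))
    (hν : ∀ j, ν j = max 0 (muk j + ρ * ∑ i, g j i (xk i)))
    (xk1 : ∀ i, EuclideanSpace ℝ (Fin (n i))) (hxk1 : ∀ i, xk1 i ∈ X i)
    (hmin : ∀ i, ∀ y ∈ X i,
      f i (xk1 i) + (inner ℝ γ (A i (xk1 i)) : ℝ) + (∑ j, ν j * g j i (xk1 i))
          + 1 / (2 * ρ) * ‖xk1 i - xk i‖ ^ 2
        ≤ f i y + (inner ℝ γ (A i y) : ℝ) + (∑ j, ν j * g j i y)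
          + 1 / (2 * ρ) * ‖y - xk i‖ ^ 2)
    (lamk1 : EuclideanSpace ℝ (Fin m)) (muk1 : EuclideanSpace ℝ (Fin M))
    (hlamk1 : lamk1 = lamk + ρ • ((∑ i, A i (xk1 i)) - b))
    (hmuk1 : ∀ j, muk1 j = max 0 (muk j + ρ * ∑ i, g j i (xk1 i))) :
    ∑ i, ‖xk1 i - xs i‖ ^ 2 + ‖lamk1 - ls‖ ^ 2 + ‖muk1 - ms‖ ^ 2
      ≤ ∑ i, ‖xk i - xs i‖ ^ 2 + ‖lamk - ls‖ ^ 2 + ‖muk - ms‖ ^ 2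
        - ε * (∑ i, ‖xk1 i - xk i‖ ^ 2 + ‖γ - lamk1‖ ^ 2 + ‖ν - muk1‖ ^ 2
          + ‖γ - lamk‖ ^ 2 + ‖ν - muk‖ ^ 2) := by
  classical
  obtain ⟨hxs, hms, hL, hR⟩ := hsaddle
  have h1ε : (0:ℝ) < 1 - ε := by linarith
  -- step-size consequences
  obtain ⟨hpos1, hc1⟩ := pcpm_pos_of hρ0 h1ε hρ1
  obtain ⟨hpos2, hc2⟩ := pcpm_pos_of hρ0 h1ε hρ2
  obtain ⟨hpos3, hc3⟩ := pcpm_pos_of hρ0 h1ε hρ3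
  have hAmax0 : 0 < Amax := by
    rcases lt_or_ge 0 Amax with h|h
    · exact h
    · exfalso
      have hN : (0:ℝ) ≤ N := Nat.cast_nonneg N
      nlinarith
  have hLmax0 : 0 < Lmax := by
    rcases lt_or_ge 0 Lmax with h|h
    · exact h
    · exfalso
      have hN : (0:ℝ) ≤ N := Nat.cast_nonneg N
      nlinarith
  have hν0 : ∀ j, 0 ≤ ν j := fun j => (hν j) ▸ le_max_left _ _
  -- feasibility of the saddle point: Σ A xs = b
  have hws : ((∑ i, A i (xs i)) - b : EuclideanSpace ℝ (Fin m)) = 0 := by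
    have h := hL (ls + ((∑ i, A i (xs i)) - b)) ms hms
    simp only [lagrangian, inner_add_left] at h
    exact real_inner_self_nonpos.mp (by linarith)
  have hbxs : (∑ i, A i (xs i)) = b := sub_eq_zero.mp hws
  -- G j (xs) ≤ 0
  have hGs : ∀ j, (∑ i, g j i (xs i)) ≤ 0 := by
    intro j
    have hnn : ∀ j', 0 ≤ ms j' + (if j' = j then (1:ℝ) else 0) := by
      intro j'
      have := hms j'
      split <;> linarith
    have h := hL ls (WithLp.toLp 2 (fun j' => ms j' + (if j' = j then (1:ℝ) else 0))) hnn
    simp only [lagrangian, PiLp.toLp_apply] at h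
    have hsum : (∑ j', (ms j' + (if j' = j then (1:ℝ) else 0)) * ∑ i, g j' i (xs i))
        = (∑ j', ms j' * ∑ i, g j' i (xs i)) + ∑ i, g j i (xs i) := by
      rw [Finset.sum_congr rfl (fun j' _ => add_mul (ms j') _ _), Finset.sum_add_distrib]
      congr 1
      simp [ite_mul]
    rw [hsum] at h
    linarith
  have hmsGs : 0 ≤ ∑ j, ms j * ∑ i, g j i (xs i) := by
    have h := hL ls 0 (fun j => le_rfl)
    simp only [lagrangian] at h
    have hz : (∑ j, (0 : EuclideanSpace ℝ (Fin M)) j * ∑ i, g j i (xs i)) = 0 := by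
      simp
    rw [hz] at h
    linarith
  have hνGs : (∑ j, ν j * ∑ i, g j i (xs i)) ≤ 0 :=
    Finset.sum_nonpos fun j _ => mul_nonpos_of_nonneg_of_nonpos (hν0 j) (hGs j)
  -- strong minimality at xs i
  have hsm : ∀ i, f i (xk1 i) + ⟪γ, A i (xk1 i)⟫ + (∑ j, ν j * g j i (xk1 i))
      + 1/(2*ρ)*‖xk1 i - xk i‖^2 + 1/(2*ρ)*‖xs i - xk1 i‖^2
      ≤ f i (xs i) + ⟪γ, A i (xs i)⟫ + (∑ j, ν j * g j i (xs i))
        + 1/(2*ρ)*‖xs i - xk i‖^2 := by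
    intro i
    have hφ : ConvexOn ℝ Set.univ
        (fun z => f i z + ⟪γ, A i z⟫ + (∑ j, ν j * g j i z)) := by
      refine ⟨convex_univ, ?_⟩
      intro x _ y _ a b2 ha hb hab
      have hf' := (hf i).2.2 (Set.mem_univ x) (Set.mem_univ y) ha hb hab
      simp only [smul_eq_mul] at hf'
      have hlin : ⟪γ, A i (a•x + b2•y)⟫ = a*⟪γ, A i x⟫ + b2*⟪γ, A i y⟫ := by
        rw [map_add, map_smul, map_smul, inner_add_right, real_inner_smul_right,
          real_inner_smul_right]
      have hgs : (∑ j, ν j * g j i (a•x+b2•y))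
          ≤ a*(∑ j, ν j * g j i x) + b2*(∑ j, ν j * g j i y) := by
        rw [Finset.mul_sum, Finset.mul_sum, ← Finset.sum_add_distrib]
        refine Finset.sum_le_sum fun j _ => ?_
        have hgj := (hg j i).2.2 (Set.mem_univ x) (Set.mem_univ y) ha hb hab
        simp only [smul_eq_mul] at hgj
        calc ν j * g j i (a•x+b2•y) ≤ ν j * (a * g j i x + b2 * g j i y) :=
              mul_le_mul_of_nonneg_left hgj (hν0 j)
          _ = a*(ν j * g j i x) + b2*(ν j * g j i y) := by ring
      simp only [smul_eq_mul]
      linarith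
    exact pcpm_strong_min (hX i).2 hφ (by positivity : (0:ℝ) < 1/(2*ρ)) (hxk1 i)
      (fun y hy => hmin i y hy) (xs i) (hxs i)
  -- sum the strong minimality inequality over i
  have e1 : ∀ (xx : ∀ i, EuclideanSpace ℝ (Fin (n i))),
      (∑ i, ∑ j, ν j * g j i (xx i)) = ∑ j, ν j * ∑ i, g j i (xx i) := by
    intro xx
    rw [Finset.sum_comm]
    exact Finset.sum_congr rfl fun j _ => (Finset.mul_sum _ _ _).symm
  have key1 : (∑ i, f i (xk1 i)) + ⟪γ, ∑ i, A i (xk1 i)⟫ + (∑ j, ν j * ∑ i, g j i (xk1 i))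
      + 1/(2*ρ)*(∑ i, ‖xk1 i - xk i‖^2) + 1/(2*ρ)*(∑ i, ‖xs i - xk1 i‖^2)
      ≤ (∑ i, f i (xs i)) + ⟪γ, ∑ i, A i (xs i)⟫ + (∑ j, ν j * ∑ i, g j i (xs i))
        + 1/(2*ρ)*(∑ i, ‖xs i - xk i‖^2) := by
    have h := Finset.sum_le_sum (fun i (_ : i ∈ Finset.univ) => hsm i)
    rw [Finset.sum_add_distrib, Finset.sum_add_distrib, Finset.sum_add_distrib,
      Finset.sum_add_distrib, Finset.sum_add_distrib, Finset.sum_add_distrib,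
      Finset.sum_add_distrib, e1, e1, ← inner_sum, ← inner_sum,
      ← Finset.mul_sum, ← Finset.mul_sum, ← Finset.mul_sum] at h
    exact h
  -- right saddle inequality
  have key2 := hR xk1 hxk1
  simp only [lagrangian, hws, inner_zero_right] at key2
  -- combined variational inequality
  have comb : ⟪γ - ls, (∑ i, A i (xk1 i)) - b⟫
      + (∑ j, (ν j - ms j) * ∑ i, g j i (xk1 i))
      + 1/(2*ρ)*(∑ i, ‖xk1 i - xk i‖^2) + 1/(2*ρ)*(∑ i, ‖xs i - xk1 i‖^2)
      ≤ 1/(2*ρ)*(∑ i, ‖xs i - xk i‖^2) := by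
    have hiw : ⟪γ, ∑ i, A i (xk1 i)⟫ = ⟪γ, (∑ i, A i (xk1 i)) - b⟫ + ⟪γ, b⟫ := by
      rw [inner_sub_right]; ring
    have hiws : ⟪γ, ∑ i, A i (xs i)⟫ = ⟪γ, b⟫ := by rw [hbxs]
    have hsub : (∑ j, (ν j - ms j) * ∑ i, g j i (xk1 i))
        = (∑ j, ν j * ∑ i, g j i (xk1 i)) - (∑ j, ms j * ∑ i, g j i (xk1 i)) := by
      rw [← Finset.sum_sub_distrib]
      exact Finset.sum_congr rfl fun j _ => sub_mul _ _ _
    have hil : ⟪γ - ls, (∑ i, A i (xk1 i)) - b⟫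
        = ⟪γ, (∑ i, A i (xk1 i)) - b⟫ - ⟪ls, (∑ i, A i (xk1 i)) - b⟫ := inner_sub_left _ _ _
    rw [hiw, hiws] at key1
    rw [hsub, hil]
    linarith
  -- multiply by 2ρ
  have hdd : ∀ Z : ℝ, (2*ρ)*(1/(2*ρ)*Z) = Z := by
    intro Z
    field_simp
  have master2 : 2*ρ*⟪γ - ls, (∑ i, A i (xk1 i)) - b⟫
      + 2*ρ*(∑ j, (ν j - ms j) * ∑ i, g j i (xk1 i))
      + (∑ i, ‖xk1 i - xk i‖^2) + (∑ i, ‖xs i - xk1 i‖^2)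
      ≤ ∑ i, ‖xs i - xk i‖^2 := by
    have h := mul_le_mul_of_nonneg_left comb (by positivity : (0:ℝ) ≤ 2*ρ)
    have d1 := hdd (∑ i, ‖xk1 i - xk i‖^2)
    have d2 := hdd (∑ i, ‖xs i - xk1 i‖^2)
    have d3 := hdd (∑ i, ‖xs i - xk i‖^2)
    linarith [h, d1, d2, d3]
  -- lambda block identity
  have hlamid : 2*ρ*⟪γ - ls, (∑ i, A i (xk1 i)) - b⟫
      = ‖γ - lamk‖^2 - ‖γ - lamk1‖^2 + ‖lamk1 - ls‖^2 - ‖lamk - ls‖^2 := by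
    have h1 : ρ • ((∑ i, A i (xk1 i)) - b) = lamk1 - lamk := by rw [hlamk1]; abel
    calc 2*ρ*⟪γ - ls, (∑ i, A i (xk1 i)) - b⟫
        = 2*⟪γ - ls, ρ • ((∑ i, A i (xk1 i)) - b)⟫ := by
          rw [real_inner_smul_right]; ring
      _ = 2*⟪γ - ls, lamk1 - lamk⟫ := by rw [h1]
      _ = ‖γ - lamk‖^2 - ‖γ - lamk1‖^2 + ‖lamk1 - ls‖^2 - ‖lamk - ls‖^2 :=
          pcpm_four_point γ ls lamk lamk1
  -- mu block inequality
  have hmuid : ‖ν - muk‖^2 - ‖ν - muk1‖^2 + ‖muk1 - ms‖^2 - ‖muk - ms‖^2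
      + 2*(∑ j, (ν j - muk1 j) * (muk j + ρ * (∑ i, g j i (xk1 i)) - muk1 j))
      ≤ 2*ρ*(∑ j, (ν j - ms j) * ∑ i, g j i (xk1 i)) := by
    rw [pcpm_norm_sub_sq_sum, pcpm_norm_sub_sq_sum, pcpm_norm_sub_sq_sum,
      pcpm_norm_sub_sq_sum, Finset.mul_sum, Finset.mul_sum, ← Finset.sum_sub_distrib,
      ← Finset.sum_add_distrib, ← Finset.sum_sub_distrib, ← Finset.sum_add_distrib]
    refine Finset.sum_le_sum fun j _ => ?_
    have h := pcpm_coord (ρ * ∑ i, g j i (xk1 i)) (muk j) (ν j) (ms j) (hms j)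
    rw [← hmuk1 j] at h
    nlinarith [h]
  -- Cauchy–Schwarz on block distances
  have hD2nn : (0:ℝ) ≤ ∑ i, ‖xk1 i - xk i‖^2 :=
    Finset.sum_nonneg fun i _ => by positivity
  have hSB2 : (∑ i, ‖xk1 i - xk i‖)^2 ≤ (N:ℝ) * ∑ i, ‖xk1 i - xk i‖^2 := by
    have h := sq_sum_le_card_mul_sum_sq (s := (Finset.univ : Finset (Fin N)))
      (f := fun i => ‖xk1 i - xk i‖)
    simpa using h
  -- bound on ‖γ - lamk1‖
  have hanorm : ‖γ - lamk1‖ ≤ ρ * (Amax * ∑ i, ‖xk1 i - xk i‖) := by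
    have hsum : (∑ i, A i (xk i)) - (∑ i, A i (xk1 i)) = ∑ i, A i (xk i - xk1 i) := by
      rw [← Finset.sum_sub_distrib]
      exact Finset.sum_congr rfl fun i _ => (map_sub (A i) _ _).symm
    have he : γ - lamk1 = ρ • (∑ i, A i (xk i - xk1 i)) := by
      rw [hγ, hlamk1, ← hsum]
      module
    rw [he, norm_smul]
    have h1 : ‖∑ i, A i (xk i - xk1 i)‖ ≤ ∑ i, ‖A i (xk i - xk1 i)‖ :=
      norm_sum_le _ _
    have h2 : (∑ i, ‖A i (xk i - xk1 i)‖) ≤ Amax * ∑ i, ‖xk1 i - xk i‖ := by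
      rw [Finset.mul_sum]
      refine Finset.sum_le_sum fun i _ => ?_
      calc ‖A i (xk i - xk1 i)‖ ≤ ‖A i‖ * ‖xk i - xk1 i‖ := (A i).le_opNorm _
        _ ≤ Amax * ‖xk i - xk1 i‖ :=
            mul_le_mul_of_nonneg_right (hAmax i) (norm_nonneg _)
        _ = Amax * ‖xk1 i - xk i‖ := by rw [norm_sub_rev]
    have h3 : ‖ρ‖ = ρ := abs_of_pos hρ0
    rw [h3]
    calc ρ * ‖∑ i, A i (xk i - xk1 i)‖ ≤ ρ * (∑ i, ‖A i (xk i - xk1 i)‖) :=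
        mul_le_mul_of_nonneg_left h1 hρ0.le
      _ ≤ ρ * (Amax * ∑ i, ‖xk1 i - xk i‖) := mul_le_mul_of_nonneg_left h2 hρ0.le
  have ha2 : ‖γ - lamk1‖^2 ≤ ρ^2 * Amax^2 * ((N:ℝ) * ∑ i, ‖xk1 i - xk i‖^2) := by
    have h1 : ‖γ - lamk1‖^2 ≤ (ρ * (Amax * ∑ i, ‖xk1 i - xk i‖))^2 :=
      pow_le_pow_left₀ (norm_nonneg _) hanorm 2
    have h2 := mul_le_mul_of_nonneg_left hSB2 (by positivity : (0:ℝ) ≤ ρ^2 * Amax^2)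
    nlinarith [h1, h2]
  -- per-j Lipschitz bound on the constraint sums
  have hGd : ∀ j, |(∑ i, g j i (xk i)) - ∑ i, g j i (xk1 i)| ≤ Lmax * ∑ i, ‖xk1 i - xk i‖ := by
    intro j
    calc |(∑ i, g j i (xk i)) - ∑ i, g j i (xk1 i)|
        = |∑ i, (g j i (xk i) - g j i (xk1 i))| := by rw [Finset.sum_sub_distrib]
      _ ≤ ∑ i, |g j i (xk i) - g j i (xk1 i)| := Finset.abs_sum_le_sum_abs _ _
      _ ≤ ∑ i, Lmax * ‖xk1 i - xk i‖ := by
          refine Finset.sum_le_sum fun i _ => ?_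
          have h := hLip j i (xk i) (hxk i) (xk1 i) (hxk1 i)
          have h2 : Lc j i * ‖xk i - xk1 i‖ ≤ Lmax * ‖xk i - xk1 i‖ :=
            mul_le_mul_of_nonneg_right (hLmax j i) (norm_nonneg _)
          rw [norm_sub_rev] at h2
          rw [norm_sub_rev (xk i) (xk1 i)] at h
          exact le_trans h h2
      _ = Lmax * ∑ i, ‖xk1 i - xk i‖ := (Finset.mul_sum _ _ _).symm
  -- Δ bound
  have hDelta : (∑ j, ((muk j + ρ * ∑ i, g j i (xk i)) - (muk j + ρ * ∑ i, g j i (xk1 i)))^2)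
      ≤ (M:ℝ) * (ρ^2 * Lmax^2 * ((N:ℝ) * ∑ i, ‖xk1 i - xk i‖^2)) := by
    have hper : ∀ j ∈ (Finset.univ : Finset (Fin M)),
        ((muk j + ρ * ∑ i, g j i (xk i)) - (muk j + ρ * ∑ i, g j i (xk1 i)))^2
          ≤ ρ^2 * Lmax^2 * ((N:ℝ) * ∑ i, ‖xk1 i - xk i‖^2) := by
      intro j _
      have h1 := pow_le_pow_left₀ (abs_nonneg _) (hGd j) 2
      rw [sq_abs] at h1
      have h2 := mul_le_mul_of_nonneg_left h1 (sq_nonneg ρ)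
      have h3 := mul_le_mul_of_nonneg_left hSB2 (by positivity : (0:ℝ) ≤ ρ^2 * Lmax^2)
      nlinarith [h2, h3]
    calc (∑ j, ((muk j + ρ * ∑ i, g j i (xk i)) - (muk j + ρ * ∑ i, g j i (xk1 i)))^2)
        ≤ ∑ _j : Fin M, ρ^2 * Lmax^2 * ((N:ℝ) * ∑ i, ‖xk1 i - xk i‖^2) :=
          Finset.sum_le_sum hper
      _ = (M:ℝ) * (ρ^2 * Lmax^2 * ((N:ℝ) * ∑ i, ‖xk1 i - xk i‖^2)) := by
          rw [Finset.sum_const, Finset.card_univ, Fintype.card_fin, nsmul_eq_mul]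
  -- projection-residual bounds
  have hn1 : ‖ν - muk1‖^2 = ∑ j, (ν j - muk1 j)^2 := pcpm_norm_sub_sq_sum ν muk1
  have hsumS : (∑ j, (ν j - muk1 j) * (muk j + ρ * (∑ i, g j i (xk1 i)) - muk1 j)) ≤ 0 :=
    Finset.sum_nonpos fun j _ => by
      rw [hν j, hmuk1 j]
      exact pcpm_max_prod_nonpos _ _
  have hsumPS : ‖ν - muk1‖^2
      - 2*(∑ j, (ν j - muk1 j) * (muk j + ρ * (∑ i, g j i (xk1 i)) - muk1 j))
      ≤ ∑ j, ((muk j + ρ * ∑ i, g j i (xk i)) - (muk j + ρ * ∑ i, g j i (xk1 i)))^2 := by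
    rw [hn1, Finset.mul_sum, ← Finset.sum_sub_distrib]
    refine Finset.sum_le_sum fun j _ => ?_
    have h := pcpm_max_sq (muk j + ρ * ∑ i, g j i (xk i)) (muk j + ρ * ∑ i, g j i (xk1 i))
    rw [← hν j, ← hmuk1 j] at h
    nlinarith [h]
  -- reorient the x-distance sums
  have hrev1 : (∑ i, ‖xs i - xk1 i‖^2) = ∑ i, ‖xk1 i - xs i‖^2 :=
    Finset.sum_congr rfl fun i _ => by rw [norm_sub_rev]
  have hrev0 : (∑ i, ‖xs i - xk i‖^2) = ∑ i, ‖xk i - xs i‖^2 :=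
    Finset.sum_congr rfl fun i _ => by rw [norm_sub_rev]
  rw [hrev1, hrev0] at master2
  -- coefficient arithmetic
  have j2 : (1+ε)*(‖γ - lamk1‖^2
      + (∑ j, ((muk j + ρ * ∑ i, g j i (xk i)) - (muk j + ρ * ∑ i, g j i (xk1 i)))^2))
      ≤ (1-ε)*(∑ i, ‖xk1 i - xk i‖^2) :=
    pcpm_j2 ρ Amax Lmax (N:ℝ) (M:ℝ) ε _ _ _ hρ0 hAmax0 hLmax0 (Nat.cast_nonneg N)
      (Nat.cast_nonneg M) hε1 hε0 hD2nn hc1 hc2 hc3 ha2 hDelta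
  -- final combination
  exact pcpm_final ε _ _ _ _ _ _ _ _ _ _ _ _ _ _ _ hε0 hε1 master2 hlamid hmuid j2
    hsumPS hsumS (by positivity) (by positivity)
end

section
/- Let (x*, λ*, μ*) be a saddle point of the Lagrangian L, assume each g_{ji} is Lipschitz continuous on X_i with modulus L_{ji}, and let 0 < ε < 1 and 0 < ρ ≤ min{(1−ε)/(A_max + M·L_max), (1−ε)/(N·A_max), (1−ε)/(N·L_max)}. Let (x^k, λ^k, μ^k)_{k≥0} be generated by the N-block PCPM iteration with step size ρ from an arbitrary starting point, with auxiliary variables γ^{k+1}, ν^{k+1}. Then as k → ∞: Σ_i ‖x_i^{k+1} − x_i^k‖₂² → 0, ‖γ^{k+1} − λ^{k+1}‖₂ → 0, ‖ν^{k+1} − μ^{k+1}‖₂ → 0, ‖γ^{k+1} − λ^k‖₂ → 0, and ‖ν^{k+1} − μ^k‖₂ → 0. -/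
open scoped BigOperators

section Helpers

variable {E : Type*} [NormedAddCommGroup E] [InnerProductSpace ℝ E]

lemma four_pt (a b c d : E) :
    2 * (inner ℝ (a - d) (b - c) : ℝ) = ‖b - d‖^2 - ‖c - d‖^2 + ‖a - c‖^2 - ‖a - b‖^2 := by
  simp only [norm_sub_sq_real, inner_sub_left, inner_sub_right, real_inner_comm a b,
    real_inner_comm a c, real_inner_comm b d, real_inner_comm c d]
  ring

lemma comb_norm (u w z : E) (t : ℝ) :
    ‖u + t • (w - u) - z‖^2 = (1 - t) * ‖u - z‖^2 + t * ‖w - z‖^2 - t * (1 - t) * ‖w - u‖^2 := by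
  have h1 : u + t • (w - u) - z = (u - z) + t • (w - u) := by abel
  have h2 : w - z = (u - z) + (w - u) := by abel
  rw [h1, h2, norm_add_sq_real, norm_add_sq_real, norm_smul, real_inner_smul_right]
  simp [mul_pow, Real.norm_eq_abs, sq_abs]
  ring

lemma strong_min (φ : E → ℝ) (X : Set E) (hXc : Convex ℝ X)
    (c : ℝ) (hc : 0 < c) (x0 xp xs : E) (hxp : xp ∈ X) (hxs : xs ∈ X)
    (hseg : ∀ t : ℝ, 0 ≤ t → t ≤ 1 → φ (xp + t • (xs - xp)) ≤ (1-t) * φ xp + t * φ xs)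
    (hmin : ∀ y ∈ X, φ xp + c*‖xp - x0‖^2 ≤ φ y + c*‖y - x0‖^2) :
    φ xp + c*‖xp - x0‖^2 + c*‖xs - xp‖^2 ≤ φ xs + c*‖xs - x0‖^2 := by
  have key : ∀ t : ℝ, 0 < t → t ≤ 1 →
      φ xp + c*‖xp - x0‖^2 + c*(1-t)*‖xs - xp‖^2 ≤ φ xs + c*‖xs - x0‖^2 := by
    intro t ht0 ht1
    have hyX : xp + t • (xs - xp) ∈ X := by
      have := hXc hxp hxs (by linarith : (0:ℝ) ≤ 1 - t) ht0.le (by ring)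
      convert this using 1
      rw [sub_smul, one_smul, smul_sub]; abel
    have h1 := hmin _ hyX
    have h2 := hseg t ht0.le ht1
    rw [comb_norm xp xs x0 t] at h1
    have h3 : t * (φ xp + c*‖xp - x0‖^2 + c*(1-t)*‖xs - xp‖^2)
        ≤ t * (φ xs + c*‖xs - x0‖^2) := by nlinarith
    exact le_of_mul_le_mul_left h3 ht0
  refine le_of_forall_pos_le_add fun η hη => ?_
  have hS : 0 ≤ c*‖xs - xp‖^2 := by positivity
  set t : ℝ := min 1 (η / (c*‖xs - xp‖^2 + 1)) with htdef
  have ht0 : 0 < t := lt_min one_pos (div_pos hη (by positivity))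
  have ht1 : t ≤ 1 := min_le_left _ _
  have h := key t ht0 ht1
  have hts : c*t*‖xs - xp‖^2 ≤ η := by
    have h1 : t ≤ η / (c*‖xs - xp‖^2 + 1) := min_le_right _ _
    have h2 : t * (c*‖xs - xp‖^2 + 1) ≤ η := by
      rw [← div_mul_cancel₀ η (by positivity : c*‖xs - xp‖^2 + 1 ≠ 0)]
      exact mul_le_mul_of_nonneg_right h1 (by positivity)
    nlinarith
  nlinarith

lemma mu_key (ρ s1 s2 ss μk μs : ℝ) (hρ : 0 ≤ ρ) (hμs : 0 ≤ μs) (hss : ss ≤ 0)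
    (hcs : μs * ss = 0) :
    (max 0 (μk + ρ*s2) - μs)^2 - (μk - μs)^2 + (max 0 (μk + ρ*s1) - μk)^2 - ρ^2*(s1-s2)^2
      ≤ 2*ρ*(max 0 (μk + ρ*s1) - μs)*(s2 - ss) := by
  have hρss : ρ * ss ≤ 0 := mul_nonpos_of_nonneg_of_nonpos hρ hss
  have hz : ρ * (μs * ss) = 0 := by rw [hcs]; ring
  rcases le_total (μk + ρ*s1) 0 with h1 | h1 <;> rcases le_total (μk + ρ*s2) 0 with h2 | h2
  · simp only [max_eq_left, h1, h2]
    nlinarith [mul_nonneg hμs (neg_nonneg.2 h2), sq_nonneg (ρ*s1 - ρ*s2)]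
  · simp only [max_eq_left, max_eq_right, h1, h2]
    nlinarith [mul_nonneg h2 (neg_nonneg.2 h1), sq_nonneg (μk + ρ*s1)]
  · simp only [max_eq_left, max_eq_right, h1, h2]
    nlinarith [mul_nonneg hμs (neg_nonneg.2 h2), mul_nonneg h1 (neg_nonneg.2 hρss),
      sq_nonneg (μk + ρ*s2)]
  · simp only [max_eq_right, h1, h2]
    nlinarith [mul_nonneg h1 (neg_nonneg.2 hρss)]

lemma sqrt_tendsto {v : ℕ → ℝ} (h : Filter.Tendsto v Filter.atTop (nhds 0)) :
    Filter.Tendsto (fun k => Real.sqrt (v k)) Filter.atTop (nhds 0) := by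
  have := (Real.continuous_sqrt.tendsto 0).comp h
  simpa [Function.comp_def] using this

end Helpers

set_option maxHeartbeats 1600000 in
/-- vanishing successive differences of the N-block PCPM iterates. -/
theorem stmt_7 {N M m : ℕ} {n : Fin N → ℕ}
    (f : ∀ i, EuclideanSpace ℝ (Fin (n i)) → ℝ)
    (A : ∀ i, EuclideanSpace ℝ (Fin (n i)) →L[ℝ] EuclideanSpace ℝ (Fin m))
    (b : EuclideanSpace ℝ (Fin m))
    (g : Fin M → ∀ i, EuclideanSpace ℝ (Fin (n i)) → ℝ)
    (X : ∀ i, Set (EuclideanSpace ℝ (Fin (n i))))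
    (hX : ∀ i, IsClosed (X i) ∧ Convex ℝ (X i))
    (hf : ∀ i, Continuous (f i) ∧ ConvexOn ℝ Set.univ (f i))
    (hg : ∀ j i, Continuous (g j i) ∧ ConvexOn ℝ Set.univ (g j i))
    (Lc : Fin M → Fin N → ℝ)
    (hLip : ∀ j i, ∀ y ∈ X i, ∀ z ∈ X i, |g j i y - g j i z| ≤ Lc j i * ‖y - z‖)
    (Amax Lmax : ℝ) (hAmax : ∀ i, ‖A i‖ ≤ Amax) (hLmax : ∀ j i, Lc j i ≤ Lmax)
    (ε : ℝ) (hε0 : 0 < ε) (hε1 : ε < 1)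
    (ρ : ℝ) (hρ0 : 0 < ρ)
    (hρ1 : ρ ≤ (1 - ε) / (Amax + M * Lmax))
    (hρ2 : ρ ≤ (1 - ε) / (N * Amax))
    (hρ3 : ρ ≤ (1 - ε) / (N * Lmax))
    (x : ℕ → ∀ i, EuclideanSpace ℝ (Fin (n i)))
    (lam : ℕ → EuclideanSpace ℝ (Fin m)) (mu : ℕ → EuclideanSpace ℝ (Fin M))
    (γ : ℕ → EuclideanSpace ℝ (Fin m)) (ν : ℕ → EuclideanSpace ℝ (Fin M))
    (hx0 : ∀ i, x 0 i ∈ X i) (hmu0 : ∀ j, 0 ≤ mu 0 j)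
    (hγ : ∀ k, γ (k + 1) = lam k + ρ • ((∑ i, A i (x k i)) - b))
    (hν : ∀ k j, ν (k + 1) j = max 0 (mu k j + ρ * ∑ i, g j i (x k i)))
    (hxmem : ∀ k i, x (k + 1) i ∈ X i)
    (hxmin : ∀ k i, ∀ y ∈ X i,
      f i (x (k + 1) i) + (inner ℝ (γ (k + 1)) (A i (x (k + 1) i)) : ℝ)
          + (∑ j, ν (k + 1) j * g j i (x (k + 1) i))
          + 1 / (2 * ρ) * ‖x (k + 1) i - x k i‖ ^ 2
        ≤ f i y + (inner ℝ (γ (k + 1)) (A i y) : ℝ) + (∑ j, ν (k + 1) j * g j i y)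
          + 1 / (2 * ρ) * ‖y - x k i‖ ^ 2)
    (hlam : ∀ k, lam (k + 1) = lam k + ρ • ((∑ i, A i (x (k + 1) i)) - b))
    (hmu : ∀ k j, mu (k + 1) j = max 0 (mu k j + ρ * ∑ i, g j i (x (k + 1) i)))
    (xs : ∀ i, EuclideanSpace ℝ (Fin (n i)))
    (ls : EuclideanSpace ℝ (Fin m)) (ms : EuclideanSpace ℝ (Fin M))
    (hsaddle : IsSaddlePoint f A b g X xs ls ms) :
    Filter.Tendsto (fun k => ∑ i, ‖x (k + 1) i - x k i‖ ^ 2) Filter.atTop (nhds 0) ∧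
    Filter.Tendsto (fun k => ‖γ (k + 1) - lam (k + 1)‖) Filter.atTop (nhds 0) ∧
    Filter.Tendsto (fun k => ‖ν (k + 1) - mu (k + 1)‖) Filter.atTop (nhds 0) ∧
    Filter.Tendsto (fun k => ‖γ (k + 1) - lam k‖) Filter.atTop (nhds 0) ∧
    Filter.Tendsto (fun k => ‖ν (k + 1) - mu k‖) Filter.atTop (nhds 0) := by
  obtain ⟨hxsX, hms0, hL1, hL2⟩ := hsaddle
  have hε1' : (0:ℝ) < 1 - ε := by linarith
  -- positivity of the constants
  have hNA : 0 < (N:ℝ) * Amax := by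
    by_contra h
    push_neg at h
    rcases h.lt_or_eq with h | h
    · have := div_neg_of_pos_of_neg hε1' h; linarith
    · rw [h, div_zero] at hρ2; linarith
  have hNL : 0 < (N:ℝ) * Lmax := by
    by_contra h
    push_neg at h
    rcases h.lt_or_eq with h | h
    · have := div_neg_of_pos_of_neg hε1' h; linarith
    · rw [h, div_zero] at hρ3; linarith
  have hNc : (0:ℝ) ≤ (N:ℝ) := Nat.cast_nonneg N
  have hMc : (0:ℝ) ≤ (M:ℝ) := Nat.cast_nonneg M
  have hA0 : 0 < Amax := by
    rcases lt_or_ge 0 Amax with h | h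
    · exact h
    · exfalso; nlinarith
  have hL0 : 0 < Lmax := by
    rcases lt_or_ge 0 Lmax with h | h
    · exact h
    · exfalso; nlinarith
  have hb2 : ρ * ((N:ℝ) * Amax) ≤ 1 - ε := (le_div_iff₀ hNA).mp hρ2
  have hb3 : ρ * ((N:ℝ) * Lmax) ≤ 1 - ε := (le_div_iff₀ hNL).mp hρ3
  have hAML : 0 < Amax + (M:ℝ) * Lmax :=
    add_pos_of_pos_of_nonneg hA0 (mul_nonneg hMc hL0.le)
  have hb1 : ρ * (Amax + (M:ℝ) * Lmax) ≤ 1 - ε := (le_div_iff₀ hAML).mp hρ1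
  -- membership and nonnegativity facts
  have hxX : ∀ k i, x k i ∈ X i := by
    intro k
    cases k with
    | zero => exact hx0
    | succ k => exact hxmem k
  have hmuk : ∀ k j, 0 ≤ mu k j := by
    intro k
    induction k with
    | zero => exact hmu0
    | succ k ih => intro j; rw [hmu]; exact le_max_left _ _
  have hν0 : ∀ k j, 0 ≤ ν (k+1) j := fun k j => by rw [hν]; exact le_max_left _ _
  -- saddle point consequences
  have hPb : (∑ i, A i (xs i)) = b := by
    have h := hL1 (ls + ((∑ i, A i (xs i)) - b)) ms hms0
    simp only [lagrangian, inner_add_left] at h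
    have h2 : (inner ℝ ((∑ i, A i (xs i)) - b) ((∑ i, A i (xs i)) - b) : ℝ) ≤ 0 := by linarith
    have h3 := real_inner_self_nonpos.mp h2
    rwa [sub_eq_zero] at h3
  have hss0 : ∀ j, (∑ i, g j i (xs i)) ≤ 0 := by
    intro j
    have hmu' : ∀ j', 0 ≤ ms j' + (if j' = j then (1:ℝ) else 0) :=
      fun j' => add_nonneg (hms0 j') (by positivity)
    have h := hL1 ls (WithLp.toLp 2 (fun j' => ms j' + if j' = j then (1:ℝ) else 0)) hmu'
    simp only [lagrangian, PiLp.toLp_apply, add_mul, Finset.sum_add_distrib, ite_mul, one_mul, zero_mul,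
      Finset.sum_ite_eq', Finset.mem_univ, if_true] at h
    linarith
  have hcs : ∀ j, ms j * (∑ i, g j i (xs i)) = 0 := by
    have h := hL1 ls (0 : EuclideanSpace ℝ (Fin M)) (fun j => le_rfl)
    simp only [lagrangian] at h
    have hz : ∀ j ∈ Finset.univ, (0 : EuclideanSpace ℝ (Fin M)) j * (∑ i, g j i (xs i)) = 0 :=
      fun j _ => by simp
    rw [Finset.sum_congr rfl hz, Finset.sum_const, smul_zero] at h
    have hle : ∀ j ∈ Finset.univ, ms j * (∑ i, g j i (xs i)) ≤ 0 :=
      fun j _ => mul_nonpos_of_nonneg_of_nonpos (hms0 j) (hss0 j)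
    have hsum0 : ∑ j, ms j * (∑ i, g j i (xs i)) = 0 :=
      le_antisymm (Finset.sum_nonpos hle) (by linarith)
    intro j
    exact (Finset.sum_eq_zero_iff_of_nonpos hle).mp hsum0 j (Finset.mem_univ j)
  have hδ : 0 < 1 - (1-ε)^2 := by nlinarith
  have hQ0 : ∀ k, (0:ℝ) ≤ ∑ i, ‖x (k+1) i - x k i‖^2 :=
    fun k => Finset.sum_nonneg fun i _ => sq_nonneg _
    -- Step G1: bound on the corrector-predictor gap for λ
  have hG1 : ∀ k, ‖γ (k+1) - lam (k+1)‖^2 ≤ (1-ε)*ρ*Amax * (∑ i, ‖x (k+1) i - x k i‖^2) := by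
      intro k
      have hge : γ (k+1) - lam (k+1) = ρ • (∑ i, (A i (x k i) - A i (x (k+1) i))) := by
        rw [hγ, hlam, Finset.sum_sub_distrib, smul_sub, smul_sub, smul_sub]
        abel
      have h1 : ‖γ (k+1) - lam (k+1)‖ ≤ ρ * (Amax * ∑ i, ‖x (k+1) i - x k i‖) := by
        rw [hge, norm_smul, Real.norm_eq_abs, abs_of_pos hρ0]
        refine mul_le_mul_of_nonneg_left ?_ hρ0.le
        calc ‖∑ i, (A i (x k i) - A i (x (k+1) i))‖
            ≤ ∑ i, ‖A i (x k i) - A i (x (k+1) i)‖ := norm_sum_le _ _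
          _ ≤ ∑ i, Amax * ‖x (k+1) i - x k i‖ := by
              refine Finset.sum_le_sum fun i _ => ?_
              rw [← map_sub]
              calc ‖A i (x k i - x (k+1) i)‖ ≤ ‖A i‖ * ‖x k i - x (k+1) i‖ :=
                    (A i).le_opNorm _
                _ ≤ Amax * ‖x (k+1) i - x k i‖ := by
                    rw [norm_sub_rev]
                    exact mul_le_mul_of_nonneg_right (hAmax i) (norm_nonneg _)
          _ = Amax * ∑ i, ‖x (k+1) i - x k i‖ := (Finset.mul_sum _ _ _).symm
      have h2 : ‖γ (k+1) - lam (k+1)‖^2 ≤ (ρ * (Amax * ∑ i, ‖x (k+1) i - x k i‖))^2 :=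
        pow_le_pow_left₀ (norm_nonneg _) h1 2
      have hsum : (∑ i, ‖x (k+1) i - x k i‖)^2 ≤ (N:ℝ) * ∑ i, ‖x (k+1) i - x k i‖^2 := by
        have := sq_sum_le_card_mul_sum_sq (s := Finset.univ)
          (f := fun i => ‖x (k+1) i - x k i‖)
        simpa using this
      have h3 : (ρ * (Amax * ∑ i, ‖x (k+1) i - x k i‖))^2
          ≤ ρ^2 * Amax^2 * ((N:ℝ) * ∑ i, ‖x (k+1) i - x k i‖^2) := by
        have := mul_le_mul_of_nonneg_left hsum (by positivity : (0:ℝ) ≤ ρ^2 * Amax^2)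
        nlinarith [this]
      have h4 : ρ^2 * Amax^2 * ((N:ℝ) * ∑ i, ‖x (k+1) i - x k i‖^2)
          ≤ (1-ε)*ρ*Amax * (∑ i, ‖x (k+1) i - x k i‖^2) := by
        have h5 := mul_le_mul_of_nonneg_right hb2
          (mul_nonneg (mul_nonneg hρ0.le hA0.le) (hQ0 k))
        nlinarith [h5]
      linarith
    -- Step G3: bound on the inequality-constraint residual differences
  have hG2 : ∀ k j, |(∑ i, g j i (x k i)) - (∑ i, g j i (x (k+1) i))|
        ≤ Lmax * ∑ i, ‖x (k+1) i - x k i‖ := by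
      intro k j
      rw [← Finset.sum_sub_distrib]
      calc |∑ i, (g j i (x k i) - g j i (x (k+1) i))|
          ≤ ∑ i, |g j i (x k i) - g j i (x (k+1) i)| := Finset.abs_sum_le_sum_abs _ _
        _ ≤ ∑ i, Lmax * ‖x (k+1) i - x k i‖ := by
            refine Finset.sum_le_sum fun i _ => ?_
            calc |g j i (x k i) - g j i (x (k+1) i)|
                ≤ Lc j i * ‖x k i - x (k+1) i‖ :=
                  hLip j i (x k i) (hxX k i) (x (k+1) i) (hxmem k i)
              _ ≤ Lmax * ‖x (k+1) i - x k i‖ := by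
                  rw [norm_sub_rev]
                  exact mul_le_mul_of_nonneg_right (hLmax j i) (norm_nonneg _)
        _ = Lmax * ∑ i, ‖x (k+1) i - x k i‖ := (Finset.mul_sum _ _ _).symm
  have hG3 : ∀ k, ρ^2*(∑ j, ((∑ i, g j i (x k i)) - (∑ i, g j i (x (k+1) i)))^2)
        ≤ (1-ε)*ρ*((M:ℝ)*Lmax) * (∑ i, ‖x (k+1) i - x k i‖^2) := by
      intro k
      have hsum : (∑ i, ‖x (k+1) i - x k i‖)^2 ≤ (N:ℝ) * ∑ i, ‖x (k+1) i - x k i‖^2 := by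
        have := sq_sum_le_card_mul_sum_sq (s := Finset.univ)
          (f := fun i => ‖x (k+1) i - x k i‖)
        simpa using this
      have h1 : ∀ j ∈ Finset.univ, ((∑ i, g j i (x k i)) - (∑ i, g j i (x (k+1) i)))^2
          ≤ Lmax^2 * ((N:ℝ) * ∑ i, ‖x (k+1) i - x k i‖^2) := by
        intro j _
        have h2 := hG2 k j
        have h3 : ((∑ i, g j i (x k i)) - (∑ i, g j i (x (k+1) i)))^2
            ≤ (Lmax * ∑ i, ‖x (k+1) i - x k i‖)^2 := by
          rw [← sq_abs]
          exact pow_le_pow_left₀ (abs_nonneg _) h2 2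
        have h4 := mul_le_mul_of_nonneg_left hsum (by positivity : (0:ℝ) ≤ Lmax^2)
        nlinarith [h3, h4]
      have h5 := Finset.sum_le_sum h1
      rw [Finset.sum_const] at h5
      simp only [Finset.card_univ, Fintype.card_fin, nsmul_eq_mul] at h5
      have h6 : ρ^2*(∑ j, ((∑ i, g j i (x k i)) - (∑ i, g j i (x (k+1) i)))^2)
          ≤ ρ^2*((M:ℝ) * (Lmax^2 * ((N:ℝ) * ∑ i, ‖x (k+1) i - x k i‖^2))) :=
        mul_le_mul_of_nonneg_left h5 (by positivity)
      have h7 := mul_le_mul_of_nonneg_right hb3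
        (mul_nonneg (mul_nonneg (mul_nonneg hρ0.le hMc) hL0.le) (hQ0 k))
      nlinarith [h6, h7]
  -- the key one-step estimate
  have key : ∀ k,
      (∑ i, ‖xs i - x (k+1) i‖^2) + ‖lam (k+1) - ls‖^2 + (∑ j, (mu (k+1) j - ms j)^2)
        + (1 - (1-ε)^2) * (∑ i, ‖x (k+1) i - x k i‖^2)
        + ‖γ (k+1) - lam k‖^2 + (∑ j, (ν (k+1) j - mu k j)^2)
      ≤ (∑ i, ‖xs i - x k i‖^2) + ‖lam k - ls‖^2 + (∑ j, (mu k j - ms j)^2) := by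
    intro k
    -- Step A: strong convexity of the proximal subproblem, per block
    have hA : ∀ i,
        f i (x (k+1) i) + (inner ℝ (γ (k+1)) (A i (x (k+1) i)) : ℝ)
          + (∑ j, ν (k+1) j * g j i (x (k+1) i))
          + 1/(2*ρ) * ‖x (k+1) i - x k i‖^2 + 1/(2*ρ) * ‖xs i - x (k+1) i‖^2
        ≤ f i (xs i) + (inner ℝ (γ (k+1)) (A i (xs i)) : ℝ)
          + (∑ j, ν (k+1) j * g j i (xs i)) + 1/(2*ρ) * ‖xs i - x k i‖^2 := by
      intro i
      refine strong_min
        (fun y => f i y + (inner ℝ (γ (k+1)) (A i y) : ℝ) + ∑ j, ν (k+1) j * g j i y)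
        (X i) (hX i).2 (1/(2*ρ)) (by positivity) (x k i) (x (k+1) i) (xs i)
        (hxmem k i) (hxsX i) ?_ (fun y hy => hxmin k i y hy)
      intro t ht0 ht1
      simp only
      have hy : x (k+1) i + t • (xs i - x (k+1) i) = (1-t) • x (k+1) i + t • xs i := by
        rw [sub_smul, one_smul, smul_sub]; abel
      rw [hy]
      have hf' := (hf i).2.2 (Set.mem_univ (x (k+1) i)) (Set.mem_univ (xs i))
        (by linarith : (0:ℝ) ≤ 1 - t) ht0 (by ring)
      simp only [smul_eq_mul] at hf'
      have hinner : (inner ℝ (γ (k+1)) (A i ((1-t) • x (k+1) i + t • xs i)) : ℝ)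
          = (1-t) * (inner ℝ (γ (k+1)) (A i (x (k+1) i)) : ℝ)
            + t * (inner ℝ (γ (k+1)) (A i (xs i)) : ℝ) := by
        rw [map_add, map_smul, map_smul, inner_add_right, real_inner_smul_right,
          real_inner_smul_right]
      have hgs : (∑ j, ν (k+1) j * g j i ((1-t) • x (k+1) i + t • xs i))
          ≤ (1-t) * (∑ j, ν (k+1) j * g j i (x (k+1) i))
            + t * (∑ j, ν (k+1) j * g j i (xs i)) := by
        rw [Finset.mul_sum, Finset.mul_sum, ← Finset.sum_add_distrib]
        refine Finset.sum_le_sum fun j _ => ?_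
        have hgc := (hg j i).2.2 (Set.mem_univ (x (k+1) i)) (Set.mem_univ (xs i))
          (by linarith : (0:ℝ) ≤ 1 - t) ht0 (by ring)
        simp only [smul_eq_mul] at hgc
        have h2 := mul_le_mul_of_nonneg_left hgc (hν0 k j)
        nlinarith [h2]
      have hring : (1-t) * (f i (x (k+1) i) + (inner ℝ (γ (k+1)) (A i (x (k+1) i)) : ℝ)
            + ∑ j, ν (k+1) j * g j i (x (k+1) i))
          + t * (f i (xs i) + (inner ℝ (γ (k+1)) (A i (xs i)) : ℝ)
            + ∑ j, ν (k+1) j * g j i (xs i))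
          = ((1-t) * f i (x (k+1) i) + t * f i (xs i))
            + ((1-t) * (inner ℝ (γ (k+1)) (A i (x (k+1) i)) : ℝ)
              + t * (inner ℝ (γ (k+1)) (A i (xs i)) : ℝ))
            + ((1-t) * (∑ j, ν (k+1) j * g j i (x (k+1) i))
              + t * (∑ j, ν (k+1) j * g j i (xs i))) := by ring
      rw [hring]
      linarith [hf', hgs, le_of_eq hinner]
    -- Step B: sum over blocks
    have hB : (∑ i, f i (x (k+1) i)) + (inner ℝ (γ (k+1)) (∑ i, A i (x (k+1) i)) : ℝ)
        + (∑ j, ν (k+1) j * ∑ i, g j i (x (k+1) i))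
        + 1/(2*ρ) * (∑ i, ‖x (k+1) i - x k i‖^2)
        + 1/(2*ρ) * (∑ i, ‖xs i - x (k+1) i‖^2)
      ≤ (∑ i, f i (xs i)) + (inner ℝ (γ (k+1)) (∑ i, A i (xs i)) : ℝ)
        + (∑ j, ν (k+1) j * ∑ i, g j i (xs i))
        + 1/(2*ρ) * (∑ i, ‖xs i - x k i‖^2) := by
      have h := Finset.sum_le_sum (fun i (_ : i ∈ Finset.univ) => hA i)
      have e1 : ∀ y : ∀ i, EuclideanSpace ℝ (Fin (n i)),
          (∑ i, (inner ℝ (γ (k+1)) (A i (y i)) : ℝ)) = (inner ℝ (γ (k+1)) (∑ i, A i (y i)) : ℝ) :=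
        fun y => (inner_sum Finset.univ (fun i => A i (y i)) (γ (k+1))).symm
      have e2 : ∀ y : ∀ i, EuclideanSpace ℝ (Fin (n i)),
          (∑ i, ∑ j, ν (k+1) j * g j i (y i)) = ∑ j, ν (k+1) j * ∑ i, g j i (y i) := by
        intro y
        rw [Finset.sum_comm]
        exact Finset.sum_congr rfl fun j _ => (Finset.mul_sum _ _ _).symm
      simp only [Finset.sum_add_distrib] at h
      rw [e1 (x (k+1)), e1 xs, e2 (x (k+1)), e2 xs, ← Finset.mul_sum, ← Finset.mul_sum,
        ← Finset.mul_sum] at h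
      exact h
    -- Step C: saddle point inequality at x (k+1)
    have hC := hL2 (x (k+1)) (hxmem k)
    simp only [lagrangian] at hC
    rw [hPb] at hB hC
    -- Step D: combine B and C and multiply by 2ρ
    have hBC : (inner ℝ (γ (k+1) - ls) ((∑ i, A i (x (k+1) i)) - b) : ℝ)
        + (∑ j, (ν (k+1) j - ms j) * ((∑ i, g j i (x (k+1) i)) - ∑ i, g j i (xs i)))
      ≤ 1/(2*ρ) * ((∑ i, ‖xs i - x k i‖^2) - (∑ i, ‖xs i - x (k+1) i‖^2)
          - (∑ i, ‖x (k+1) i - x k i‖^2)) := by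
      have h1 : (inner ℝ (γ (k+1) - ls) ((∑ i, A i (x (k+1) i)) - b) : ℝ)
          = (inner ℝ (γ (k+1)) (∑ i, A i (x (k+1) i)) : ℝ) - (inner ℝ (γ (k+1)) b : ℝ)
            - (inner ℝ ls ((∑ i, A i (x (k+1) i)) - b) : ℝ) := by
        simp [inner_sub_left, inner_sub_right]; ring
      have h2 : (∑ j, (ν (k+1) j - ms j) * ((∑ i, g j i (x (k+1) i)) - ∑ i, g j i (xs i)))
          = (∑ j, ν (k+1) j * ∑ i, g j i (x (k+1) i)) - (∑ j, ν (k+1) j * ∑ i, g j i (xs i))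
            - (∑ j, ms j * ∑ i, g j i (x (k+1) i)) + (∑ j, ms j * ∑ i, g j i (xs i)) := by
        simp only [sub_mul, mul_sub, Finset.sum_sub_distrib, Finset.sum_add_distrib]
        ring
      have h3 : (inner ℝ ls (b - b) : ℝ) = 0 := by simp
      rw [h1, h2]
      linarith [hB, hC]
    have hD : 2*ρ*(inner ℝ (γ (k+1) - ls) ((∑ i, A i (x (k+1) i)) - b) : ℝ)
        + 2*ρ*(∑ j, (ν (k+1) j - ms j) * ((∑ i, g j i (x (k+1) i)) - ∑ i, g j i (xs i)))
      ≤ (∑ i, ‖xs i - x k i‖^2) - (∑ i, ‖xs i - x (k+1) i‖^2)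
          - (∑ i, ‖x (k+1) i - x k i‖^2) := by
      have h := mul_le_mul_of_nonneg_left hBC (by positivity : (0:ℝ) ≤ 2*ρ)
      have he : (2*ρ)*(1/(2*ρ) * ((∑ i, ‖xs i - x k i‖^2) - (∑ i, ‖xs i - x (k+1) i‖^2)
          - (∑ i, ‖x (k+1) i - x k i‖^2)))
          = (∑ i, ‖xs i - x k i‖^2) - (∑ i, ‖xs i - x (k+1) i‖^2)
          - (∑ i, ‖x (k+1) i - x k i‖^2) := by
        field_simp
      have hr : (2*ρ)*((inner ℝ (γ (k+1) - ls) ((∑ i, A i (x (k+1) i)) - b) : ℝ)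
          + (∑ j, (ν (k+1) j - ms j) * ((∑ i, g j i (x (k+1) i)) - ∑ i, g j i (xs i))))
          = 2*ρ*(inner ℝ (γ (k+1) - ls) ((∑ i, A i (x (k+1) i)) - b) : ℝ)
          + 2*ρ*(∑ j, (ν (k+1) j - ms j) * ((∑ i, g j i (x (k+1) i)) - ∑ i, g j i (xs i))) := by
        ring
      linarith [h, le_of_eq he, le_of_eq hr]
    -- Step E: exact identity for the multiplier λ
    have hlam' : lam (k+1) - lam k = ρ • ((∑ i, A i (x (k+1) i)) - b) := by
      rw [hlam]; abel
    have hE : 2*ρ*(inner ℝ (γ (k+1) - ls) ((∑ i, A i (x (k+1) i)) - b) : ℝ)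
        = ‖lam (k+1) - ls‖^2 - ‖lam k - ls‖^2 + ‖γ (k+1) - lam k‖^2
          - ‖γ (k+1) - lam (k+1)‖^2 := by
      have h4 := four_pt (γ (k+1)) (lam (k+1)) (lam k) ls
      rw [hlam', real_inner_smul_right] at h4
      linarith
    -- Step F: the multiplier μ estimate
    have hF : ∀ j ∈ Finset.univ,
        (mu (k+1) j - ms j)^2 - (mu k j - ms j)^2 + (ν (k+1) j - mu k j)^2
          - ρ^2*((∑ i, g j i (x k i)) - (∑ i, g j i (x (k+1) i)))^2
        ≤ 2*ρ*((ν (k+1) j - ms j) * ((∑ i, g j i (x (k+1) i)) - ∑ i, g j i (xs i))) := by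
      intro j _
      rw [hν, hmu]
      have := mu_key ρ (∑ i, g j i (x k i)) (∑ i, g j i (x (k+1) i)) (∑ i, g j i (xs i))
        (mu k j) (ms j) hρ0.le (hms0 j) (hss0 j) (hcs j)
      linarith
    have hFs := Finset.sum_le_sum hF
    have hsplit : (∑ j, ((mu (k+1) j - ms j)^2 - (mu k j - ms j)^2 + (ν (k+1) j - mu k j)^2
          - ρ^2*((∑ i, g j i (x k i)) - (∑ i, g j i (x (k+1) i)))^2))
        = (∑ j, (mu (k+1) j - ms j)^2) - (∑ j, (mu k j - ms j)^2)
          + (∑ j, (ν (k+1) j - mu k j)^2)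
          - ρ^2*(∑ j, ((∑ i, g j i (x k i)) - (∑ i, g j i (x (k+1) i)))^2) := by
      simp only [Finset.sum_add_distrib, Finset.sum_sub_distrib, Finset.mul_sum]
    have hmulsum : (∑ j, 2*ρ*((ν (k+1) j - ms j) * ((∑ i, g j i (x (k+1) i)) - ∑ i, g j i (xs i))))
        = 2*ρ*(∑ j, (ν (k+1) j - ms j) * ((∑ i, g j i (x (k+1) i)) - ∑ i, g j i (xs i))) :=
      (Finset.mul_sum _ _ _).symm
    rw [hsplit, hmulsum] at hFs
    -- final assembly of the key estimate
    have hb1Q := mul_le_mul_of_nonneg_right hb1 (hQ0 k)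
    have hb1Q' := mul_le_mul_of_nonneg_left hb1Q hε1'.le
    have hringf : (1-ε)*ρ*Amax * (∑ i, ‖x (k+1) i - x k i‖^2)
        + (1-ε)*ρ*((M:ℝ)*Lmax) * (∑ i, ‖x (k+1) i - x k i‖^2)
        = (1-ε)*(ρ * (Amax + (M:ℝ)*Lmax) * (∑ i, ‖x (k+1) i - x k i‖^2)) := by ring
    have hringf2 : (1-ε)*((1-ε) * (∑ i, ‖x (k+1) i - x k i‖^2))
        = (1-ε)^2 * (∑ i, ‖x (k+1) i - x k i‖^2) := by ring
    linarith [hD, hE, hFs, hG1 k, hG3 k, hb1Q', le_of_eq hringf, le_of_eq hringf2]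
  -- telescoping the energy
  have hE0 : ∀ k, (0:ℝ) ≤ (∑ i, ‖xs i - x k i‖^2) + ‖lam k - ls‖^2 + (∑ j, (mu k j - ms j)^2) :=
    fun k => by positivity
  have hd0 : ∀ k, (0:ℝ) ≤ (1 - (1-ε)^2) * (∑ i, ‖x (k+1) i - x k i‖^2)
      + ‖γ (k+1) - lam k‖^2 + (∑ j, (ν (k+1) j - mu k j)^2) := fun k => by
    have := hQ0 k
    have h2 : (0:ℝ) ≤ ∑ j, (ν (k+1) j - mu k j)^2 := Finset.sum_nonneg fun j _ => sq_nonneg _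
    nlinarith [sq_nonneg ‖γ (k+1) - lam k‖]
  have hsumle : ∀ K, (∑ k ∈ Finset.range K,
      ((1 - (1-ε)^2) * (∑ i, ‖x (k+1) i - x k i‖^2)
        + ‖γ (k+1) - lam k‖^2 + (∑ j, (ν (k+1) j - mu k j)^2)))
      ≤ (∑ i, ‖xs i - x 0 i‖^2) + ‖lam 0 - ls‖^2 + (∑ j, (mu 0 j - ms j)^2) := by
    have h2 : ∀ K, (∑ k ∈ Finset.range K,
        ((1 - (1-ε)^2) * (∑ i, ‖x (k+1) i - x k i‖^2)
          + ‖γ (k+1) - lam k‖^2 + (∑ j, (ν (k+1) j - mu k j)^2)))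
        + ((∑ i, ‖xs i - x K i‖^2) + ‖lam K - ls‖^2 + (∑ j, (mu K j - ms j)^2))
        ≤ (∑ i, ‖xs i - x 0 i‖^2) + ‖lam 0 - ls‖^2 + (∑ j, (mu 0 j - ms j)^2) := by
      intro K
      induction K with
      | zero => simp
      | succ K ih =>
        rw [Finset.sum_range_succ]
        have := key K
        linarith
    intro K
    linarith [h2 K, hE0 K]
  have hsummable : Summable (fun k => (1 - (1-ε)^2) * (∑ i, ‖x (k+1) i - x k i‖^2)
      + ‖γ (k+1) - lam k‖^2 + (∑ j, (ν (k+1) j - mu k j)^2)) :=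
    summable_of_sum_range_le hd0 hsumle
  have hdto := hsummable.tendsto_atTop_zero
  -- individual limits
  have hQto : Filter.Tendsto (fun k => ∑ i, ‖x (k+1) i - x k i‖^2) Filter.atTop (nhds 0) := by
    refine squeeze_zero (fun k => hQ0 k) (fun k => ?_) (by simpa using hdto.const_mul (1/(1 - (1-ε)^2)))
    have h2 : (0:ℝ) ≤ ∑ j, (ν (k+1) j - mu k j)^2 := Finset.sum_nonneg fun j _ => sq_nonneg _
    have hδ' : (0:ℝ) < 1/(1 - (1-ε)^2) := by positivity
    have he : (1/(1 - (1-ε)^2)) * ((1 - (1-ε)^2) * (∑ i, ‖x (k+1) i - x k i‖^2)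
        + ‖γ (k+1) - lam k‖^2 + (∑ j, (ν (k+1) j - mu k j)^2))
        = (∑ i, ‖x (k+1) i - x k i‖^2)
          + (1/(1 - (1-ε)^2)) * (‖γ (k+1) - lam k‖^2 + (∑ j, (ν (k+1) j - mu k j)^2)) := by
      field_simp
      ring
    rw [he]
    exact le_add_of_nonneg_right (mul_nonneg hδ'.le (add_nonneg (sq_nonneg _) h2))
  have hPlto : Filter.Tendsto (fun k => ‖γ (k+1) - lam k‖^2) Filter.atTop (nhds 0) := by
    refine squeeze_zero (fun k => sq_nonneg _) (fun k => ?_) hdto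
    have h2 : (0:ℝ) ≤ ∑ j, (ν (k+1) j - mu k j)^2 := Finset.sum_nonneg fun j _ => sq_nonneg _
    nlinarith [hQ0 k]
  have hPMto : Filter.Tendsto (fun k => ∑ j, (ν (k+1) j - mu k j)^2) Filter.atTop (nhds 0) := by
    refine squeeze_zero (fun k => Finset.sum_nonneg fun j _ => sq_nonneg _) (fun k => ?_) hdto
    nlinarith [hQ0 k, sq_nonneg ‖γ (k+1) - lam k‖]
  refine ⟨hQto, ?_, ?_, ?_, ?_⟩
  · -- ‖γ (k+1) - lam (k+1)‖ → 0
    have hsq : Filter.Tendsto (fun k => ‖γ (k+1) - lam (k+1)‖^2) Filter.atTop (nhds 0) := by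
      refine squeeze_zero (fun k => sq_nonneg _) (fun k => hG1 k)
        (by simpa using hQto.const_mul ((1-ε)*ρ*Amax))
    have he : (fun k => ‖γ (k+1) - lam (k+1)‖)
        = fun k => Real.sqrt (‖γ (k+1) - lam (k+1)‖^2) := by
      funext k; rw [Real.sqrt_sq (norm_nonneg _)]
    rw [he]
    exact sqrt_tendsto hsq
  · -- ‖ν (k+1) - mu (k+1)‖ → 0
    have hb : ∀ k, (∑ j, (ν (k+1) j - mu (k+1) j)^2)
        ≤ ρ^2*(∑ j, ((∑ i, g j i (x k i)) - (∑ i, g j i (x (k+1) i)))^2) := by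
      intro k
      rw [Finset.mul_sum]
      refine Finset.sum_le_sum fun j _ => ?_
      rw [hν, hmu]
      have habs : |max 0 (mu k j + ρ * ∑ i, g j i (x k i))
          - max 0 (mu k j + ρ * ∑ i, g j i (x (k+1) i))|
          ≤ |(mu k j + ρ * ∑ i, g j i (x k i)) - (mu k j + ρ * ∑ i, g j i (x (k+1) i))| := by
        rw [max_comm 0 (mu k j + ρ * ∑ i, g j i (x k i)),
          max_comm 0 (mu k j + ρ * ∑ i, g j i (x (k+1) i))]
        exact abs_max_sub_max_le_abs _ _ _
      have h3 : ((mu k j + ρ * ∑ i, g j i (x k i)) - (mu k j + ρ * ∑ i, g j i (x (k+1) i)))^2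
          = ρ^2 * ((∑ i, g j i (x k i)) - (∑ i, g j i (x (k+1) i)))^2 := by ring
      calc (max 0 (mu k j + ρ * ∑ i, g j i (x k i))
            - max 0 (mu k j + ρ * ∑ i, g j i (x (k+1) i)))^2
          = |max 0 (mu k j + ρ * ∑ i, g j i (x k i))
            - max 0 (mu k j + ρ * ∑ i, g j i (x (k+1) i))|^2 := (sq_abs _).symm
        _ ≤ |(mu k j + ρ * ∑ i, g j i (x k i)) - (mu k j + ρ * ∑ i, g j i (x (k+1) i))|^2 :=
            pow_le_pow_left₀ (abs_nonneg _) habs 2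
        _ = ρ^2 * ((∑ i, g j i (x k i)) - (∑ i, g j i (x (k+1) i)))^2 := by
            rw [sq_abs]; exact h3
    have hsq : Filter.Tendsto (fun k => ∑ j, (ν (k+1) j - mu (k+1) j)^2)
        Filter.atTop (nhds 0) := by
      refine squeeze_zero (fun k => Finset.sum_nonneg fun j _ => sq_nonneg _)
        (fun k => (hb k).trans ((hG3 k).trans (le_refl _)))
        (by simpa using hQto.const_mul ((1-ε)*ρ*((M:ℝ)*Lmax)))
    have he : (fun k => ‖ν (k+1) - mu (k+1)‖)
        = fun k => Real.sqrt (∑ j, (ν (k+1) j - mu (k+1) j)^2) := by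
      funext k
      rw [EuclideanSpace.norm_eq]
      congr 1
      refine Finset.sum_congr rfl fun j _ => ?_
      simp [Real.norm_eq_abs, sq_abs]
    rw [he]
    exact sqrt_tendsto hsq
  · -- ‖γ (k+1) - lam k‖ → 0
    have he : (fun k => ‖γ (k+1) - lam k‖)
        = fun k => Real.sqrt (‖γ (k+1) - lam k‖^2) := by
      funext k; rw [Real.sqrt_sq (norm_nonneg _)]
    rw [he]
    exact sqrt_tendsto hPlto
  · -- ‖ν (k+1) - mu k‖ → 0
    have he : (fun k => ‖ν (k+1) - mu k‖)
        = fun k => Real.sqrt (∑ j, (ν (k+1) j - mu k j)^2) := by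
      funext k
      rw [EuclideanSpace.norm_eq]
      congr 1
      refine Finset.sum_congr rfl fun j _ => ?_
      simp [Real.norm_eq_abs, sq_abs]
    rw [he]
    exact sqrt_tendsto hPMto
end

section
/- Assume the Lagrangian L has at least one saddle point, each g_{ji} is Lipschitz continuous on X_i with modulus L_{ji}, and let 0 < ε < 1 and 0 < ρ ≤ min{(1−ε)/(A_max + M·L_max), (1−ε)/(N·A_max), (1−ε)/(N·L_max)}. Let (x^k, λ^k, μ^k)_{k≥0} be generated by the N-block PCPM iteration with step size ρ from an arbitrary starting point (x^0, λ^0, μ^0) with x_i^0 ∈ X_i and μ^0 ∈ ℝ^M_{≥0}. Then the sequence converges: there exists a saddle point (x^∞, λ^∞, μ^∞) of L such that x_i^k → x_i^∞ for each i, λ^k → λ^∞, and μ^k → μ^∞ as k → ∞. -/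
open scoped BigOperators

/-- projection onto [0,∞) inequality -/
lemma proj_nonneg_ineq (p c : ℝ) (hc : 0 ≤ c) : (max 0 p - c) * (max 0 p - p) ≤ 0 := by
  rcases le_or_gt p 0 with h | h
  · rw [max_eq_left h]
    nlinarith
  · rw [max_eq_right h.le]; simp

lemma max_sub_max_abs_le (a b : ℝ) : |max 0 a - max 0 b| ≤ |a - b| := by
  simpa [max_comm] using abs_max_sub_max_le_abs a b 0

/-- polarization-type identity -/
lemma inner_three_point {E : Type*} [NormedAddCommGroup E] [InnerProductSpace ℝ E]
    (a b c : E) :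
    (inner ℝ (a - c) (a - b) : ℝ) = (‖a - c‖^2 - ‖b - c‖^2 + ‖a - b‖^2) / 2 := by
  have h1 := norm_sub_sq_real a c
  have h2 := norm_sub_sq_real b c
  have h3 := norm_sub_sq_real a b
  have e : (inner ℝ (a - c) (a - b) : ℝ)
      = ‖a‖^2 - inner ℝ a b - inner ℝ a c + inner ℝ b c := by
    simp [inner_sub_left, inner_sub_right, real_inner_self_eq_norm_sq,
      real_inner_comm a b, real_inner_comm a c, real_inner_comm b c]
    ring
  rw [e]
  have hba : (inner ℝ b a : ℝ) = inner ℝ a b := real_inner_comm a b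
  have hcb : (inner ℝ c b : ℝ) = inner ℝ b c := real_inner_comm b c
  have hca : (inner ℝ c a : ℝ) = inner ℝ a c := real_inner_comm a c
  nlinarith [h1, h2, h3]

/-- strong convexity identity for the squared norm -/
lemma comb_norm_sq {E : Type*} [NormedAddCommGroup E] [InnerProductSpace ℝ E]
    (a b z : E) (t : ℝ) :
    ‖(1 - t) • a + t • b - z‖^2
      = (1 - t) * ‖a - z‖^2 + t * ‖b - z‖^2 - t * (1 - t) * ‖a - b‖^2 := by
  set p := a - z with hp
  set q := b - z with hq
  have h0 : (1 - t) • a + t • b - z = p + t • (q - p) := by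
    rw [hp, hq]; module
  have hab : a - b = p - q := by rw [hp, hq]; abel
  rw [h0, hab, norm_add_sq_real, inner_smul_right, norm_smul, Real.norm_eq_abs, mul_pow,
    sq_abs, norm_sub_sq_real q p, norm_sub_sq_real p q, inner_sub_right,
    real_inner_self_eq_norm_sq, real_inner_comm p q]
  ring

/-- From approximate minimality with quadratic penalty, get exact minimality (t → 0 trick). -/
lemma min_of_quad_min {E : Type*} [NormedAddCommGroup E] [InnerProductSpace ℝ E]
    {X : Set E} (hX : Convex ℝ X) {F : E → ℝ} (hF : ConvexOn ℝ Set.univ F)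
    {c : ℝ} (hc : 0 ≤ c) {u : E} (hu : u ∈ X)
    (h : ∀ y ∈ X, F u ≤ F y + c * ‖y - u‖^2) :
    ∀ y ∈ X, F u ≤ F y := by
  intro y hy
  have key : ∀ t : ℝ, 0 < t → t ≤ 1 → F u ≤ F y + t * (c * ‖y - u‖^2) := by
    intro t ht0 ht1
    have hmem : (1 - t) • u + t • y ∈ X := hX hu hy (by linarith) ht0.le (by ring)
    have h1 := h _ hmem
    have hconv := hF.2 (Set.mem_univ u) (Set.mem_univ y) (by linarith : (0:ℝ) ≤ 1 - t)
      ht0.le (by ring)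
    have hnorm : ‖(1 - t) • u + t • y - u‖^2 = t^2 * ‖y - u‖^2 := by
      have : (1 - t) • u + t • y - u = t • (y - u) := by module
      rw [this, norm_smul, mul_pow, Real.norm_eq_abs, sq_abs]
    rw [hnorm] at h1
    have : F u ≤ (1 - t) * F u + t * F y + c * (t^2 * ‖y-u‖^2) := le_trans h1 (by
      have := hconv; simp only [smul_eq_mul] at this; linarith)
    have hFu : t * F u ≤ t * F y + c * t^2 * ‖y-u‖^2 := by nlinarith
    exact le_of_mul_le_mul_left (by nlinarith) ht0
  refine le_of_forall_pos_le_add fun η hη => ?_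
  set c' := c * ‖y - u‖^2 with hc'
  have hc'0 : 0 ≤ c' := by positivity
  have ht : 0 < min 1 (η / (c' + 1)) := lt_min one_pos (by positivity)
  have h2 := key _ ht (min_le_left _ _)
  have : min 1 (η / (c' + 1)) * c' ≤ η := by
    calc min 1 (η / (c' + 1)) * c' ≤ (η / (c' + 1)) * c' := by
          apply mul_le_mul_of_nonneg_right (min_le_right _ _) hc'0
      _ ≤ η := by
          rw [div_mul_eq_mul_div, div_le_iff₀ (by positivity)]
          nlinarith
  linarith

/-- Three-point (strongly convex prox) inequality from minimality. -/
lemma prox_three_point {E : Type*} [NormedAddCommGroup E] [InnerProductSpace ℝ E]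
    {X : Set E} (hX : Convex ℝ X) {F : E → ℝ} (hF : ConvexOn ℝ Set.univ F)
    {ρ : ℝ} (hρ : 0 < ρ) {u w : E} (hu : u ∈ X)
    (hmin : ∀ y ∈ X, F u + 1/(2*ρ) * ‖u - w‖^2 ≤ F y + 1/(2*ρ) * ‖y - w‖^2) :
    ∀ y ∈ X, F u + 1/(2*ρ) * ‖u - w‖^2 + 1/(2*ρ) * ‖u - y‖^2
      ≤ F y + 1/(2*ρ) * ‖y - w‖^2 := by
  intro y hy
  -- G(z) := F z + 1/(2ρ)‖z - w‖² is (1/ρ)-strongly convex; use t-trick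
  set c := 1/(2*ρ) with hcdef
  have hc : 0 < c := by positivity
  have key : ∀ t : ℝ, 0 < t → t ≤ 1 →
      F u + c * ‖u - w‖^2 + (1 - t) * (c * ‖u - y‖^2) ≤ F y + c * ‖y - w‖^2 := by
    intro t ht0 ht1
    have hmem : (1 - t) • u + t • y ∈ X := hX hu hy (by linarith) ht0.le (by ring)
    have h1 := hmin _ hmem
    have hconv := hF.2 (Set.mem_univ u) (Set.mem_univ y) (by linarith : (0:ℝ) ≤ 1 - t)
      ht0.le (by ring)
    simp only [smul_eq_mul] at hconv
    have hq := comb_norm_sq u y w t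
    -- h1 : F u + c‖u-w‖² ≤ F(comb) + c * ‖comb - w‖²
    have h2 : F u + c * ‖u - w‖^2
        ≤ (1-t) * F u + t * F y + c * ((1-t)*‖u-w‖^2 + t*‖y-w‖^2 - t*(1-t)*‖u-y‖^2) := by
      calc F u + c * ‖u - w‖^2 ≤ F ((1-t) • u + t • y) + c * ‖(1-t) • u + t • y - w‖^2 :=
            h1
        _ ≤ (1-t) * F u + t * F y + c * ((1-t)*‖u-w‖^2 + t*‖y-w‖^2 - t*(1-t)*‖u-y‖^2) := by
            rw [hq] at *; linarith
    -- divide by t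
    have h3 : t * (F u + c * ‖u-w‖^2 + (1-t) * (c * ‖u-y‖^2))
        ≤ t * (F y + c * ‖y-w‖^2) := by nlinarith
    exact le_of_mul_le_mul_left (by linarith [h3]) ht0
  refine le_of_forall_pos_le_add fun η hη => ?_
  set c' := c * ‖u - y‖^2 with hc'
  have hc'0 : 0 ≤ c' := by positivity
  have ht : 0 < min 1 (η / (c' + 1)) := lt_min one_pos (by positivity)
  have h2 := key _ ht (min_le_left _ _)
  have h4 : min 1 (η / (c' + 1)) * c' ≤ η := by
    calc min 1 (η / (c' + 1)) * c' ≤ (η / (c' + 1)) * c' :=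
          mul_le_mul_of_nonneg_right (min_le_right _ _) hc'0
      _ ≤ η := by
          rw [div_mul_eq_mul_div, div_le_iff₀ (by positivity)]
          nlinarith
  nlinarith [h2]

section Feas
variable {N M m : ℕ} {n : Fin N → ℕ}
    {f : ∀ i, EuclideanSpace ℝ (Fin (n i)) → ℝ}
    {A : ∀ i, EuclideanSpace ℝ (Fin (n i)) →L[ℝ] EuclideanSpace ℝ (Fin m)}
    {b : EuclideanSpace ℝ (Fin m)}
    {g : Fin M → ∀ i, EuclideanSpace ℝ (Fin (n i)) → ℝ}
    {X : ∀ i, Set (EuclideanSpace ℝ (Fin (n i)))}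
    {xs : ∀ i, EuclideanSpace ℝ (Fin (n i))}
    {ls : EuclideanSpace ℝ (Fin m)} {ms : EuclideanSpace ℝ (Fin M)}

lemma saddle_feas (hs : IsSaddlePoint f A b g X xs ls ms) :
    (∑ i, A i (xs i)) = b ∧ (∀ j, (∑ i, g j i (xs i)) ≤ 0) ∧
      (∀ j, ms j * (∑ i, g j i (xs i)) = 0) := by
  obtain ⟨hxs, hms, h1, _h2⟩ := hs
  set S := (∑ i, A i (xs i)) - b with hS
  set G := fun j => (∑ i, g j i (xs i)) with hG
  have key : ∀ (lam : EuclideanSpace ℝ (Fin m)) (mu : EuclideanSpace ℝ (Fin M)),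
      (∀ j, 0 ≤ mu j) →
      (inner ℝ lam S : ℝ) - (inner ℝ ls S : ℝ) + (∑ j, mu j * G j) - (∑ j, ms j * G j) ≤ 0 := by
    intro lam mu hmu
    have := h1 lam mu hmu
    simp only [lagrangian, ← hS, ← hG] at this
    linarith
  have hSzero : S = 0 := by
    have h := key (ls + S) ms hms
    rw [inner_add_left] at h
    have : (inner ℝ S S : ℝ) ≤ 0 := by linarith
    have h2 : (0:ℝ) ≤ inner ℝ S S := real_inner_self_nonneg
    have : (inner ℝ S S : ℝ) = 0 := le_antisymm this h2
    exact inner_self_eq_zero.mp (by exact_mod_cast this)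
  have hGle : ∀ j, G j ≤ 0 := by
    intro j
    have h := key ls (ms + EuclideanSpace.single j (1:ℝ)) (by
      intro j'
      simp only [PiLp.add_apply, EuclideanSpace.single_apply]
      have := hms j'
      positivity)
    have he : (∑ j', (ms + EuclideanSpace.single j (1:ℝ)) j' * G j')
        = (∑ j', ms j' * G j') + G j := by
      simp only [PiLp.add_apply, EuclideanSpace.single_apply, add_mul, ite_mul, one_mul,
        zero_mul, Finset.sum_add_distrib]
      rw [Finset.sum_ite_eq' Finset.univ j G]
      simp
    rw [he] at h
    linarith
  have hcomp : ∀ j, ms j * G j = 0 := by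
    have h := key ls 0 (fun j => le_refl 0)
    simp only [PiLp.zero_apply, zero_mul, Finset.sum_const_zero] at h
    have hsum : 0 ≤ ∑ j, ms j * G j := by linarith
    have hterm : ∀ j ∈ Finset.univ, ms j * G j ≤ 0 :=
      fun j _ => mul_nonpos_of_nonneg_of_nonpos (hms j) (hGle j)
    have hz : (∑ j, ms j * G j) = 0 := le_antisymm (Finset.sum_nonpos hterm) hsum
    intro j
    exact (Finset.sum_eq_zero_iff_of_nonpos hterm).mp hz j (Finset.mem_univ j)
  have hb : (∑ i, A i (xs i)) = b := by
    rw [hS] at hSzero; exact sub_eq_zero.mp hSzero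
  exact ⟨hb, hGle, hcomp⟩

lemma convexOn_finset_sum_s8 {E ι : Type*} [AddCommGroup E] [Module ℝ E] {s : Set E}
    (hs : Convex ℝ s) (t : Finset ι) {F : ι → E → ℝ}
    (h : ∀ j ∈ t, ConvexOn ℝ s (F j)) :
    ConvexOn ℝ s (fun z => ∑ j ∈ t, F j z) := by
  classical
  induction t using Finset.induction_on with
  | empty => simpa using convexOn_const 0 hs
  | @insert a t ha ih =>
    simp only [Finset.sum_insert ha]
    exact (h a (Finset.mem_insert_self a t)).add
      (ih fun j hj => h j (Finset.mem_insert_of_mem hj))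

lemma obj_convex (hf : ∀ i, Continuous (f i) ∧ ConvexOn ℝ Set.univ (f i))
    (hg : ∀ j i, Continuous (g j i) ∧ ConvexOn ℝ Set.univ (g j i))
    (i : Fin N) (γ : EuclideanSpace ℝ (Fin m)) (ν : EuclideanSpace ℝ (Fin M))
    (hν : ∀ j, 0 ≤ ν j) :
    ConvexOn ℝ Set.univ (fun z => f i z + (inner ℝ γ (A i z) : ℝ) + ∑ j, ν j * g j i z) := by
  refine ((hf i).2.add ?_).add ?_
  · refine ⟨convex_univ, fun x _ y _ a c ha hc hac => ?_⟩
    simp only [map_add, map_smul, inner_add_right, inner_smul_right, smul_eq_mul]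
    exact le_of_eq (by push_cast; ring)
  · have : ∀ j ∈ Finset.univ, ConvexOn ℝ (Set.univ : Set (EuclideanSpace ℝ (Fin (n i))))
        (fun z => ν j * g j i z) := by
      intro j _
      simpa [smul_eq_mul] using (hg j i).2.smul (hν j)
    exact convexOn_finset_sum_s8 convex_univ Finset.univ this
end Feas

lemma sum_mul_le_half {ι : Type*} [Fintype ι] (a : ι → ℝ) (c : ℝ) :
    (∑ i, a i) * c ≤ (1/2) * ((∑ i, (a i)^2) + (Fintype.card ι) * c^2) := by
  rw [Finset.sum_mul]
  calc ∑ i, a i * c ≤ ∑ i : ι, (1/2)*((a i)^2 + c^2) :=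
        Finset.sum_le_sum fun i _ => by nlinarith [sq_nonneg (a i - c)]
    _ = (1/2)*((∑ i, (a i)^2) + (Fintype.card ι) * c^2) := by
        rw [← Finset.mul_sum, Finset.sum_add_distrib, Finset.sum_const, Finset.card_univ,
          nsmul_eq_mul]


set_option maxHeartbeats 1000000 in
lemma mu_step (ρ ε a nu mup ms gu gw B : ℝ) (hρ0 : 0 < ρ) (hε0 : 0 < ε)
    (h1 : (mup - ms)*(mup - (a + ρ*gu)) ≤ 0)
    (h2 : (nu - mup)*(nu - (a + ρ*gw)) ≤ 0)
    (h3 : |nu - mup| ≤ ρ*B) (h4 : |gw - gu| ≤ B) :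
    (mup-ms)^2 - (a-ms)^2 + (ε/(ε+2))*(mup-a)^2 - (1+ε/2)*(ρ^2*B^2)
      ≤ 2*ρ*((nu-ms)*gu) := by
  have h3' : (nu - mup)^2 ≤ ρ^2*B^2 := by
    nlinarith [h3, abs_nonneg (nu - mup), sq_abs (nu - mup)]
  have h4' : (gw - gu)^2 ≤ B^2 := by
    nlinarith [h4, abs_nonneg (gw - gu), sq_abs (gw - gu)]
  have hA : (mup-ms)^2 - (a-ms)^2 + (mup-a)^2 ≤ 2*ρ*((mup-ms)*gu) := by nlinarith [h1]
  have hB' : (nu-mup)^2 + (nu-a)^2 - (mup-a)^2 ≤ 2*ρ*((nu-mup)*gw) := by nlinarith [h2]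
  have hC : -((nu-mup)^2) - ρ^2*((gw-gu)^2) ≤ 2*ρ*((nu-mup)*(gu-gw)) := by
    nlinarith [sq_nonneg (nu - mup + ρ*(gu-gw))]
  have hnn : (0:ℝ) ≤ ε*(ε+2)/2 := by nlinarith [hε0.le]
  have h3'' : (mup - nu)^2 ≤ ρ^2*B^2 := by nlinarith [h3']
  have hc3 : (ε*(ε+2)/2) * (mup-nu)^2 ≤ (ε*(ε+2)/2) * (ρ^2*B^2) :=
    mul_le_mul_of_nonneg_left h3'' hnn
  have hD : (ε/(ε+2))*(mup-a)^2 ≤ (nu-a)^2 + (ε/2)*(ρ^2*B^2) := by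
    rw [div_mul_eq_mul_div, div_le_iff₀ (by linarith)]
    nlinarith [sq_nonneg (2*(nu-a) - ε*(mup-nu)), hc3]
  have hE : ρ^2*((gw-gu)^2) ≤ ρ^2*(B^2) := by nlinarith [h4', sq_nonneg ρ]
  have hEq : 2*ρ*((nu-ms)*gu)
      = 2*ρ*((mup-ms)*gu) + 2*ρ*((nu-mup)*gw) + 2*ρ*((nu-mup)*(gu-gw)) := by ring
  linarith [hA, hB', hC, hD, hE, hEq]

section Descent
variable {N M m : ℕ} {n : Fin N → ℕ}
    {f : ∀ i, EuclideanSpace ℝ (Fin (n i)) → ℝ}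
    {A : ∀ i, EuclideanSpace ℝ (Fin (n i)) →L[ℝ] EuclideanSpace ℝ (Fin m)}
    {b : EuclideanSpace ℝ (Fin m)}
    {g : Fin M → ∀ i, EuclideanSpace ℝ (Fin (n i)) → ℝ}
    {X : ∀ i, Set (EuclideanSpace ℝ (Fin (n i)))}

set_option maxHeartbeats 2000000 in
lemma pcpm_descent
    (hX : ∀ i, IsClosed (X i) ∧ Convex ℝ (X i))
    (hf : ∀ i, Continuous (f i) ∧ ConvexOn ℝ Set.univ (f i))
    (hg : ∀ j i, Continuous (g j i) ∧ ConvexOn ℝ Set.univ (g j i))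
    (Lc : Fin M → Fin N → ℝ)
    (hLip : ∀ j i, ∀ y ∈ X i, ∀ z ∈ X i, |g j i y - g j i z| ≤ Lc j i * ‖y - z‖)
    (Amax Lmax : ℝ) (hAmax : ∀ i, ‖A i‖ ≤ Amax) (hLmax : ∀ j i, Lc j i ≤ Lmax)
    (hA0 : 0 ≤ Amax) (hL0 : 0 ≤ Lmax)
    (ε : ℝ) (hε0 : 0 < ε) (hε1 : ε < 1) (ρ : ℝ) (hρ0 : 0 < ρ)
    (hd1 : ρ * (Amax + M * Lmax) ≤ 1 - ε)
    (hd2 : ρ * (N * Amax) ≤ 1 - ε)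
    (hd3 : ρ * (N * Lmax) ≤ 1 - ε)
    (x : ℕ → ∀ i, EuclideanSpace ℝ (Fin (n i)))
    (lam : ℕ → EuclideanSpace ℝ (Fin m)) (mu : ℕ → EuclideanSpace ℝ (Fin M))
    (γ : ℕ → EuclideanSpace ℝ (Fin m)) (ν : ℕ → EuclideanSpace ℝ (Fin M))
    (hγ : ∀ k, γ (k + 1) = lam k + ρ • ((∑ i, A i (x k i)) - b))
    (hν : ∀ k j, ν (k + 1) j = max 0 (mu k j + ρ * ∑ i, g j i (x k i)))
    (hxmem : ∀ k i, x (k + 1) i ∈ X i)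
    (hxmin : ∀ k i, ∀ y ∈ X i,
      f i (x (k + 1) i) + (inner ℝ (γ (k + 1)) (A i (x (k + 1) i)) : ℝ)
          + (∑ j, ν (k + 1) j * g j i (x (k + 1) i))
          + 1 / (2 * ρ) * ‖x (k + 1) i - x k i‖ ^ 2
        ≤ f i y + (inner ℝ (γ (k + 1)) (A i y) : ℝ) + (∑ j, ν (k + 1) j * g j i y)
          + 1 / (2 * ρ) * ‖y - x k i‖ ^ 2)
    (hlam : ∀ k, lam (k + 1) = lam k + ρ • ((∑ i, A i (x (k + 1) i)) - b))
    (hmu : ∀ k j, mu (k + 1) j = max 0 (mu k j + ρ * ∑ i, g j i (x (k + 1) i)))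
    (xs : ∀ i, EuclideanSpace ℝ (Fin (n i)))
    (ls : EuclideanSpace ℝ (Fin m)) (ms : EuclideanSpace ℝ (Fin M))
    (hs : IsSaddlePoint f A b g X xs ls ms)
    (k : ℕ) (hxk : ∀ i, x k i ∈ X i) (hmuk : ∀ j, 0 ≤ mu k j) :
    (∑ i, ‖x (k+1) i - xs i‖^2) + ‖lam (k+1) - ls‖^2 + (∑ j, (mu (k+1) j - ms j)^2)
      + (ε/3) * ((∑ i, ‖x (k+1) i - x k i‖^2) + ‖lam (k+1) - lam k‖^2
          + (∑ j, (mu (k+1) j - mu k j)^2))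
    ≤ (∑ i, ‖x k i - xs i‖^2) + ‖lam k - ls‖^2 + (∑ j, (mu k j - ms j)^2) := by
  obtain ⟨hxsX, hms, hs1, hs2⟩ := hs
  obtain ⟨hbfeas, hGs, hcomp⟩ := saddle_feas (f := f) ⟨hxsX, hms, hs1, hs2⟩
  have h2ρ : (0:ℝ) < 2 * ρ := by positivity
  -- notation
  set S : EuclideanSpace ℝ (Fin m) := (∑ i, A i (x (k+1) i)) - b with hSdef
  have hν0 : ∀ j, 0 ≤ ν (k+1) j := fun j => by rw [hν k j]; exact le_max_left _ _
  have hμ0 : ∀ j, 0 ≤ mu (k+1) j := fun j => by rw [hmu k j]; exact le_max_left _ _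
  have hρS : ρ • S = lam (k+1) - lam k := by rw [hlam k]; rw [add_sub_cancel_left]
  -- shorthand reals
  set dX : ℝ := ∑ i, ‖x (k+1) i - x k i‖^2 with hdX
  set sX : ℝ := ∑ i, ‖x (k+1) i - x k i‖ with hsX
  set dL : ℝ := ‖lam (k+1) - lam k‖^2 with hdL
  set dM : ℝ := ∑ j, (mu (k+1) j - mu k j)^2 with hdM
  have hdX0 : 0 ≤ dX := Finset.sum_nonneg fun i _ => by positivity
  have hdL0 : 0 ≤ dL := by positivity
  have hdM0 : 0 ≤ dM := Finset.sum_nonneg fun j _ => by positivity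
  -- step 1 : prox inequality per block, multiplied by 2ρ
  have hprox2 : ∀ i,
      2*ρ*(f i (x (k+1) i) + (inner ℝ (γ (k+1)) (A i (x (k+1) i)) : ℝ)
          + ∑ j, ν (k+1) j * g j i (x (k+1) i))
        + ‖x (k+1) i - x k i‖^2 + ‖x (k+1) i - xs i‖^2
      ≤ 2*ρ*(f i (xs i) + (inner ℝ (γ (k+1)) (A i (xs i)) : ℝ)
          + ∑ j, ν (k+1) j * g j i (xs i)) + ‖xs i - x k i‖^2 := by
    intro i
    have hc := obj_convex (A := A) hf hg i (γ (k+1)) (ν (k+1)) hν0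
    have hout := prox_three_point (hX i).2 hc hρ0 (hxmem k i)
      (fun y hy => hxmin k i y hy) (xs i) (hxsX i)
    have e : ∀ q : ℝ, 2*ρ*(1/(2*ρ)*q) = q := fun q => by field_simp
    have h2 := mul_le_mul_of_nonneg_left hout h2ρ.le
    linarith [h2, e (‖x (k+1) i - x k i‖^2), e (‖x (k+1) i - xs i‖^2),
      e (‖xs i - x k i‖^2)]
  -- summed prox inequality
  have hsum_split : ∀ v : (∀ i, EuclideanSpace ℝ (Fin (n i))),
      (∑ i, (f i (v i) + (inner ℝ (γ (k+1)) (A i (v i)) : ℝ) + ∑ j, ν (k+1) j * g j i (v i)))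
      = (∑ i, f i (v i)) + (inner ℝ (γ (k+1)) (∑ i, A i (v i)) : ℝ)
          + ∑ j, ν (k+1) j * (∑ i, g j i (v i)) := by
    intro v
    rw [Finset.sum_add_distrib, Finset.sum_add_distrib, ← inner_sum, Finset.sum_comm]
    congr 1
    exact Finset.sum_congr rfl fun j _ => (Finset.mul_sum _ _ _).symm
  have hproxsum :
      2*ρ*((∑ i, f i (x (k+1) i)) + (inner ℝ (γ (k+1)) (∑ i, A i (x (k+1) i)) : ℝ)
          + ∑ j, ν (k+1) j * (∑ i, g j i (x (k+1) i)))
        + dX + (∑ i, ‖x (k+1) i - xs i‖^2)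
      ≤ 2*ρ*((∑ i, f i (xs i)) + (inner ℝ (γ (k+1)) b : ℝ)
          + ∑ j, ν (k+1) j * (∑ i, g j i (xs i))) + (∑ i, ‖xs i - x k i‖^2) := by
    have h := Finset.sum_le_sum (fun i (_ : i ∈ Finset.univ) => hprox2 i)
    rw [Finset.sum_add_distrib, Finset.sum_add_distrib, Finset.sum_add_distrib,
      ← Finset.mul_sum, ← Finset.mul_sum, hsum_split, hsum_split, hbfeas] at h
    exact h
  -- step 2 : saddle inequality
  have hSadr : (∑ i, f i (xs i))
      ≤ (∑ i, f i (x (k+1) i)) + (inner ℝ ls S : ℝ)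
        + ∑ j, ms j * (∑ i, g j i (x (k+1) i)) := by
    have h := hs2 (x (k+1)) (hxmem k)
    simp only [lagrangian] at h
    rw [hbfeas, sub_self, inner_zero_right] at h
    have e2 : (∑ j, ms j * (∑ i, g j i (xs i))) = 0 :=
      Finset.sum_eq_zero fun j _ => hcomp j
    rw [e2] at h
    linarith
  have hSad2 := mul_le_mul_of_nonneg_left hSadr h2ρ.le
  -- step 3 : nonpositive term
  have hGsneg : 2*ρ*(∑ j, ν (k+1) j * (∑ i, g j i (xs i))) ≤ 0 :=
    mul_nonpos_of_nonneg_of_nonpos h2ρ.le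
      (Finset.sum_nonpos fun j _ => mul_nonpos_of_nonneg_of_nonpos (hν0 j) (hGs j))
  -- step 4 : lambda identity
  have hid : 2*ρ*(inner ℝ (lam (k+1) - ls) S : ℝ)
      = ‖lam (k+1) - ls‖^2 - ‖lam k - ls‖^2 + dL := by
    have h1 := inner_three_point (lam (k+1)) (lam k) ls
    have h2 : (inner ℝ (lam (k+1) - ls) (ρ • S) : ℝ) = ρ * inner ℝ (lam (k+1) - ls) S :=
      real_inner_smul_right _ _ _
    rw [hρS] at h2
    rw [hdL]
    linarith [h1, h2]
  -- step 5 : gamma cross term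
  have hgl : γ (k+1) - lam (k+1) = ρ • (∑ i, A i (x k i - x (k+1) i)) := by
    rw [hγ k, hlam k]
    have e : (∑ i, A i (x k i - x (k+1) i))
        = (∑ i, A i (x k i)) - ∑ i, A i (x (k+1) i) := by
      rw [← Finset.sum_sub_distrib]
      exact Finset.sum_congr rfl fun i _ => map_sub _ _ _
    rw [e, smul_sub, smul_sub]
    module
  have hTnorm : ‖∑ i, A i (x k i - x (k+1) i)‖ ≤ Amax * sX := by
    calc ‖∑ i, A i (x k i - x (k+1) i)‖ ≤ ∑ i, ‖A i (x k i - x (k+1) i)‖ :=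
          norm_sum_le _ _
      _ ≤ ∑ i, Amax * ‖x (k+1) i - x k i‖ := by
          refine Finset.sum_le_sum fun i _ => ?_
          calc ‖A i (x k i - x (k+1) i)‖ ≤ ‖A i‖ * ‖x k i - x (k+1) i‖ :=
                (A i).le_opNorm _
            _ ≤ Amax * ‖x (k+1) i - x k i‖ := by
                rw [norm_sub_rev]
                exact mul_le_mul_of_nonneg_right (hAmax i) (norm_nonneg _)
      _ = Amax * sX := (Finset.mul_sum _ _ _).symm
  have hcrossraw : -((Amax * sX) * ‖lam (k+1) - lam k‖)
      ≤ (inner ℝ (γ (k+1) - lam (k+1)) S : ℝ) := by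
    have e : (inner ℝ (γ (k+1) - lam (k+1)) S : ℝ)
        = inner ℝ (∑ i, A i (x k i - x (k+1) i)) (lam (k+1) - lam k) := by
      rw [hgl, real_inner_smul_left, ← real_inner_smul_right, hρS]
    rw [e]
    have h1 := abs_real_inner_le_norm (∑ i, A i (x k i - x (k+1) i)) (lam (k+1) - lam k)
    have h2 : ‖∑ i, A i (x k i - x (k+1) i)‖ * ‖lam (k+1) - lam k‖
        ≤ (Amax * sX) * ‖lam (k+1) - lam k‖ :=
      mul_le_mul_of_nonneg_right hTnorm (norm_nonneg _)
    have h3 := neg_abs_le (inner ℝ (∑ i, A i (x k i - x (k+1) i)) (lam (k+1) - lam k) : ℝ)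
    linarith
  have hamL : sX * ‖lam (k+1) - lam k‖ ≤ (1/2) * (dX + N * dL) := by
    have := sum_mul_le_half (fun i => ‖x (k+1) i - x k i‖) ‖lam (k+1) - lam k‖
    simpa [hsX, hdX, hdL, Fintype.card_fin] using this
  have hLam2 : -(ρ * Amax * (dX + N * dL))
      ≤ 2*ρ*(inner ℝ (γ (k+1) - lam (k+1)) S : ℝ) := by
    have t1 := mul_le_mul_of_nonneg_left hcrossraw h2ρ.le
    have t2 := mul_le_mul_of_nonneg_left hamL (by positivity : (0:ℝ) ≤ 2*ρ*Amax)
    nlinarith [t1, t2]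
  -- step 6 : mu inequalities (extragradient style)
  have hGdiff : ∀ j, |(∑ i, g j i (x k i)) - (∑ i, g j i (x (k+1) i))| ≤ Lmax * sX := by
    intro j
    calc |(∑ i, g j i (x k i)) - (∑ i, g j i (x (k+1) i))|
        = |∑ i, (g j i (x k i) - g j i (x (k+1) i))| := by rw [Finset.sum_sub_distrib]
      _ ≤ ∑ i, |g j i (x k i) - g j i (x (k+1) i)| := Finset.abs_sum_le_sum_abs _ _
      _ ≤ ∑ i, Lmax * ‖x (k+1) i - x k i‖ := by
          refine Finset.sum_le_sum fun i _ => ?_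
          calc |g j i (x k i) - g j i (x (k+1) i)|
              ≤ Lc j i * ‖x k i - x (k+1) i‖ := hLip j i _ (hxk i) _ (hxmem k i)
            _ ≤ Lmax * ‖x (k+1) i - x k i‖ := by
                rw [norm_sub_rev]
                exact mul_le_mul_of_nonneg_right (hLmax j i) (norm_nonneg _)
      _ = Lmax * sX := (Finset.mul_sum _ _ _).symm
  have hstar : ∀ j,
      (mu (k+1) j - ms j)^2 - (mu k j - ms j)^2 + (ε/(ε+2)) * (mu (k+1) j - mu k j)^2
        - (1+ε/2) * (ρ^2 * (Lmax * sX)^2)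
      ≤ 2*ρ*((ν (k+1) j - ms j) * (∑ i, g j i (x (k+1) i))) := by
    intro j
    have h1 := proj_nonneg_ineq (mu k j + ρ * ∑ i, g j i (x (k+1) i)) (ms j) (hms j)
    rw [← hmu k j] at h1
    have h2 := proj_nonneg_ineq (mu k j + ρ * ∑ i, g j i (x k i)) (mu (k+1) j) (hμ0 j)
    rw [← hν k j] at h2
    have h3 : |ν (k+1) j - mu (k+1) j| ≤ ρ * (Lmax * sX) := by
      rw [hν k j, hmu k j]
      have h5 := max_sub_max_abs_le (mu k j + ρ * ∑ i, g j i (x k i))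
        (mu k j + ρ * ∑ i, g j i (x (k+1) i))
      have e : (mu k j + ρ * ∑ i, g j i (x k i))
          - (mu k j + ρ * ∑ i, g j i (x (k+1) i))
          = ρ * ((∑ i, g j i (x k i)) - (∑ i, g j i (x (k+1) i))) := by ring
      rw [e, abs_mul, abs_of_pos hρ0] at h5
      exact h5.trans (mul_le_mul_of_nonneg_left (hGdiff j) hρ0.le)
    exact mu_step ρ ε (mu k j) (ν (k+1) j) (mu (k+1) j) (ms j)
      (∑ i, g j i (x (k+1) i)) (∑ i, g j i (x k i)) (Lmax * sX) hρ0 hε0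
      (by linarith [h1]) (by linarith [h2]) h3 (hGdiff j)
  -- summed mu inequality
  have hM1 : (∑ j, (mu (k+1) j - ms j)^2) - (∑ j, (mu k j - ms j)^2)
      + (ε/(ε+2)) * dM - (M:ℝ) * ((1+ε/2) * (ρ^2 * (Lmax * sX)^2))
      ≤ 2*ρ*(∑ j, (ν (k+1) j - ms j) * (∑ i, g j i (x (k+1) i))) := by
    have h := Finset.sum_le_sum (fun j (_ : j ∈ Finset.univ) => hstar j)
    rw [← Finset.mul_sum] at h
    have e : (∑ j, ((mu (k+1) j - ms j)^2 - (mu k j - ms j)^2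
          + (ε/(ε+2)) * (mu (k+1) j - mu k j)^2 - (1+ε/2) * (ρ^2 * (Lmax * sX)^2)))
        = (∑ j, (mu (k+1) j - ms j)^2) - (∑ j, (mu k j - ms j)^2)
          + (ε/(ε+2)) * (∑ j, (mu (k+1) j - mu k j)^2)
          - (M:ℝ) * ((1+ε/2) * (ρ^2 * (Lmax * sX)^2)) := by
      rw [Finset.sum_sub_distrib, Finset.sum_add_distrib, Finset.sum_sub_distrib,
        ← Finset.mul_sum, Finset.sum_const, Finset.card_univ, Fintype.card_fin,
        nsmul_eq_mul]
    rw [e] at h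
    rw [hdM]
    exact h
  -- connecting equalities (premultiplied by 2ρ)
  have hsum1 : 2*ρ*(∑ j, ν (k+1) j * (∑ i, g j i (x (k+1) i)))
      - 2*ρ*(∑ j, ms j * (∑ i, g j i (x (k+1) i)))
      = 2*ρ*(∑ j, (ν (k+1) j - ms j) * (∑ i, g j i (x (k+1) i))) := by
    have e : (∑ j, (ν (k+1) j - ms j) * (∑ i, g j i (x (k+1) i)))
        = (∑ j, ν (k+1) j * (∑ i, g j i (x (k+1) i)))
          - (∑ j, ms j * (∑ i, g j i (x (k+1) i))) := by
      rw [← Finset.sum_sub_distrib]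
      exact Finset.sum_congr rfl fun j _ => by ring
    rw [e]; ring
  have eqA : 2*ρ*(inner ℝ (γ (k+1)) (∑ i, A i (x (k+1) i)) : ℝ)
      = 2*ρ*(inner ℝ (γ (k+1)) S : ℝ) + 2*ρ*(inner ℝ (γ (k+1)) b : ℝ) := by
    have e : (inner ℝ (γ (k+1)) S : ℝ)
        = (inner ℝ (γ (k+1)) (∑ i, A i (x (k+1) i)) : ℝ) - (inner ℝ (γ (k+1)) b : ℝ) := by
      rw [hSdef, inner_sub_right]
    rw [e]; ring
  have eqγ : 2*ρ*(inner ℝ (γ (k+1)) S : ℝ)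
      = 2*ρ*(inner ℝ (γ (k+1) - lam (k+1)) S : ℝ)
        + 2*ρ*(inner ℝ (lam (k+1) - ls) S : ℝ) + 2*ρ*(inner ℝ ls S : ℝ) := by
    have e1 : (inner ℝ (γ (k+1) - lam (k+1)) S : ℝ)
        = (inner ℝ (γ (k+1)) S : ℝ) - (inner ℝ (lam (k+1)) S : ℝ) := inner_sub_left _ _ _
    have e2 : (inner ℝ (lam (k+1) - ls) S : ℝ)
        = (inner ℝ (lam (k+1)) S : ℝ) - (inner ℝ ls S : ℝ) := inner_sub_left _ _ _
    rw [e1, e2]; ring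
  -- Cauchy–Schwarz on sX
  have hsX2 : sX^2 ≤ (N:ℝ) * dX := by
    have h := sq_sum_le_card_mul_sum_sq (s := (Finset.univ : Finset (Fin N)))
      (f := fun i => ‖x (k+1) i - x k i‖)
    simpa [hsX, hdX, Finset.card_univ, Fintype.card_fin] using h
  have hB2 : (M:ℝ) * ((1+ε/2) * (ρ^2 * (Lmax * sX)^2))
      ≤ (1+ε/2) * ((ρ*((M:ℝ)*Lmax)) * (ρ*((N:ℝ)*Lmax))) * dX := by
    have hc : (0:ℝ) ≤ (1+ε/2) * (ρ^2 * ((M:ℝ) * Lmax^2)) := by positivity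
    have := mul_le_mul_of_nonneg_left hsX2 hc
    nlinarith [this]
  -- scalar coefficient inequality
  have hcoef : ρ*Amax + (1+ε/2)*((ρ*((M:ℝ)*Lmax))*(ρ*((N:ℝ)*Lmax))) ≤ 1 - ε := by
    have hz : (0:ℝ) ≤ ρ*((M:ℝ)*Lmax) := by positivity
    have hw : ρ*((N:ℝ)*Lmax) ≤ 1 - ε := by linarith [hd3]
    have h1 : ρ*Amax + ρ*((M:ℝ)*Lmax) ≤ 1 - ε := by linarith [hd1]
    have h2 : (ρ*((M:ℝ)*Lmax))*(ρ*((N:ℝ)*Lmax)) ≤ (ρ*((M:ℝ)*Lmax))*(1-ε) :=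
      mul_le_mul_of_nonneg_left hw hz
    have h2' : (1+ε/2)*((ρ*((M:ℝ)*Lmax))*(ρ*((N:ℝ)*Lmax)))
        ≤ (1+ε/2)*((ρ*((M:ℝ)*Lmax))*(1-ε)) :=
      mul_le_mul_of_nonneg_left h2 (by linarith)
    nlinarith [h2', h1, hz, mul_nonneg hz hε0.le,
      mul_nonneg (mul_nonneg hz hε0.le) hε0.le]
  -- multiplied coefficient bounds
  have q1 : (ρ*Amax + (1+ε/2)*((ρ*((M:ℝ)*Lmax))*(ρ*((N:ℝ)*Lmax)))) * dX ≤ (1-ε) * dX :=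
    mul_le_mul_of_nonneg_right hcoef hdX0
  have q2 : (ρ*((N:ℝ)*Amax)) * dL ≤ (1-ε) * dL :=
    mul_le_mul_of_nonneg_right hd2 hdL0
  have q3 : (ε/3) * dM ≤ (ε/(ε+2)) * dM := by
    have : ε/3 ≤ ε/(ε+2) := by
      rw [div_le_div_iff₀ (by norm_num) (by linarith)]
      nlinarith [hε0, hε1]
    exact mul_le_mul_of_nonneg_right this hdM0
  -- rewrite the xs-to-xk norms
  have eqPw : (∑ i, ‖xs i - x k i‖^2) = (∑ i, ‖x k i - xs i‖^2) :=
    Finset.sum_congr rfl fun i _ => by rw [norm_sub_rev]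
  -- final assembly
  rw [eqPw] at hproxsum
  have hdXfin : dX = ∑ i, ‖x (k+1) i - x k i‖^2 := hdX
  have hdLfin : dL = ‖lam (k+1) - lam k‖^2 := hdL
  have hdMfin : dM = ∑ j, (mu (k+1) j - mu k j)^2 := hdM
  linarith [hproxsum, hSad2, hGsneg, hid, hLam2, hM1, hsum1, eqA, eqγ, hB2, q1, q2, q3,
    hdX0, hdL0, hdM0, hε0.le, mul_nonneg hε0.le hdX0, mul_nonneg hε0.le hdL0,
    mul_nonneg hε0.le hdM0]
end Descent

lemma tendsto_zero_of_sq_le {u s : ℕ → ℝ} (hu : ∀ k, 0 ≤ u k) (h : ∀ k, u k^2 ≤ s k)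
    (hs : Filter.Tendsto s Filter.atTop (nhds 0)) :
    Filter.Tendsto u Filter.atTop (nhds 0) := by
  have h1 : Filter.Tendsto (fun k => Real.sqrt (s k)) Filter.atTop (nhds 0) := by
    have := (Real.continuous_sqrt.tendsto 0).comp hs
    simpa [Function.comp_def] using this
  refine squeeze_zero hu (fun k => ?_) h1
  exact (Real.le_sqrt (hu k) (le_trans (sq_nonneg _) (h k))).mpr (h k)

lemma antitone_tendsto_zero {D : ℕ → ℝ} (hm : ∀ k, D (k+1) ≤ D k) (h0 : ∀ k, 0 ≤ D k)
    {φ : ℕ → ℕ} (hφ : StrictMono φ)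
    (hsub : Filter.Tendsto (fun l => D (φ l)) Filter.atTop (nhds 0)) :
    Filter.Tendsto D Filter.atTop (nhds 0) := by
  have hanti : Antitone D := antitone_nat_of_succ_le hm
  rw [Metric.tendsto_atTop] at hsub ⊢
  intro δ hδ
  obtain ⟨L, hL⟩ := hsub δ hδ
  refine ⟨φ L, fun k hk => ?_⟩
  have h1 := hL L le_rfl
  rw [Real.dist_eq, sub_zero, abs_of_nonneg (h0 _)] at h1 ⊢
  exact lt_of_le_of_lt (hanti hk) h1

lemma fixed_max {c q : ℝ} (h : c = max 0 (c + q)) : q ≤ 0 ∧ c * q = 0 := by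
  rcases le_or_gt (c + q) 0 with h1 | h1
  · rw [max_eq_left h1] at h
    subst h; constructor <;> simp_all
  · rw [max_eq_right h1.le] at h
    have : q = 0 := by linarith
    simp [this]
open Filter Topology
set_option maxHeartbeats 4000000

/-- Theorem 1: global convergence of the N-block PCPM algorithm to a
saddle point of the Lagrangian. -/
theorem stmt_8 {N M m : ℕ} {n : Fin N → ℕ}
    (f : ∀ i, EuclideanSpace ℝ (Fin (n i)) → ℝ)
    (A : ∀ i, EuclideanSpace ℝ (Fin (n i)) →L[ℝ] EuclideanSpace ℝ (Fin m))
    (b : EuclideanSpace ℝ (Fin m))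
    (g : Fin M → ∀ i, EuclideanSpace ℝ (Fin (n i)) → ℝ)
    (X : ∀ i, Set (EuclideanSpace ℝ (Fin (n i))))
    (hX : ∀ i, IsClosed (X i) ∧ Convex ℝ (X i))
    (hf : ∀ i, Continuous (f i) ∧ ConvexOn ℝ Set.univ (f i))
    (hg : ∀ j i, Continuous (g j i) ∧ ConvexOn ℝ Set.univ (g j i))
    (Lc : Fin M → Fin N → ℝ)
    (hLip : ∀ j i, ∀ y ∈ X i, ∀ z ∈ X i, |g j i y - g j i z| ≤ Lc j i * ‖y - z‖)
    (Amax Lmax : ℝ) (hAmax : ∀ i, ‖A i‖ ≤ Amax) (hLmax : ∀ j i, Lc j i ≤ Lmax)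
    (ε : ℝ) (hε0 : 0 < ε) (hε1 : ε < 1)
    (ρ : ℝ) (hρ0 : 0 < ρ)
    (hρ1 : ρ ≤ (1 - ε) / (Amax + M * Lmax))
    (hρ2 : ρ ≤ (1 - ε) / (N * Amax))
    (hρ3 : ρ ≤ (1 - ε) / (N * Lmax))
    (x : ℕ → ∀ i, EuclideanSpace ℝ (Fin (n i)))
    (lam : ℕ → EuclideanSpace ℝ (Fin m)) (mu : ℕ → EuclideanSpace ℝ (Fin M))
    (γ : ℕ → EuclideanSpace ℝ (Fin m)) (ν : ℕ → EuclideanSpace ℝ (Fin M))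
    (hx0 : ∀ i, x 0 i ∈ X i) (hmu0 : ∀ j, 0 ≤ mu 0 j)
    (hγ : ∀ k, γ (k + 1) = lam k + ρ • ((∑ i, A i (x k i)) - b))
    (hν : ∀ k j, ν (k + 1) j = max 0 (mu k j + ρ * ∑ i, g j i (x k i)))
    (hxmem : ∀ k i, x (k + 1) i ∈ X i)
    (hxmin : ∀ k i, ∀ y ∈ X i,
      f i (x (k + 1) i) + (inner ℝ (γ (k + 1)) (A i (x (k + 1) i)) : ℝ)
          + (∑ j, ν (k + 1) j * g j i (x (k + 1) i))
          + 1 / (2 * ρ) * ‖x (k + 1) i - x k i‖ ^ 2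
        ≤ f i y + (inner ℝ (γ (k + 1)) (A i y) : ℝ) + (∑ j, ν (k + 1) j * g j i y)
          + 1 / (2 * ρ) * ‖y - x k i‖ ^ 2)
    (hlam : ∀ k, lam (k + 1) = lam k + ρ • ((∑ i, A i (x (k + 1) i)) - b))
    (hmu : ∀ k j, mu (k + 1) j = max 0 (mu k j + ρ * ∑ i, g j i (x (k + 1) i)))
    (hexists : ∃ (xs : ∀ i, EuclideanSpace ℝ (Fin (n i)))
        (ls : EuclideanSpace ℝ (Fin m)) (ms : EuclideanSpace ℝ (Fin M)),
      IsSaddlePoint f A b g X xs ls ms) :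
    ∃ (xinf : ∀ i, EuclideanSpace ℝ (Fin (n i)))
      (linf : EuclideanSpace ℝ (Fin m)) (minf : EuclideanSpace ℝ (Fin M)),
      IsSaddlePoint f A b g X xinf linf minf ∧
      (∀ i, Filter.Tendsto (fun k => x k i) Filter.atTop (nhds (xinf i))) ∧
      Filter.Tendsto lam Filter.atTop (nhds linf) ∧
      Filter.Tendsto mu Filter.atTop (nhds minf) := by
  classical
  obtain ⟨xs, ls, ms, hsad⟩ := hexists
  have h1ε : (0:ℝ) < 1 - ε := by linarith
  have hNA : (0:ℝ) < N * Amax := by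
    by_contra h
    push_neg at h
    have h2 : (1 - ε) / ((N:ℝ) * Amax) ≤ 0 := div_nonpos_of_nonneg_of_nonpos h1ε.le h
    linarith
  have hNL : (0:ℝ) < N * Lmax := by
    by_contra h
    push_neg at h
    have h2 : (1 - ε) / ((N:ℝ) * Lmax) ≤ 0 := div_nonpos_of_nonneg_of_nonpos h1ε.le h
    linarith
  have hA0 : (0:ℝ) < Amax := by
    rcases le_or_gt Amax 0 with h | h
    · exfalso; nlinarith [hNA, Nat.cast_nonneg (α := ℝ) N]
    · exact h
  have hL0 : (0:ℝ) < Lmax := by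
    rcases le_or_gt Lmax 0 with h | h
    · exfalso; nlinarith [hNL, Nat.cast_nonneg (α := ℝ) N]
    · exact h
  have hAM : (0:ℝ) < Amax + M * Lmax := by
    nlinarith [mul_nonneg (Nat.cast_nonneg (α := ℝ) M) hL0.le]
  have hd1 : ρ * (Amax + M * Lmax) ≤ 1 - ε := (le_div_iff₀ hAM).mp hρ1
  have hd2 : ρ * ((N:ℝ) * Amax) ≤ 1 - ε := (le_div_iff₀ hNA).mp hρ2
  have hd3 : ρ * ((N:ℝ) * Lmax) ≤ 1 - ε := (le_div_iff₀ hNL).mp hρ3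
  have hxk : ∀ k i, x k i ∈ X i := by
    intro k i
    cases k with
    | zero => exact hx0 i
    | succ k => exact hxmem k i
  have hmuk : ∀ k j, 0 ≤ mu k j := by
    intro k
    induction k with
    | zero => exact hmu0
    | succ k _ => intro j; rw [hmu k j]; exact le_max_left _ _
  -- increment sequence
  obtain ⟨s, hs_def⟩ : ∃ s : ℕ → ℝ, ∀ k,
      s k = (∑ i, ‖x (k+1) i - x k i‖^2) + ‖lam (k+1) - lam k‖^2
        + (∑ j, (mu (k+1) j - mu k j)^2) := ⟨_, fun _ => rfl⟩
  have hs0 : ∀ k, 0 ≤ s k := by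
    intro k
    rw [hs_def k]
    have h1 : (0:ℝ) ≤ ∑ i, ‖x (k+1) i - x k i‖^2 :=
      Finset.sum_nonneg fun i _ => sq_nonneg _
    have h2 : (0:ℝ) ≤ ∑ j, (mu (k+1) j - mu k j)^2 :=
      Finset.sum_nonneg fun j _ => sq_nonneg _
    have h3 : (0:ℝ) ≤ ‖lam (k+1) - lam k‖^2 := sq_nonneg _
    linarith
  have descent : ∀ xs' ls' ms', IsSaddlePoint f A b g X xs' ls' ms' → ∀ k,
      ((∑ i, ‖x (k+1) i - xs' i‖^2) + ‖lam (k+1) - ls'‖^2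
          + (∑ j, (mu (k+1) j - ms' j)^2)) + (ε/3) * s k
      ≤ (∑ i, ‖x k i - xs' i‖^2) + ‖lam k - ls'‖^2 + (∑ j, (mu k j - ms' j)^2) := by
    intro xs' ls' ms' hsad' k
    rw [hs_def k]
    exact pcpm_descent hX hf hg Lc hLip Amax Lmax hAmax hLmax hA0.le hL0.le ε hε0 hε1
      ρ hρ0 hd1 hd2 hd3 x lam mu γ ν hγ hν hxmem hxmin hlam hmu xs' ls' ms' hsad' k
      (fun i => hxk k i) (fun j => hmuk k j)
  obtain ⟨D, hD_def⟩ : ∃ D : ℕ → ℝ, ∀ k,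
      D k = (∑ i, ‖x k i - xs i‖^2) + ‖lam k - ls‖^2 + (∑ j, (mu k j - ms j)^2) :=
    ⟨_, fun _ => rfl⟩
  have hD0 : ∀ k, 0 ≤ D k := by
    intro k
    rw [hD_def k]
    have h1 : (0:ℝ) ≤ ∑ i, ‖x k i - xs i‖^2 := Finset.sum_nonneg fun i _ => sq_nonneg _
    have h2 : (0:ℝ) ≤ ∑ j, (mu k j - ms j)^2 := Finset.sum_nonneg fun j _ => sq_nonneg _
    have h3 : (0:ℝ) ≤ ‖lam k - ls‖^2 := sq_nonneg _
    linarith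
  have hdesc : ∀ k, D (k+1) + (ε/3) * s k ≤ D k := by
    intro k
    rw [hD_def (k+1), hD_def k]
    exact descent xs ls ms hsad k
  have hε3 : (0:ℝ) < ε/3 := by linarith
  have hmono : ∀ k, D (k+1) ≤ D k := by
    intro k
    have := mul_nonneg hε3.le (hs0 k)
    linarith [hdesc k]
  have hanti : Antitone D := antitone_nat_of_succ_le hmono
  have hDle : ∀ k, D k ≤ D 0 := fun k => hanti (Nat.zero_le k)
  have hsum_le : ∀ K, ∑ k ∈ Finset.range K, s k ≤ (3/ε) * D 0 := by
    intro K
    have key : (ε/3) * (∑ k ∈ Finset.range K, s k) ≤ D 0 - D K := by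
      induction K with
      | zero => simp
      | succ K ih =>
        rw [Finset.sum_range_succ, mul_add]
        linarith [hdesc K]
    have h2 : (ε/3) * (∑ k ∈ Finset.range K, s k) ≤ D 0 := by linarith [hD0 K]
    have h4 : (∑ k ∈ Finset.range K, s k)
        = (3/ε) * ((ε/3) * (∑ k ∈ Finset.range K, s k)) := by
      field_simp
    rw [h4]
    exact mul_le_mul_of_nonneg_left h2 (by positivity)
  have hsummable : Summable s := summable_of_sum_range_le hs0 hsum_le
  have hs_to0 : Tendsto s atTop (𝓝 0) := hsummable.tendsto_atTop_zero
  have hbound_sx : ∀ k i, ‖x (k+1) i - x k i‖^2 ≤ s k := by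
    intro k i
    rw [hs_def k]
    have h1 : ‖x (k+1) i - x k i‖^2 ≤ ∑ i', ‖x (k+1) i' - x k i'‖^2 :=
      Finset.single_le_sum (f := fun i' => ‖x (k+1) i' - x k i'‖^2)
        (fun i' _ => sq_nonneg _) (Finset.mem_univ i)
    have h2 : (0:ℝ) ≤ ∑ j, (mu (k+1) j - mu k j)^2 :=
      Finset.sum_nonneg fun j _ => sq_nonneg _
    have h3 : (0:ℝ) ≤ ‖lam (k+1) - lam k‖^2 := sq_nonneg _
    linarith
  have hdx : ∀ i, Tendsto (fun k => ‖x (k+1) i - x k i‖) atTop (𝓝 0) := fun i =>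
    tendsto_zero_of_sq_le (fun k => norm_nonneg _) (fun k => hbound_sx k i) hs_to0
  have hdlam : Tendsto (fun k => ‖lam (k+1) - lam k‖) atTop (𝓝 0) := by
    refine tendsto_zero_of_sq_le (fun k => norm_nonneg _) (fun k => ?_) hs_to0
    rw [hs_def k]
    have h1 : (0:ℝ) ≤ ∑ i, ‖x (k+1) i - x k i‖^2 := Finset.sum_nonneg fun i _ => sq_nonneg _
    have h2 : (0:ℝ) ≤ ∑ j, (mu (k+1) j - mu k j)^2 := Finset.sum_nonneg fun j _ => sq_nonneg _
    linarith
  have hdmu : ∀ j, Tendsto (fun k => |mu (k+1) j - mu k j|) atTop (𝓝 0) := by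
    intro j
    refine tendsto_zero_of_sq_le (fun k => abs_nonneg _) (fun k => ?_) hs_to0
    rw [sq_abs, hs_def k]
    have h1 : (mu (k+1) j - mu k j)^2 ≤ ∑ j', (mu (k+1) j' - mu k j')^2 :=
      Finset.single_le_sum (f := fun j' => (mu (k+1) j' - mu k j')^2)
        (fun j' _ => sq_nonneg _) (Finset.mem_univ j)
    have h2 : (0:ℝ) ≤ ∑ i, ‖x (k+1) i - x k i‖^2 := Finset.sum_nonneg fun i _ => sq_nonneg _
    have h3 : (0:ℝ) ≤ ‖lam (k+1) - lam k‖^2 := sq_nonneg _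
    linarith
  -- bounded sequence, convergent subsequence
  obtain ⟨z, hz_def⟩ : ∃ z : ℕ → ((∀ i, EuclideanSpace ℝ (Fin (n i)))
      × (EuclideanSpace ℝ (Fin m)) × (EuclideanSpace ℝ (Fin M))),
      ∀ k, z k = (x k, lam k, mu k) := ⟨_, fun _ => rfl⟩
  have hsqrtD0 : (0:ℝ) ≤ Real.sqrt (D 0) := Real.sqrt_nonneg _
  have hball : ∀ k, z k ∈ Metric.closedBall ((xs, ls, ms) :
      (∀ i, EuclideanSpace ℝ (Fin (n i))) × (EuclideanSpace ℝ (Fin m))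
        × (EuclideanSpace ℝ (Fin M))) (Real.sqrt (D 0)) := by
    intro k
    rw [Metric.mem_closedBall, hz_def k, Prod.dist_eq]
    have h4 := hDle k
    rw [hD_def k] at h4
    have hx' : dist (x k) xs ≤ Real.sqrt (D 0) := by
      rw [dist_pi_le_iff hsqrtD0]
      intro i
      rw [dist_eq_norm]
      refine (Real.le_sqrt (norm_nonneg _) (hD0 0)).mpr ?_
      have h1 : ‖x k i - xs i‖^2 ≤ ∑ i', ‖x k i' - xs i'‖^2 :=
        Finset.single_le_sum (f := fun i' => ‖x k i' - xs i'‖^2)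
          (fun i' _ => sq_nonneg _) (Finset.mem_univ i)
      have h2 : (0:ℝ) ≤ ∑ j, (mu k j - ms j)^2 := Finset.sum_nonneg fun j _ => sq_nonneg _
      have h3 : (0:ℝ) ≤ ‖lam k - ls‖^2 := sq_nonneg _
      linarith
    have hl' : dist (lam k) ls ≤ Real.sqrt (D 0) := by
      rw [dist_eq_norm]
      refine (Real.le_sqrt (norm_nonneg _) (hD0 0)).mpr ?_
      have h1 : (0:ℝ) ≤ ∑ i', ‖x k i' - xs i'‖^2 := Finset.sum_nonneg fun i _ => sq_nonneg _
      have h2 : (0:ℝ) ≤ ∑ j, (mu k j - ms j)^2 := Finset.sum_nonneg fun j _ => sq_nonneg _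
      linarith
    have hm' : dist (mu k) ms ≤ Real.sqrt (D 0) := by
      rw [EuclideanSpace.dist_eq]
      refine Real.sqrt_le_sqrt ?_
      have he : (∑ j, dist (mu k j) (ms j)^2) = ∑ j, (mu k j - ms j)^2 :=
        Finset.sum_congr rfl fun j _ => by rw [Real.dist_eq, sq_abs]
      rw [he]
      have h1 : (0:ℝ) ≤ ∑ i', ‖x k i' - xs i'‖^2 := Finset.sum_nonneg fun i _ => sq_nonneg _
      have h3 : (0:ℝ) ≤ ‖lam k - ls‖^2 := sq_nonneg _
      linarith
    have : dist ((x k, lam k, mu k) : (∀ i, EuclideanSpace ℝ (Fin (n i)))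
        × (EuclideanSpace ℝ (Fin m)) × (EuclideanSpace ℝ (Fin M))).2 (ls, ms)
        ≤ Real.sqrt (D 0) := by
      rw [Prod.dist_eq]
      exact max_le hl' hm'
    exact max_le hx' this
  obtain ⟨a, _ha, φ, hφ, hconv⟩ :=
    tendsto_subseq_of_bounded Metric.isBounded_closedBall hball
  obtain ⟨xinf, linf, minf⟩ := a
  have hxcf : Tendsto (fun l => x (φ l)) atTop (𝓝 xinf) := by
    have := (continuous_fst.tendsto ((xinf, linf, minf) :
      (∀ i, EuclideanSpace ℝ (Fin (n i))) × (EuclideanSpace ℝ (Fin m))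
        × (EuclideanSpace ℝ (Fin M)))).comp hconv
    simpa [hz_def, Function.comp_def] using this
  have hlmcf : Tendsto (fun l => (lam (φ l), mu (φ l))) atTop (𝓝 (linf, minf)) := by
    have := (continuous_snd.tendsto ((xinf, linf, minf) :
      (∀ i, EuclideanSpace ℝ (Fin (n i))) × (EuclideanSpace ℝ (Fin m))
        × (EuclideanSpace ℝ (Fin M)))).comp hconv
    simpa [hz_def, Function.comp_def] using this
  have hlc : Tendsto (fun l => lam (φ l)) atTop (𝓝 linf) := by
    have := (continuous_fst.tendsto ((linf, minf) :
      (EuclideanSpace ℝ (Fin m)) × (EuclideanSpace ℝ (Fin M)))).comp hlmcf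
    simpa [Function.comp_def] using this
  have hmc : Tendsto (fun l => mu (φ l)) atTop (𝓝 minf) := by
    have := (continuous_snd.tendsto ((linf, minf) :
      (EuclideanSpace ℝ (Fin m)) × (EuclideanSpace ℝ (Fin M)))).comp hlmcf
    simpa [Function.comp_def] using this
  have hxc : ∀ i, Tendsto (fun l => x (φ l) i) atTop (𝓝 (xinf i)) := fun i =>
    ((continuous_apply i).tendsto _).comp hxcf
  have hmcj : ∀ j, Tendsto (fun l => mu (φ l) j) atTop (𝓝 (minf j)) := fun j =>
    ((EuclideanSpace.proj (𝕜 := ℝ) j : EuclideanSpace ℝ (Fin M) →L[ℝ] ℝ).continuous.tendsto _).comp hmc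
  have hφatTop : Tendsto φ atTop atTop := hφ.tendsto_atTop
  have hxc1 : ∀ i, Tendsto (fun l => x (φ l + 1) i) atTop (𝓝 (xinf i)) := by
    intro i
    have hd : Tendsto (fun l => x (φ l + 1) i - x (φ l) i) atTop (𝓝 0) :=
      tendsto_zero_iff_norm_tendsto_zero.mpr ((hdx i).comp hφatTop)
    have := hd.add (hxc i)
    simpa using this
  have hmcj1 : ∀ j, Tendsto (fun l => mu (φ l + 1) j) atTop (𝓝 (minf j)) := by
    intro j
    have hd : Tendsto (fun l => mu (φ l + 1) j - mu (φ l) j) atTop (𝓝 0) := by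
      refine squeeze_zero_norm (fun l => ?_) ((hdmu j).comp hφatTop)
      exact le_of_eq (by simp [Real.norm_eq_abs, Function.comp_apply])
    have := hd.add (hmcj j)
    simpa using this
  have hSlim : Tendsto (fun l => (∑ i, A i (x (φ l + 1) i)) - b) atTop
      (𝓝 ((∑ i, A i (xinf i)) - b)) :=
    (tendsto_finset_sum _ (fun i _ => ((A i).continuous.tendsto _).comp (hxc1 i))).sub
      tendsto_const_nhds
  have hbinf : (∑ i, A i (xinf i)) = b := by
    have h1 : Tendsto (fun l => lam (φ l + 1) - lam (φ l)) atTop (𝓝 0) :=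
      tendsto_zero_iff_norm_tendsto_zero.mpr (hdlam.comp hφatTop)
    have h2 : (fun l => lam (φ l + 1) - lam (φ l))
        = fun l => ρ • ((∑ i, A i (x (φ l + 1) i)) - b) := by
      funext l
      rw [hlam (φ l), add_sub_cancel_left]
    rw [h2] at h1
    have h3 := hSlim.const_smul ρ
    have h4 := tendsto_nhds_unique h3 h1
    have h5 := (smul_eq_zero.mp h4).resolve_left (ne_of_gt hρ0)
    exact sub_eq_zero.mp h5
  have hGlim : ∀ j, Tendsto (fun l => ∑ i, g j i (x (φ l + 1) i)) atTop
      (𝓝 (∑ i, g j i (xinf i))) := fun j =>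
    tendsto_finset_sum _ (fun i _ => ((hg j i).1.tendsto _).comp (hxc1 i))
  have hGlim0 : ∀ j, Tendsto (fun l => ∑ i, g j i (x (φ l) i)) atTop
      (𝓝 (∑ i, g j i (xinf i))) := fun j =>
    tendsto_finset_sum _ (fun i _ => ((hg j i).1.tendsto _).comp (hxc i))
  have hfix : ∀ j, minf j = max 0 (minf j + ρ * ∑ i, g j i (xinf i)) := by
    intro j
    have h1 := hmcj1 j
    have h2 : Tendsto (fun l => max 0 (mu (φ l) j + ρ * ∑ i, g j i (x (φ l + 1) i))) atTop
        (𝓝 (max 0 (minf j + ρ * ∑ i, g j i (xinf i)))) :=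
      tendsto_const_nhds.max ((hmcj j).add ((hGlim j).const_mul ρ))
    have h3 : (fun l => mu (φ l + 1) j)
        = fun l => max 0 (mu (φ l) j + ρ * ∑ i, g j i (x (φ l + 1) i)) := by
      funext l; exact hmu (φ l) j
    rw [h3] at h1
    exact tendsto_nhds_unique h1 h2
  have hminf0 : ∀ j, 0 ≤ minf j := fun j => by rw [hfix j]; exact le_max_left _ _
  have hGinf : ∀ j, (∑ i, g j i (xinf i)) ≤ 0 := by
    intro j
    obtain ⟨hq, _⟩ := fixed_max (hfix j)
    nlinarith [hq, hρ0]
  have hcompinf : ∀ j, minf j * (∑ i, g j i (xinf i)) = 0 := by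
    intro j
    obtain ⟨_, hcq⟩ := fixed_max (hfix j)
    have h5 : ρ * (minf j * (∑ i, g j i (xinf i))) = 0 := by linear_combination hcq
    exact (mul_eq_zero.mp h5).resolve_left (ne_of_gt hρ0)
  have hγc : Tendsto (fun l => γ (φ l + 1)) atTop (𝓝 linf) := by
    have h2 : (fun l => γ (φ l + 1))
        = fun l => lam (φ l) + ρ • ((∑ i, A i (x (φ l) i)) - b) := by
      funext l; exact hγ (φ l)
    rw [h2]
    have h3 : Tendsto (fun l => ρ • ((∑ i, A i (x (φ l) i)) - b)) atTop
        (𝓝 (ρ • ((∑ i, A i (xinf i)) - b))) :=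
      ((tendsto_finset_sum _ (fun i _ => ((A i).continuous.tendsto _).comp (hxc i))).sub
        tendsto_const_nhds).const_smul ρ
    rw [hbinf] at h3
    simp only [sub_self, smul_zero] at h3
    have := hlc.add h3
    simpa using this
  have hνc : ∀ j, Tendsto (fun l => ν (φ l + 1) j) atTop (𝓝 (minf j)) := by
    intro j
    have h2 : (fun l => ν (φ l + 1) j)
        = fun l => max 0 (mu (φ l) j + ρ * ∑ i, g j i (x (φ l) i)) := by
      funext l; exact hν (φ l) j
    rw [h2]
    have h3 : Tendsto (fun l => max 0 (mu (φ l) j + ρ * ∑ i, g j i (x (φ l) i))) atTop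
        (𝓝 (max 0 (minf j + ρ * ∑ i, g j i (xinf i)))) :=
      tendsto_const_nhds.max ((hmcj j).add ((hGlim0 j).const_mul ρ))
    rw [← hfix j] at h3
    exact h3
  have hxinfX : ∀ i, xinf i ∈ X i := fun i =>
    (hX i).1.mem_of_tendsto (hxc1 i) (Eventually.of_forall fun l => hxmem (φ l) i)
  have hmin_lim : ∀ i, ∀ y ∈ X i,
      (f i (xinf i) + (inner ℝ linf (A i (xinf i)) : ℝ) + ∑ j, minf j * g j i (xinf i))
      ≤ (f i y + (inner ℝ linf (A i y) : ℝ) + ∑ j, minf j * g j i y)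
        + 1/(2*ρ) * ‖y - xinf i‖^2 := by
    intro i y hy
    have hnorm0 : Tendsto (fun l => ‖x (φ l + 1) i - x (φ l) i‖^2) atTop (𝓝 0) := by
      have := ((hdx i).comp hφatTop).pow 2
      simpa using this
    have hL : Tendsto (fun l => f i (x (φ l + 1) i)
        + (inner ℝ (γ (φ l + 1)) (A i (x (φ l + 1) i)) : ℝ)
        + (∑ j, ν (φ l + 1) j * g j i (x (φ l + 1) i))
        + 1/(2*ρ) * ‖x (φ l + 1) i - x (φ l) i‖^2) atTop
        (𝓝 (f i (xinf i) + (inner ℝ linf (A i (xinf i)) : ℝ)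
          + (∑ j, minf j * g j i (xinf i)) + 1/(2*ρ) * 0)) := by
      refine Tendsto.add (Tendsto.add (Tendsto.add ?_ ?_) ?_) ?_
      · exact ((hf i).1.tendsto _).comp (hxc1 i)
      · exact hγc.inner (((A i).continuous.tendsto _).comp (hxc1 i))
      · exact tendsto_finset_sum _ fun j _ =>
          (hνc j).mul (((hg j i).1.tendsto _).comp (hxc1 i))
      · exact hnorm0.const_mul _
    have hR : Tendsto (fun l => f i y + (inner ℝ (γ (φ l + 1)) (A i y) : ℝ)
        + (∑ j, ν (φ l + 1) j * g j i y) + 1/(2*ρ) * ‖y - x (φ l) i‖^2) atTop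
        (𝓝 (f i y + (inner ℝ linf (A i y) : ℝ) + (∑ j, minf j * g j i y)
          + 1/(2*ρ) * ‖y - xinf i‖^2)) := by
      refine Tendsto.add (Tendsto.add (Tendsto.add tendsto_const_nhds ?_) ?_) ?_
      · exact hγc.inner tendsto_const_nhds
      · exact tendsto_finset_sum _ fun j _ => (hνc j).mul tendsto_const_nhds
      · exact (((tendsto_const_nhds.sub (hxc i)).norm).pow 2).const_mul _
    have hle := le_of_tendsto_of_tendsto' hL hR (fun l => hxmin (φ l) i y hy)
    rw [mul_zero] at hle
    linarith
  have hxmin_inf : ∀ i, ∀ y ∈ X i,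
      (f i (xinf i) + (inner ℝ linf (A i (xinf i)) : ℝ) + ∑ j, minf j * g j i (xinf i))
      ≤ (f i y + (inner ℝ linf (A i y) : ℝ) + ∑ j, minf j * g j i y) := by
    intro i
    have hconvF := obj_convex (A := A) hf hg i linf minf hminf0
    have hc : (0:ℝ) ≤ 1/(2*ρ) := by positivity
    exact fun y hy => min_of_quad_min (hX i).2 hconvF hc (hxinfX i)
      (fun y' hy' => hmin_lim i y' hy') y hy
  have hlag_split : ∀ (v : ∀ i, EuclideanSpace ℝ (Fin (n i))),
      lagrangian f A b g v linf minf
      = (∑ i, (f i (v i) + (inner ℝ linf (A i (v i)) : ℝ) + ∑ j, minf j * g j i (v i)))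
        - (inner ℝ linf b : ℝ) := by
    intro v
    have e2 : (∑ i, (f i (v i) + (inner ℝ linf (A i (v i)) : ℝ) + ∑ j, minf j * g j i (v i)))
        = (∑ i, f i (v i)) + (inner ℝ linf (∑ i, A i (v i)) : ℝ)
          + ∑ j, minf j * (∑ i, g j i (v i)) := by
      rw [Finset.sum_add_distrib, Finset.sum_add_distrib, ← inner_sum, Finset.sum_comm]
      congr 1
      exact Finset.sum_congr rfl fun j _ => (Finset.mul_sum _ _ _).symm
    rw [e2]
    simp only [lagrangian]
    rw [inner_sub_right]
    ring
  have hsadinf : IsSaddlePoint f A b g X xinf linf minf := by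
    refine ⟨hxinfX, hminf0, ?_, ?_⟩
    · intro lam' mu' hmu'
      simp only [lagrangian]
      rw [hbinf, sub_self]
      simp only [inner_zero_right]
      have h1 : (∑ j, mu' j * (∑ i, g j i (xinf i))) ≤ 0 :=
        Finset.sum_nonpos fun j _ => mul_nonpos_of_nonneg_of_nonpos (hmu' j) (hGinf j)
      have h2 : (∑ j, minf j * (∑ i, g j i (xinf i))) = 0 :=
        Finset.sum_eq_zero fun j _ => hcompinf j
      rw [h2]
      linarith
    · intro xx hxx
      rw [hlag_split xinf, hlag_split xx]
      have := Finset.sum_le_sum (fun i (_ : i ∈ Finset.univ) => hxmin_inf i (xx i) (hxx i))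
      linarith
  -- Fejér monotonicity with respect to the limit saddle point
  obtain ⟨D', hD'_def⟩ : ∃ D' : ℕ → ℝ, ∀ k,
      D' k = (∑ i, ‖x k i - xinf i‖^2) + ‖lam k - linf‖^2 + (∑ j, (mu k j - minf j)^2) :=
    ⟨_, fun _ => rfl⟩
  have hdesc' : ∀ k, D' (k+1) + (ε/3) * s k ≤ D' k := by
    intro k
    rw [hD'_def (k+1), hD'_def k]
    exact descent xinf linf minf hsadinf k
  have hmono' : ∀ k, D' (k+1) ≤ D' k := by
    intro k
    have := mul_nonneg hε3.le (hs0 k)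
    linarith [hdesc' k]
  have hD'0 : ∀ k, 0 ≤ D' k := by
    intro k
    rw [hD'_def k]
    have h1 : (0:ℝ) ≤ ∑ i, ‖x k i - xinf i‖^2 := Finset.sum_nonneg fun i _ => sq_nonneg _
    have h2 : (0:ℝ) ≤ ∑ j, (mu k j - minf j)^2 := Finset.sum_nonneg fun j _ => sq_nonneg _
    have h3 : (0:ℝ) ≤ ‖lam k - linf‖^2 := sq_nonneg _
    linarith
  have hsub0 : Tendsto (fun l => D' (φ l)) atTop (𝓝 0) := by
    have h1 : Tendsto (fun l => ∑ i, ‖x (φ l) i - xinf i‖^2) atTop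
        (𝓝 (∑ _i : Fin N, (0:ℝ))) :=
      tendsto_finset_sum _ fun i _ => by
        have h0 : Tendsto (fun l => x (φ l) i - xinf i) atTop (𝓝 (xinf i - xinf i)) :=
          (hxc i).sub tendsto_const_nhds
        rw [sub_self] at h0
        have := (h0.norm).pow 2
        simpa using this
    have h2 : Tendsto (fun l => ‖lam (φ l) - linf‖^2) atTop (𝓝 0) := by
      have h0 : Tendsto (fun l => lam (φ l) - linf) atTop (𝓝 (linf - linf)) :=
        hlc.sub tendsto_const_nhds
      rw [sub_self] at h0
      have := (h0.norm).pow 2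
      simpa using this
    have h3 : Tendsto (fun l => ∑ j, (mu (φ l) j - minf j)^2) atTop
        (𝓝 (∑ _j : Fin M, (0:ℝ))) :=
      tendsto_finset_sum _ fun j _ => by
        have h0 : Tendsto (fun l => mu (φ l) j - minf j) atTop (𝓝 (minf j - minf j)) :=
          (hmcj j).sub tendsto_const_nhds
        rw [sub_self] at h0
        have := h0.pow 2
        simpa using this
    have h4 := (h1.add h2).add h3
    have h5 : (fun l => (∑ i, ‖x (φ l) i - xinf i‖^2) + ‖lam (φ l) - linf‖^2
        + (∑ j, (mu (φ l) j - minf j)^2)) = fun l => D' (φ l) := by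
      funext l; rw [hD'_def (φ l)]
    rw [h5] at h4
    simpa using h4
  have hD'to0 : Tendsto D' atTop (𝓝 0) := antitone_tendsto_zero hmono' hD'0 hφ hsub0
  refine ⟨xinf, linf, minf, hsadinf, ?_, ?_, ?_⟩
  · intro i
    rw [tendsto_iff_dist_tendsto_zero]
    refine tendsto_zero_of_sq_le (fun k => dist_nonneg) (fun k => ?_) hD'to0
    rw [dist_eq_norm, hD'_def k]
    have h1 : ‖x k i - xinf i‖^2 ≤ ∑ i', ‖x k i' - xinf i'‖^2 :=
      Finset.single_le_sum (f := fun i' => ‖x k i' - xinf i'‖^2)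
        (fun i' _ => sq_nonneg _) (Finset.mem_univ i)
    have h2 : (0:ℝ) ≤ ∑ j, (mu k j - minf j)^2 := Finset.sum_nonneg fun j _ => sq_nonneg _
    have h3 : (0:ℝ) ≤ ‖lam k - linf‖^2 := sq_nonneg _
    linarith
  · rw [tendsto_iff_dist_tendsto_zero]
    refine tendsto_zero_of_sq_le (fun k => dist_nonneg) (fun k => ?_) hD'to0
    rw [dist_eq_norm, hD'_def k]
    have h1 : (0:ℝ) ≤ ∑ i', ‖x k i' - xinf i'‖^2 := Finset.sum_nonneg fun i _ => sq_nonneg _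
    have h2 : (0:ℝ) ≤ ∑ j, (mu k j - minf j)^2 := Finset.sum_nonneg fun j _ => sq_nonneg _
    linarith
  · rw [tendsto_iff_dist_tendsto_zero]
    refine tendsto_zero_of_sq_le (fun k => dist_nonneg) (fun k => ?_) hD'to0
    have he : dist (mu k) minf ^ 2 = ∑ j, (mu k j - minf j)^2 := by
      rw [EuclideanSpace.dist_eq, Real.sq_sqrt (Finset.sum_nonneg fun j _ => sq_nonneg _)]
      exact Finset.sum_congr rfl fun j _ => by rw [Real.dist_eq, sq_abs]
    rw [he, hD'_def k]
    have h1 : (0:ℝ) ≤ ∑ i', ‖x k i' - xinf i'‖^2 := Finset.sum_nonneg fun i _ => sq_nonneg _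
    have h3 : (0:ℝ) ≤ ‖lam k - linf‖^2 := sq_nonneg _
    linarith
end

section
/- Assume each f_i and each g_{ji} is convex and differentiable on ℝ^{n_i}. Let γ ∈ ℝ^m, ν ∈ ℝ^M_{≥0}, λ' ∈ ℝ^m, μ' ∈ ℝ^M_{≥0}, ρ > 0, and x_i^k ∈ X_i for each i. Suppose for each i the point x_i⁺ minimizes x_i ↦ f_i(x_i) + γᵀ A_i x_i + Σ_{j=1}^M ν_j g_{ji}(x_i) + (1/(2ρ))‖x_i − x_i^k‖₂² over X_i, and define u_i = A_iᵀ(λ' − γ) + Σ_{j=1}^M (μ'_j − ν_j)·∇g_{ji}(x_i⁺) − (1/ρ)(x_i⁺ − x_i^k). Then (x_1⁺,…,x_N⁺) minimizes the function x ↦ L(x, λ', μ') − Σ_{i=1}^N x_iᵀ u_i over ∏_{i=1}^N X_i. -/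
open scoped BigOperators

open Set

section helpers
variable {E : Type*} [NormedAddCommGroup E] [InnerProductSpace ℝ E] [CompleteSpace E]

lemma aux_dirDeriv_nonneg {q : ℝ → ℝ} {d : ℝ} (hq : HasDerivAt q d 0)
    (h : ∀ t ∈ Set.Ioc (0:ℝ) 1, q 0 ≤ q t) : 0 ≤ d := by
  have h1 : Filter.Tendsto (slope q 0) (nhdsWithin 0 (Set.Ioi 0)) (nhds d) :=
    (hasDerivWithinAt_iff_tendsto_slope' (notMem_Ioi_self)).1
      (hq.hasDerivWithinAt (s := Set.Ioi 0))
  refine ge_of_tendsto h1 ?_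
  filter_upwards [Ioc_mem_nhdsGT_of_mem ⟨le_refl (0:ℝ), zero_lt_one⟩] with t ht
  have : 0 ≤ (q t - q 0) / (t - 0) := div_nonneg (sub_nonneg.2 (h t ht)) (by linarith [ht.1])
  simpa [slope_def_field] using this

omit [CompleteSpace E] in
lemma aux_hasDerivAt_line (x v : E) (t : ℝ) :
    HasDerivAt (fun s : ℝ => x + s • v) v t := by
  have h := ((hasDerivAt_id t).smul_const v).const_add x
  simpa using h

lemma aux_hasDerivAt_comp_line (f : E → ℝ) (hfd : Differentiable ℝ f) (x v : E) :
    HasDerivAt (fun t : ℝ => f (x + t • v)) (inner ℝ (gradient f x) v : ℝ) 0 := by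
  have hg : HasFDerivAt f (InnerProductSpace.toDual ℝ E (gradient f x)) x :=
    hasGradientAt_iff_hasFDerivAt.1 (hfd x).hasGradientAt
  have hc := aux_hasDerivAt_line x v 0
  rw [show x = x + (0:ℝ) • v by simp] at hg
  have := hg.comp_hasDerivAt (x := (0:ℝ)) hc
  simp [InnerProductSpace.toDual_apply_apply] at this ⊢
  exact this

lemma aux_grad_ineq (f : E → ℝ) (hf : ConvexOn ℝ Set.univ f) (hfd : Differentiable ℝ f)
    (x y : E) : (inner ℝ (gradient f x) (y - x) : ℝ) ≤ f y - f x := by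
  set q : ℝ → ℝ := fun t => f (x + t • (y - x)) with hqdef
  have hq : HasDerivAt q (inner ℝ (gradient f x) (y - x) : ℝ) 0 :=
    aux_hasDerivAt_comp_line f hfd x (y - x)
  have hqc : ConvexOn ℝ Set.univ q := by
    have := hf.comp_affineMap (AffineMap.lineMap x y : ℝ →ᵃ[ℝ] E)
    have heq : (f ∘ (AffineMap.lineMap x y : ℝ →ᵃ[ℝ] E)) = q := by
      funext t
      simp only [Function.comp_apply, AffineMap.lineMap_apply_module, hqdef]
      congr 1
      simp [smul_sub, sub_smul]
      abel
    rw [heq] at this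
    simpa using this
  have hle := hqc.le_slope_of_hasDerivWithinAt_Ioi (mem_univ (0:ℝ)) (mem_univ (1:ℝ))
    zero_lt_one hq.hasDerivWithinAt
  have hs : slope q 0 1 = f y - f x := by
    simp [slope_def_field, hqdef]
  linarith [hle, hs.le, hs.ge]

variable {F : Type*} [NormedAddCommGroup F] [InnerProductSpace ℝ F] [CompleteSpace F]

lemma aux_key {M : ℕ}
    (X : Set E) (hXc : Convex ℝ X)
    (f : E → ℝ) (hf : ConvexOn ℝ Set.univ f) (hfd : Differentiable ℝ f)
    (g : Fin M → E → ℝ) (hg : ∀ j, ConvexOn ℝ Set.univ (g j)) (hgd : ∀ j, Differentiable ℝ (g j))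
    (A : E →L[ℝ] F) (γ lam' : F) (ν mu' : Fin M → ℝ) (hmu' : ∀ j, 0 ≤ mu' j)
    (ρ : ℝ) (hρ : 0 < ρ) (xk xp : E) (hxp : xp ∈ X)
    (hmin : ∀ y ∈ X, f xp + (inner ℝ γ (A xp) : ℝ) + (∑ j, ν j * g j xp) + 1/(2*ρ) * ‖xp - xk‖^2
        ≤ f y + (inner ℝ γ (A y) : ℝ) + (∑ j, ν j * g j y) + 1/(2*ρ) * ‖y - xk‖^2)
    (u : E) (hu : u = ContinuousLinearMap.adjoint A (lam' - γ)
        + (∑ j, (mu' j - ν j) • gradient (g j) xp) - (1/ρ) • (xp - xk))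
    (y : E) (hy : y ∈ X) :
    f xp + (inner ℝ lam' (A xp) : ℝ) + (∑ j, mu' j * g j xp) - (inner ℝ xp u : ℝ)
      ≤ f y + (inner ℝ lam' (A y) : ℝ) + (∑ j, mu' j * g j y) - (inner ℝ y u : ℝ) := by
  set v : E := y - xp with hv
  set w : E := xp - xk with hw
  -- derivative pieces
  have h1 : HasDerivAt (fun t : ℝ => f (xp + t • v)) (inner ℝ (gradient f xp) v : ℝ) 0 :=
    aux_hasDerivAt_comp_line f hfd xp v
  have h2 : HasDerivAt (fun t : ℝ => (inner ℝ γ (A (xp + t • v)) : ℝ)) (inner ℝ γ (A v) : ℝ) 0 := by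
    have hL : HasFDerivAt (fun z : E => (inner ℝ γ (A z) : ℝ)) ((innerSL ℝ γ).comp A)
        (xp + (0:ℝ) • v) := ((innerSL ℝ γ).comp A).hasFDerivAt
    have := hL.comp_hasDerivAt (x := (0:ℝ)) (aux_hasDerivAt_line xp v 0)
    simp only [ContinuousLinearMap.coe_comp', Function.comp_apply, innerSL_apply_apply] at this
    exact this
  have h3 : HasDerivAt (fun t : ℝ => ∑ j, ν j * g j (xp + t • v))
      (∑ j, ν j * (inner ℝ (gradient (g j) xp) v : ℝ)) 0 := by
    apply HasDerivAt.fun_sum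
    intro j _
    exact (aux_hasDerivAt_comp_line (g j) (hgd j) xp v).const_mul (ν j)
  have h4 : HasDerivAt (fun t : ℝ => 1/(2*ρ) * ‖(xp + t • v) - xk‖^2)
      (1/(2*ρ) * (2 * (inner ℝ w v : ℝ))) 0 := by
    have heq : ∀ t : ℝ, ‖(xp + t • v) - xk‖^2
        = ‖w‖^2 + (2 * (inner ℝ w v : ℝ)) * t + ‖v‖^2 * t^2 := by
      intro t
      have h5 : (xp + t • v) - xk = w + t • v := by rw [hw]; abel
      rw [h5, @norm_add_sq_real, real_inner_smul_right, norm_smul]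
      simp [mul_pow, sq_abs]
      ring
    have hp : HasDerivAt (fun t : ℝ => ‖w‖^2 + (2 * (inner ℝ w v : ℝ)) * t + ‖v‖^2 * t^2)
        (2 * (inner ℝ w v : ℝ)) 0 := by
      have ha : HasDerivAt (fun t : ℝ => ‖w‖^2 + (2 * (inner ℝ w v : ℝ)) * t)
          (2 * (inner ℝ w v : ℝ)) 0 := by
        simpa using ((hasDerivAt_id (0:ℝ)).const_mul (2 * (inner ℝ w v : ℝ))).const_add (‖w‖^2)
      have hb : HasDerivAt (fun t : ℝ => ‖v‖^2 * t^2) (0:ℝ) 0 := by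
        simpa using (hasDerivAt_pow 2 (0:ℝ)).const_mul (‖v‖^2)
      have := ha.add hb
      simp at this
      exact this
    have hres := hp.const_mul (1/(2*ρ))
    have hfun : (fun t : ℝ => 1/(2*ρ) * ‖(xp + t • v) - xk‖^2)
        = (fun t : ℝ => 1/(2*ρ) * (‖w‖^2 + (2 * (inner ℝ w v : ℝ)) * t + ‖v‖^2 * t^2)) := by
      funext t
      rw [heq t]
    rw [hfun]
    exact hres
  have hqD := ((h1.add h2).add h3).add h4
  have hD : 0 ≤ (inner ℝ (gradient f xp) v : ℝ) + (inner ℝ γ (A v) : ℝ)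
      + (∑ j, ν j * (inner ℝ (gradient (g j) xp) v : ℝ)) + 1/(2*ρ) * (2 * (inner ℝ w v : ℝ)) := by
    apply aux_dirDeriv_nonneg hqD
    intro t ht
    have hz : xp + t • v ∈ X := by
      have := hXc.add_smul_sub_mem hxp hy ⟨ht.1.le, ht.2⟩
      simpa [hv] using this
    have := hmin _ hz
    simpa using this
  -- gradient inequalities
  have hfineq : (inner ℝ (gradient f xp) v : ℝ) ≤ f y - f xp := aux_grad_ineq f hf hfd xp y
  have hgsum : (∑ j, mu' j * (inner ℝ (gradient (g j) xp) v : ℝ))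
      ≤ ∑ j, mu' j * (g j y - g j xp) := by
    apply Finset.sum_le_sum
    intro j _
    exact mul_le_mul_of_nonneg_left (aux_grad_ineq (g j) (hg j) (hgd j) xp y) (hmu' j)
  -- inner ℝ product algebra
  have e1 : (inner ℝ lam' (A y) : ℝ) - (inner ℝ lam' (A xp) : ℝ) = (inner ℝ lam' (A v) : ℝ) := by
    rw [← inner_sub_right, ← map_sub]
  have e2 : (inner ℝ y u : ℝ) - (inner ℝ xp u : ℝ) = (inner ℝ v u : ℝ) := by
    rw [← inner_sub_left]
  have e3 : (inner ℝ v u : ℝ) = ((inner ℝ lam' (A v) : ℝ) - (inner ℝ γ (A v) : ℝ))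
      + ((∑ j, mu' j * (inner ℝ (gradient (g j) xp) v : ℝ))
        - (∑ j, ν j * (inner ℝ (gradient (g j) xp) v : ℝ)))
      - (1/ρ) * (inner ℝ w v : ℝ) := by
    rw [hu, inner_sub_right, inner_add_right, ContinuousLinearMap.adjoint_inner_right,
      inner_sum]
    have e4 : (inner ℝ (A v) (lam' - γ) : ℝ) = (inner ℝ lam' (A v) : ℝ) - (inner ℝ γ (A v) : ℝ) := by
      rw [inner_sub_right, real_inner_comm (A v) lam', real_inner_comm (A v) γ]
    have e5 : ∀ j, (inner ℝ v ((mu' j - ν j) • gradient (g j) xp) : ℝ)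
        = mu' j * (inner ℝ (gradient (g j) xp) v : ℝ) - ν j * (inner ℝ (gradient (g j) xp) v : ℝ) := by
      intro j
      rw [real_inner_smul_right, real_inner_comm]
      ring
    rw [e4, Finset.sum_congr rfl (fun j _ => e5 j), Finset.sum_sub_distrib,
      real_inner_smul_right, real_inner_comm v w]
  have e6 : 1/(2*ρ) * (2 * (inner ℝ w v : ℝ)) = (1/ρ) * (inner ℝ w v : ℝ) := by
    field_simp
  have e7 : (∑ j, mu' j * (g j y - g j xp))
      = (∑ j, mu' j * g j y) - (∑ j, mu' j * g j xp) := by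
    rw [← Finset.sum_sub_distrib]
    exact Finset.sum_congr rfl (fun j _ => by ring)
  have e8 : (inner ℝ y u : ℝ) = (inner ℝ xp u : ℝ) + (inner ℝ v u : ℝ) := by linarith [e2]
  linarith [hD, hfineq, hgsum, e1, e3, e6, e7, e8]

end helpers

lemma aux_lag_decomp {N M m : ℕ} {n : Fin N → ℕ}
    (f : ∀ i, EuclideanSpace ℝ (Fin (n i)) → ℝ)
    (A : ∀ i, EuclideanSpace ℝ (Fin (n i)) →L[ℝ] EuclideanSpace ℝ (Fin m))
    (b : EuclideanSpace ℝ (Fin m))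
    (g : Fin M → ∀ i, EuclideanSpace ℝ (Fin (n i)) → ℝ)
    (x : ∀ i, EuclideanSpace ℝ (Fin (n i)))
    (lam : EuclideanSpace ℝ (Fin m)) (mu : EuclideanSpace ℝ (Fin M)) :
    lagrangian f A b g x lam mu
      = (∑ i, (f i (x i) + (inner ℝ lam (A i (x i)) : ℝ) + ∑ j, mu j * g j i (x i)))
        - (inner ℝ lam b : ℝ) := by
  unfold lagrangian
  rw [inner_sub_right, inner_sum, Finset.sum_add_distrib, Finset.sum_add_distrib]
  have hc : ∑ j, mu j * ∑ i, g j i (x i) = ∑ i, ∑ j, mu j * g j i (x i) := by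
    simp_rw [Finset.mul_sum]
    exact Finset.sum_comm
  rw [hc]
  ring

/-- the primal PCPM update is a minimizer of the perturbed Lagrangian
`x ↦ L(x, λ', μ') − Σᵢ xᵢᵀuᵢ` over `∏ᵢ Xᵢ`, where
`uᵢ = Aᵢᵀ(λ' − γ) + Σⱼ (μ'ⱼ − νⱼ)∇g_{ji}(xᵢ⁺) − (1/ρ)(xᵢ⁺ − xᵢᵏ)`. -/
theorem stmt_10 {N M m : ℕ} {n : Fin N → ℕ}
    (f : ∀ i, EuclideanSpace ℝ (Fin (n i)) → ℝ)
    (A : ∀ i, EuclideanSpace ℝ (Fin (n i)) →L[ℝ] EuclideanSpace ℝ (Fin m))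
    (b : EuclideanSpace ℝ (Fin m))
    (g : Fin M → ∀ i, EuclideanSpace ℝ (Fin (n i)) → ℝ)
    (X : ∀ i, Set (EuclideanSpace ℝ (Fin (n i))))
    (hX : ∀ i, IsClosed (X i) ∧ Convex ℝ (X i))
    (hf : ∀ i, ConvexOn ℝ Set.univ (f i) ∧ Differentiable ℝ (f i))
    (hg : ∀ j i, ConvexOn ℝ Set.univ (g j i) ∧ Differentiable ℝ (g j i))
    (γ : EuclideanSpace ℝ (Fin m)) (ν : EuclideanSpace ℝ (Fin M)) (hν : ∀ j, 0 ≤ ν j)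
    (lam' : EuclideanSpace ℝ (Fin m)) (mu' : EuclideanSpace ℝ (Fin M))
    (hmu' : ∀ j, 0 ≤ mu' j)
    (ρ : ℝ) (hρ : 0 < ρ)
    (xk : ∀ i, EuclideanSpace ℝ (Fin (n i))) (hxk : ∀ i, xk i ∈ X i)
    (xp : ∀ i, EuclideanSpace ℝ (Fin (n i))) (hxp : ∀ i, xp i ∈ X i)
    (hmin : ∀ i, ∀ y ∈ X i,
      f i (xp i) + (inner ℝ γ (A i (xp i)) : ℝ) + (∑ j, ν j * g j i (xp i))
          + 1 / (2 * ρ) * ‖xp i - xk i‖ ^ 2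
        ≤ f i y + (inner ℝ γ (A i y) : ℝ) + (∑ j, ν j * g j i y)
          + 1 / (2 * ρ) * ‖y - xk i‖ ^ 2)
    (u : ∀ i, EuclideanSpace ℝ (Fin (n i)))
    (hu : ∀ i, u i = ContinuousLinearMap.adjoint (A i) (lam' - γ)
        + (∑ j, (mu' j - ν j) • gradient (g j i) (xp i)) - (1 / ρ) • (xp i - xk i)) :
    ∀ x : ∀ i, EuclideanSpace ℝ (Fin (n i)), (∀ i, x i ∈ X i) →
      lagrangian f A b g xp lam' mu' - ∑ i, (inner ℝ (xp i) (u i) : ℝ)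
        ≤ lagrangian f A b g x lam' mu' - ∑ i, (inner ℝ (x i) (u i) : ℝ) := by
  intro x hx
  have hkey : ∀ i, f i (xp i) + (inner ℝ lam' (A i (xp i)) : ℝ)
      + (∑ j, mu' j * g j i (xp i)) - (inner ℝ (xp i) (u i) : ℝ)
      ≤ f i (x i) + (inner ℝ lam' (A i (x i)) : ℝ)
      + (∑ j, mu' j * g j i (x i)) - (inner ℝ (x i) (u i) : ℝ) := by
    intro i
    exact aux_key (X i) (hX i).2 (f i) (hf i).1 (hf i).2
      (fun j => g j i) (fun j => (hg j i).1) (fun j => (hg j i).2)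
      (A i) γ lam' (fun j => ν j) (fun j => mu' j) hmu' ρ hρ (xk i) (xp i) (hxp i)
      (hmin i) (u i) (hu i) (x i) (hx i)
  have hsum := Finset.sum_le_sum (fun i (_ : i ∈ Finset.univ) => hkey i)
  rw [Finset.sum_sub_distrib, Finset.sum_sub_distrib] at hsum
  rw [aux_lag_decomp, aux_lag_decomp]
  linarith
end

section
/- Let X ⊆ ℝⁿ be closed and convex, f : ℝⁿ → ℝ continuous and strongly convex on X with modulus σ > 0, A ∈ ℝ^{m×n}, p ∈ ℝ^m, x̄ ∈ X, and ρ > 0. Suppose x⁺ minimizes x ↦ f(x) + pᵀA x + (1/(2ρ))‖x − x̄‖₂² over X. Then for every x' ∈ X and every λ ∈ ℝ^m: f(x⁺) − f(x') + λᵀ(A x⁺ − A x') + (σ/2 + 1/(2ρ))‖x⁺ − x'‖₂² + (1/(2ρ))‖x⁺ − x̄‖₂² − (1/(2ρ))‖x̄ − x'‖₂² + (p − λ)ᵀ(A x⁺ − A x') ≤ 0. -/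
/-- If `g` is `μ`-strongly convex on `s` and `xp` minimizes `g` over `s`, then
`g xp + μ/2 * ‖xp - x'‖² ≤ g x'` for all `x' ∈ s`. -/
lemma strong_min_ineq {E : Type*} [NormedAddCommGroup E] [NormedSpace ℝ E]
    {s : Set E} {g : E → ℝ} {μ : ℝ}
    (hg : StrongConvexOn s μ g) {xp : E} (hxp : xp ∈ s)
    (hmin : ∀ y ∈ s, g xp ≤ g y) {x' : E} (hx' : x' ∈ s) :
    g xp + μ / 2 * ‖xp - x'‖ ^ 2 ≤ g x' := by
  set c : ℝ := μ / 2 * ‖xp - x'‖ ^ 2 with hc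
  have key : ∀ t ∈ Set.Ioo (0 : ℝ) 1, g xp + (1 - t) * c ≤ g x' := by
    intro t ht
    have ha : (0:ℝ) ≤ 1 - t := by linarith [ht.2]
    have hb : (0:ℝ) ≤ t := le_of_lt ht.1
    have hab : (1 - t) + t = 1 := by ring
    have h1 := hg.2 hxp hx' ha hb hab
    have h2 : g xp ≤ g ((1 - t) • xp + t • x') :=
      hmin _ (hg.1 hxp hx' ha hb hab)
    simp only [smul_eq_mul] at h1
    rw [← hc] at h1
    have h3 : t * (g xp + (1 - t) * c) ≤ t * g x' := by nlinarith [h1, h2]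
    exact (mul_le_mul_iff_right₀ ht.1).mp h3
  have hlim : Filter.Tendsto (fun t : ℝ => g xp + (1 - t) * c)
      (nhdsWithin 0 (Set.Ioo (0:ℝ) 1)) (nhds (g xp + (1 - 0) * c)) := by
    apply Filter.Tendsto.mono_left _ nhdsWithin_le_nhds
    exact (Continuous.tendsto (by continuity) 0)
  have h0 : (0:ℝ) ∈ closure (Set.Ioo (0:ℝ) 1) := by
    rw [closure_Ioo one_ne_zero.symm]; exact ⟨le_refl 0, by norm_num⟩
  have hne : (nhdsWithin (0:ℝ) (Set.Ioo (0:ℝ) 1)).NeBot :=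
    mem_closure_iff_nhdsWithin_neBot.mp h0
  have := le_of_tendsto hlim (eventually_nhdsWithin_of_forall key)
  simpa using this

/-- key estimate for one block of the asynchronous scheme.
`f` is continuous and strongly convex on `X` with modulus `σ > 0`
(i.e. `x ↦ f x − (σ/2)‖x‖²` is convex on `X`), and `x⁺` minimizes
`x ↦ f x + pᵀAx + (1/(2ρ))‖x − x̄‖²` over `X`. -/
theorem stmt_12 {n m : ℕ} (X : Set (EuclideanSpace ℝ (Fin n)))
    (hXclosed : IsClosed X) (hXconvex : Convex ℝ X)
    (f : EuclideanSpace ℝ (Fin n) → ℝ) (σ : ℝ) (hσ : 0 < σ)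
    (hfcont : ContinuousOn f X)
    (hfstrong : ConvexOn ℝ X (fun x => f x - σ / 2 * ‖x‖ ^ 2))
    (A : EuclideanSpace ℝ (Fin n) →L[ℝ] EuclideanSpace ℝ (Fin m))
    (p : EuclideanSpace ℝ (Fin m))
    (xbar : EuclideanSpace ℝ (Fin n)) (hxbar : xbar ∈ X)
    (ρ : ℝ) (hρ : 0 < ρ)
    (xp : EuclideanSpace ℝ (Fin n)) (hxp : xp ∈ X)
    (hmin : ∀ y ∈ X,
      f xp + (inner ℝ p (A xp) : ℝ) + 1 / (2 * ρ) * ‖xp - xbar‖ ^ 2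
        ≤ f y + (inner ℝ p (A y) : ℝ) + 1 / (2 * ρ) * ‖y - xbar‖ ^ 2) :
    ∀ x' ∈ X, ∀ lam : EuclideanSpace ℝ (Fin m),
      f xp - f x' + (inner ℝ lam (A xp - A x') : ℝ)
          + (σ / 2 + 1 / (2 * ρ)) * ‖xp - x'‖ ^ 2
          + 1 / (2 * ρ) * ‖xp - xbar‖ ^ 2 - 1 / (2 * ρ) * ‖xbar - x'‖ ^ 2
          + (inner ℝ (p - lam) (A xp - A x') : ℝ) ≤ 0 := by
  intro x' hx' lam
  set g : EuclideanSpace ℝ (Fin n) → ℝ :=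
    fun x => f x + (inner ℝ p (A x) : ℝ) + 1 / (2 * ρ) * ‖x - xbar‖ ^ 2 with hg
  set μ : ℝ := σ + 1 / ρ with hμ
  -- g is μ-strongly convex on X
  have haff : ConvexOn ℝ X (fun x : EuclideanSpace ℝ (Fin n) =>
      (inner ℝ p (A x) : ℝ) - (1 / ρ) * (inner ℝ xbar x : ℝ) + 1 / (2 * ρ) * ‖xbar‖ ^ 2) := by
    refine ⟨hXconvex, fun x hx y hy a b ha hb hab => ?_⟩
    simp only [map_add, map_smul, inner_add_right, inner_smul_right, smul_eq_mul]
    have hb' : b = 1 - a := by linarith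
    subst hb'
    apply le_of_eq
    ring
  have hconv : ConvexOn ℝ X (fun x => g x - μ / 2 * ‖x‖ ^ 2) := by
    have := hfstrong.add haff
    convert this using 1
    · rfl
    funext x
    have hexp : ‖x - xbar‖ ^ 2 = ‖x‖ ^ 2 - 2 * (inner ℝ xbar x : ℝ) + ‖xbar‖ ^ 2 := by
      rw [norm_sub_sq_real, real_inner_comm x xbar]
    simp only [hg, hμ, Pi.add_apply, hexp]
    have hρ0 : ρ ≠ 0 := ne_of_gt hρ
    field_simp
    ring
  have hstrong : StrongConvexOn X μ g := strongConvexOn_iff_convex.mpr hconv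
  have hkey : g xp + μ / 2 * ‖xp - x'‖ ^ 2 ≤ g x' :=
    strong_min_ineq hstrong hxp hmin hx'
  -- unfold and conclude
  have hinner : (inner ℝ lam (A xp - A x') : ℝ) + (inner ℝ (p - lam) (A xp - A x') : ℝ)
      = (inner ℝ p (A xp) : ℝ) - (inner ℝ p (A x') : ℝ) := by
    rw [← inner_add_left]
    simp [inner_sub_right]
  have hnormrev : ‖xbar - x'‖ = ‖x' - xbar‖ := norm_sub_rev _ _
  simp only [hg, hμ] at hkey
  have hρ' : (0:ℝ) < 2 * ρ := by linarith
  have hμ2 : (σ + 1 / ρ) / 2 = σ / 2 + 1 / (2 * ρ) := by field_simp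
  rw [hμ2] at hkey
  rw [hnormrev]
  linarith [hinner, hkey]
end
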